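/- arXiv:0710.1774 — 8 statements merged into one kernel-verified Lean document; each statement's English description precedes it below -/
import Mathlib

section
/- For the nonlinearity f(t,x) = 2π·cos(2πt)·cosh²(x), there exist no ν ∈ ℝ and no continuously differentiable 1-periodic u : ℝ → ℝ such that u'(t) + 2π·cos(2πt)·cosh²(u(t)) = ν for all t. (Hence the tameness hypothesis in Theorem 1.2 cannot be discarded.) -/
/-- A function is 1-periodic if `u (t+1) = u t` for all `t`. -/
def Periodic1 (u : ℝ → ℝ) : Prop := ∀ t, u (t + 1) = u t

lemma tanh_hasDerivAt (x : ℝ) : HasDerivAt Real.tanh (1 / Real.cosh x ^ 2) x := by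
  have hne : Real.cosh x ≠ 0 := (Real.cosh_pos x).ne'
  have h := (Real.hasDerivAt_sinh x).div (Real.hasDerivAt_cosh x) hne
  have hfun : Real.tanh = fun y => Real.sinh y / Real.cosh y := by
    funext y; exact Real.tanh_eq_sinh_div_cosh y
  rw [hfun]
  refine h.congr_deriv ?_
  have := Real.cosh_sq_sub_sinh_sq x
  congr 1
  nlinarith

lemma tanh_lt_one (x : ℝ) : Real.tanh x < 1 := by
  rw [Real.tanh_eq_sinh_div_cosh]
  exact (div_lt_one (Real.cosh_pos x)).mpr (Real.sinh_lt_cosh x)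

lemma neg_one_lt_tanh (x : ℝ) : -1 < Real.tanh x := by
  have := tanh_lt_one (-x)
  rw [Real.tanh_neg] at this
  linarith

/-- For the (non-tame) nonlinearity `f(t,x) = 2π cos(2πt) cosh²(x)` there is no
`ν ∈ ℝ` and no `C¹` 1-periodic `u` with `u'(t) + f(t,u(t)) = ν` for all `t`:
the tameness hypothesis in Theorem 1.2 cannot be discarded. -/
theorem stmt2 :
    ¬ ∃ (ν : ℝ) (u : ℝ → ℝ), ContDiff ℝ 1 u ∧ Periodic1 u ∧
      ∀ t, deriv u t + 2 * Real.pi * Real.cos (2 * Real.pi * t) *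
        (Real.cosh (u t))^2 = ν := by
  rintro ⟨ν, u, hu, hper, heq⟩
  have hud : Differentiable ℝ u := hu.differentiable one_ne_zero
  have huc : Continuous u := hud.continuous
  set g : ℝ → ℝ := fun t => Real.tanh (u t) + Real.sin (2 * Real.pi * t) with hgdef
  have hg : ∀ t, HasDerivAt g (ν / Real.cosh (u t) ^ 2) t := by
    intro t
    have h1 : HasDerivAt (fun s => Real.tanh (u s))
        (1 / Real.cosh (u t) ^ 2 * deriv u t) t :=
      (tanh_hasDerivAt (u t)).comp t (hud t).hasDerivAt
    have h2 : HasDerivAt (fun s => Real.sin (2 * Real.pi * s))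
        (Real.cos (2 * Real.pi * t) * (2 * Real.pi)) t := by
      have := (Real.hasDerivAt_sin (2 * Real.pi * t)).comp t
        ((hasDerivAt_id t).const_mul (2 * Real.pi))
      simpa [Function.comp_def, mul_comm] using this
    have h3 := h1.add h2
    refine h3.congr_deriv ?_
    have hne : Real.cosh (u t) ≠ 0 := (Real.cosh_pos (u t)).ne'
    have h4 := heq t
    field_simp
    nlinarith [h4]
  -- the integrand is continuous
  have hcont : Continuous fun t => ν / Real.cosh (u t) ^ 2 :=
    continuous_const.div ((Real.continuous_cosh.comp huc).pow 2)
      (fun t => pow_ne_zero 2 (Real.cosh_pos (u t)).ne')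
  have hint : IntervalIntegrable (fun t => ν / Real.cosh (u t) ^ 2)
      MeasureTheory.volume 0 1 := hcont.intervalIntegrable 0 1
  have hftc : ∫ t in (0:ℝ)..1, ν / Real.cosh (u t) ^ 2 = g 1 - g 0 :=
    intervalIntegral.integral_eq_sub_of_hasDerivAt
      (fun t _ => hg t) hint
  have hg10 : g 1 = g 0 := by
    have hu10 : u 1 = u 0 := by simpa using hper 0
    simp [hgdef, hu10, Real.sin_two_pi]
  rw [hg10, sub_self] at hftc
  -- deduce ν = 0
  have hν : ν = 0 := by
    by_contra hν0
    have hrw : (∫ t in (0:ℝ)..1, ν / Real.cosh (u t) ^ 2)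
        = ν * ∫ t in (0:ℝ)..1, 1 / Real.cosh (u t) ^ 2 := by
      rw [← intervalIntegral.integral_const_mul]
      congr 1; funext t; field_simp
    have hposint : 0 < ∫ t in (0:ℝ)..1, 1 / Real.cosh (u t) ^ 2 := by
      apply intervalIntegral.intervalIntegral_pos_of_pos
      · exact (continuous_const.div ((Real.continuous_cosh.comp huc).pow 2)
          (fun t => pow_ne_zero 2 (Real.cosh_pos (u t)).ne')).intervalIntegrable 0 1
      · intro x
        positivity
      · norm_num
    rw [hrw] at hftc
    exact hν0 (by
      rcases mul_eq_zero.mp hftc with h | h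
      · exact h
      · exact absurd h hposint.ne')
  -- now g has zero derivative, hence is constant
  have hg0 : ∀ t, deriv g t = 0 := by
    intro t
    rw [(hg t).deriv, hν, zero_div]
  have hgdiff : Differentiable ℝ g := fun t => (hg t).differentiableAt
  have hconst : ∀ t, g t = g 0 := fun t => is_const_of_deriv_eq_zero hgdiff hg0 t 0
  have hgz : g 0 = Real.tanh (u 0) := by simp [hgdef]
  have h14 : g (1/4) = Real.tanh (u (1/4)) + 1 := by
    have : 2 * Real.pi * (1/4 : ℝ) = Real.pi / 2 := by ring
    simp only [hgdef]
    rw [this, Real.sin_pi_div_two]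
  have hm14 : g (-(1/4)) = Real.tanh (u (-(1/4))) - 1 := by
    have : 2 * Real.pi * (-(1/4) : ℝ) = -(Real.pi / 2) := by ring
    rw [hgdef]
    simp only [this, Real.sin_neg, Real.sin_pi_div_two]
    ring
  have h1 := hconst (1/4)
  have h2 := hconst (-(1/4))
  rw [h14, hgz] at h1
  rw [hm14, hgz] at h2
  have hb1 := neg_one_lt_tanh (u (1/4))
  have hb2 := tanh_lt_one (u (-(1/4)))
  linarith
end

section
/- Let f : ℝ × ℝ → ℝ be a tame nonlinearity and let ṽ : ℝ → ℝ be continuous, 1-periodic, with ∫₀¹ ṽ = 0. For each a ∈ ℝ let u_a be the unique continuously differentiable 1-periodic function with ∫₀¹ u_a = a for which there exists ν_a ∈ ℝ with u_a'(t) + f(t,u_a(t)) = ṽ(t) + ν_a for all t. Then: (i) min_{t∈[0,1]} u_a(t) → +∞ as a → +∞; (ii) max_{t∈[0,1]} u_a(t) → −∞ as a → −∞; (iii) for every t₀ ∈ ℝ, the map a ↦ u_a(t₀) is a strictly increasing bijection from ℝ onto ℝ. -/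
open MeasureTheory Filter

/-- A nonlinearity is a smooth function `f : ℝ × ℝ → ℝ` which is 1-periodic
in the first variable. -/
def Nonlinearity (f : ℝ → ℝ → ℝ) : Prop :=
  ContDiff ℝ (⊤ : ℕ∞) (Function.uncurry f) ∧ ∀ t x, f (t + 1) x = f t x

/-- `f` is wild on the interval `I`. -/
def WildOn (f : ℝ → ℝ → ℝ) (I : Set ℝ) : Prop :=
  MeasureTheory.IntegrableOn
    (fun s => 1 / max 1 (sSup ((fun t => f t s) '' Set.Icc (0:ℝ) 1))) I ∧
  MeasureTheory.IntegrableOn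
    (fun s => 1 / max 1 (sSup ((fun t => - f t s) '' Set.Icc (0:ℝ) 1))) I

/-- `f` is tame if it is wild at neither `+∞` nor `−∞`. -/
def Tame (f : ℝ → ℝ → ℝ) : Prop :=
  ¬ WildOn f (Set.Ici 0) ∧ ¬ WildOn f (Set.Iic 0)

namespace Stmt3Aux
open Set intervalIntegral Function

lemma per_fract {u : ℝ → ℝ} (hp : Function.Periodic u 1) (t : ℝ) :
    u (Int.fract t) = u t := by
  have := hp.sub_int_mul_eq (x := t) ⌊t⌋
  simpa [Int.self_sub_floor] using this

lemma per_int_shift {u : ℝ → ℝ} (hp : Function.Periodic u 1) (t : ℝ) (n : ℤ) :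
    u (t + n) = u t := by
  have := hp.sub_int_mul_eq (x := t) (-n)
  simpa using this

lemma fract_mem_Icc (t : ℝ) : Int.fract t ∈ Icc (0:ℝ) 1 :=
  ⟨Int.fract_nonneg t, (Int.fract_lt_one t).le⟩

lemma exists_glob_min {u : ℝ → ℝ} (hc : Continuous u) (hp : Function.Periodic u 1) :
    ∃ τ ∈ Icc (0:ℝ) 1, u τ = sInf (u '' Icc (0:ℝ) 1) ∧ ∀ t, u τ ≤ u t := by
  have hK : IsCompact (u '' Icc (0:ℝ) 1) := isCompact_Icc.image hc
  have hne : (u '' Icc (0:ℝ) 1).Nonempty := ⟨u 0, ⟨0, by simp, rfl⟩⟩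
  obtain ⟨τ, hτ, hval⟩ := hK.sInf_mem hne
  refine ⟨τ, hτ, hval, fun t => ?_⟩
  rw [hval, ← per_fract hp t]
  exact csInf_le hK.bddBelow ⟨_, fract_mem_Icc t, rfl⟩

lemma exists_glob_max {u : ℝ → ℝ} (hc : Continuous u) (hp : Function.Periodic u 1) :
    ∃ τ ∈ Icc (0:ℝ) 1, u τ = sSup (u '' Icc (0:ℝ) 1) ∧ ∀ t, u t ≤ u τ := by
  have hK : IsCompact (u '' Icc (0:ℝ) 1) := isCompact_Icc.image hc
  have hne : (u '' Icc (0:ℝ) 1).Nonempty := ⟨u 0, ⟨0, by simp, rfl⟩⟩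
  obtain ⟨τ, hτ, hval⟩ := hK.sSup_mem hne
  refine ⟨τ, hτ, hval, fun t => ?_⟩
  rw [hval, ← per_fract hp t]
  exact le_csSup hK.bddAbove ⟨_, fract_mem_Icc t, rfl⟩

/-- mean is between min and max -/
lemma sInf_le_mean {u : ℝ → ℝ} (hc : Continuous u) (hp : Function.Periodic u 1) {a : ℝ}
    (hmean : (∫ t in (0:ℝ)..1, u t) = a) : sInf (u '' Icc (0:ℝ) 1) ≤ a := by
  obtain ⟨τ, hτ, hval, hmin⟩ := exists_glob_min hc hp
  have h1 : (∫ t in (0:ℝ)..1, u τ) ≤ ∫ t in (0:ℝ)..1, u t := by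
    apply integral_mono_on (by norm_num) (intervalIntegrable_const) (hc.intervalIntegrable 0 1)
    exact fun x _ => hmin x
  rw [hmean] at h1
  simpa [hval] using h1

lemma mean_le_sSup {u : ℝ → ℝ} (hc : Continuous u) (hp : Function.Periodic u 1) {a : ℝ}
    (hmean : (∫ t in (0:ℝ)..1, u t) = a) : a ≤ sSup (u '' Icc (0:ℝ) 1) := by
  obtain ⟨τ, hτ, hval, hmax⟩ := exists_glob_max hc hp
  have h1 : (∫ t in (0:ℝ)..1, u t) ≤ ∫ t in (0:ℝ)..1, u τ := by
    apply integral_mono_on (by norm_num) (hc.intervalIntegrable 0 1) (intervalIntegrable_const)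
    exact fun x _ => hmax x
  rw [hmean] at h1
  simpa [hval] using h1

/-- A Lipschitz constant for `f` in the second variable on `[0,1] × [A,B]`. -/
lemma lipschitz_aux {f : ℝ → ℝ → ℝ} (hf : ContDiff ℝ (⊤ : ℕ∞) (Function.uncurry f))
    (A B : ℝ) :
    ∃ L : ℝ, 0 ≤ L ∧ ∀ t ∈ Icc (0:ℝ) 1, ∀ x ∈ Icc A B, ∀ y ∈ Icc A B,
      |f t x - f t y| ≤ L * |x - y| := by
  set s : Set (ℝ × ℝ) := Icc (0:ℝ) 1 ×ˢ Icc A B with hs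
  have hconv : Convex ℝ s := (convex_Icc _ _).prod (convex_Icc _ _)
  have hcomp : IsCompact s := isCompact_Icc.prod isCompact_Icc
  have hder : Continuous fun p => ‖fderiv ℝ (Function.uncurry f) p‖ :=
    (hf.continuous_fderiv (by norm_num)).norm
  obtain ⟨L, hL⟩ : ∃ L : ℝ, ∀ p ∈ s, ‖fderiv ℝ (Function.uncurry f) p‖ ≤ L := by
    rcases s.eq_empty_or_nonempty with h | h
    · exact ⟨0, by simp [h]⟩
    · obtain ⟨p, hp, hmax⟩ := hcomp.exists_isMaxOn h hder.continuousOn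
      exact ⟨_, fun q hq => hmax hq⟩
  have hL0 : 0 ≤ L ∨ s = ∅ := by
    rcases s.eq_empty_or_nonempty with h | h
    · exact Or.inr h
    · obtain ⟨p, hp⟩ := h
      exact Or.inl ((norm_nonneg _).trans (hL p hp))
  rcases hL0 with hL0 | hemp
  · refine ⟨L, hL0, fun t ht x hx y hy => ?_⟩
    have key := Convex.norm_image_sub_le_of_norm_fderiv_le
      (f := Function.uncurry f) (𝕜 := ℝ) (s := s) (C := L)
      (fun p _ => hf.differentiable (by norm_num) p) hL hconv
      (x := (t, y)) (y := (t, x)) ⟨ht, hy⟩ ⟨ht, hx⟩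
    have hnorm : ‖((t,x) : ℝ × ℝ) - (t,y)‖ = |x - y| := by
      simp [Prod.norm_def, Real.norm_eq_abs, abs_nonneg]
    calc |f t x - f t y| = ‖Function.uncurry f (t,x) - Function.uncurry f (t,y)‖ := by
          simp [Function.uncurry, Real.norm_eq_abs]
      _ ≤ L * ‖((t,x) : ℝ × ℝ) - (t,y)‖ := key
      _ = L * |x - y| := by rw [hnorm]
  · refine ⟨0, le_rfl, fun t ht x hx y hy => ?_⟩
    exfalso
    have : ((t, x) : ℝ × ℝ) ∈ s := ⟨ht, hx⟩
    simp [hemp] at this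

/-- Bound for `|f|` on `[0,1] × [A,B]`. -/
lemma bound_aux {f : ℝ → ℝ → ℝ} (hfc : Continuous (Function.uncurry f)) (A B : ℝ) :
    ∃ S : ℝ, 0 ≤ S ∧ ∀ t ∈ Icc (0:ℝ) 1, ∀ x ∈ Icc A B, |f t x| ≤ S := by
  set s : Set (ℝ × ℝ) := Icc (0:ℝ) 1 ×ˢ Icc A B with hs
  have hcomp : IsCompact s := isCompact_Icc.prod isCompact_Icc
  rcases s.eq_empty_or_nonempty with h | h
  · refine ⟨0, le_rfl, fun t ht x hx => ?_⟩
    exfalso; have : ((t,x) : ℝ × ℝ) ∈ s := ⟨ht, hx⟩; simp [h] at this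
  · obtain ⟨p, hp, hmax⟩ := hcomp.exists_isMaxOn h hfc.norm.continuousOn
    refine ⟨‖Function.uncurry f p‖, norm_nonneg _, fun t ht x hx => ?_⟩
    have := hmax (⟨ht, hx⟩ : ((t,x) : ℝ × ℝ) ∈ s)
    simpa [Function.uncurry, Real.norm_eq_abs] using this

/-- A uniform bound on a continuous periodic function. -/
lemma periodic_bound {v : ℝ → ℝ} (hc : Continuous v) (hp : Function.Periodic v 1) :
    ∃ V : ℝ, 0 ≤ V ∧ ∀ t, |v t| ≤ V := by
  have habs : Function.Periodic (fun t => |v t|) 1 := fun t => by simp [hp t]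
  obtain ⟨τ, hτ, hval, hmax⟩ := exists_glob_max (hc.abs) habs
  exact ⟨|v τ|, abs_nonneg _, fun t => hmax t⟩

lemma image_nonempty (g : ℝ → ℝ) : (g '' Icc (0:ℝ) 1).Nonempty := ⟨g 0, 0, by simp, rfl⟩

lemma le_sSup_aux {g : ℝ → ℝ} (hg : Continuous g) {t : ℝ} (ht : t ∈ Icc (0:ℝ) 1) :
    g t ≤ sSup (g '' Icc (0:ℝ) 1) :=
  le_csSup (isCompact_Icc.image hg).bddAbove ⟨t, ht, rfl⟩

/-- `|sSup φ'' - sSup ψ''| ≤ ε` when `|φ - ψ| ≤ ε` pointwise on `[0,1]`. -/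
lemma sSup_dist_le {φ ψ : ℝ → ℝ} (hφ : Continuous φ) (hψ : Continuous ψ) {ε : ℝ}
    (h : ∀ t ∈ Icc (0:ℝ) 1, |φ t - ψ t| ≤ ε) :
    |sSup (φ '' Icc (0:ℝ) 1) - sSup (ψ '' Icc (0:ℝ) 1)| ≤ ε := by
  have hε : 0 ≤ ε := le_trans (abs_nonneg _) (h 0 (by simp))
  rw [abs_sub_le_iff]
  constructor
  · rw [sub_le_iff_le_add]
    refine csSup_le ((image_nonempty φ)) ?_
    rintro x ⟨t, ht, rfl⟩
    have h1 : φ t ≤ ψ t + ε := by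
      have := (abs_sub_le_iff.1 (h t ht)).1; linarith
    exact h1.trans (by linarith [le_sSup_aux hψ ht])
  · rw [sub_le_iff_le_add]
    refine csSup_le ((image_nonempty ψ)) ?_
    rintro x ⟨t, ht, rfl⟩
    have h1 : ψ t ≤ φ t + ε := by
      have := (abs_sub_le_iff.1 (h t ht)).2; linarith
    exact h1.trans (by linarith [le_sSup_aux hφ ht])

/-- Continuity of the fibrewise sup of a continuous function. -/
lemma sup_image_continuous {g : ℝ → ℝ → ℝ} (hg : Continuous (Function.uncurry g)) :
    Continuous fun s => sSup ((fun t => g t s) '' Icc (0:ℝ) 1) := by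
  rw [continuous_iff_continuousAt]
  intro s₀
  rw [Metric.continuousAt_iff]
  intro ε hε
  -- uniform continuity on [0,1] × [s₀-1, s₀+1]
  set K : Set (ℝ × ℝ) := Icc (0:ℝ) 1 ×ˢ Icc (s₀ - 1) (s₀ + 1) with hK
  have hKc : IsCompact K := isCompact_Icc.prod isCompact_Icc
  have huc : UniformContinuousOn (Function.uncurry g) K :=
    hKc.uniformContinuousOn_of_continuous hg.continuousOn
  rw [Metric.uniformContinuousOn_iff] at huc
  obtain ⟨δ, hδ, hucd⟩ := huc (ε/2) (by linarith)
  refine ⟨min δ 1, by positivity, fun {s} hs => ?_⟩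
  have hdist : |s - s₀| < min δ 1 := by rwa [Real.dist_eq] at hs
  have hs1 : s ∈ Icc (s₀-1) (s₀+1) := by
    have := abs_lt.1 (hdist.trans_le (min_le_right _ _)); constructor <;> linarith [this.1, this.2]
  have key : ∀ t ∈ Icc (0:ℝ) 1, |g t s - g t s₀| ≤ ε/2 := by
    intro t ht
    have h1 : ((t, s) : ℝ × ℝ) ∈ K := ⟨ht, hs1⟩
    have h2 : ((t, s₀) : ℝ × ℝ) ∈ K := ⟨ht, by constructor <;> linarith⟩
    have hd : dist ((t,s) : ℝ × ℝ) (t, s₀) < δ := by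
      rw [Prod.dist_eq]
      simp only [dist_self]
      have : dist s s₀ < δ := by rw [Real.dist_eq]; exact hdist.trans_le (min_le_left _ _)
      simpa [max_lt_iff, hδ] using this
    have := hucd _ h1 _ h2 hd
    rw [Real.dist_eq] at this
    exact le_of_lt (by simpa [Function.uncurry] using this)
  have hcont : ∀ s', Continuous fun t => g t s' := fun s' =>
    hg.comp (continuous_id.prodMk continuous_const)
  have := sSup_dist_le (hcont s) (hcont s₀) key
  rw [Real.dist_eq]
  exact lt_of_le_of_lt this (by linarith)

/-- Key "time–change" estimate: if `u' ≤ h(u)` with `h ≥ 1` continuous, then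
`∫_{u τ₁}^{u τ₂} 1/h ≤ τ₂ - τ₁`. -/
lemma up_estimate {u h : ℝ → ℝ} (hu : Differentiable ℝ u) (hh : Continuous h)
    (h1 : ∀ s, 1 ≤ h s) (hineq : ∀ t, deriv u t ≤ h (u t)) {τ₁ τ₂ : ℝ} (hτ : τ₁ ≤ τ₂) :
    (∫ s in (u τ₁)..(u τ₂), (h s)⁻¹) ≤ τ₂ - τ₁ := by
  have hne : ∀ s, h s ≠ 0 := fun s => by linarith [h1 s]
  have hg : Continuous fun s => (h s)⁻¹ := hh.inv₀ hne
  set g : ℝ → ℝ := fun s => (h s)⁻¹ with hgdef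
  set H : ℝ → ℝ := fun x => ∫ s in (0:ℝ)..x, g s with hHdef
  have hH : ∀ x, HasDerivAt H (g x) x := fun x =>
    integral_hasDerivAt_right (hg.intervalIntegrable _ _)
      (hg.stronglyMeasurableAtFilter _ _) hg.continuousAt
  set φ : ℝ → ℝ := fun t => t - H (u t) with hφdef
  have hφ : ∀ t, HasDerivAt φ (1 - g (u t) * deriv u t) t := by
    intro t
    exact (hasDerivAt_id t).sub (((hH (u t)).comp t (hu t).hasDerivAt).congr_deriv rfl)
  have hφmono : Monotone φ := by
    apply monotone_of_deriv_nonneg (fun t => (hφ t).differentiableAt)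
    intro t
    rw [(hφ t).deriv]
    have hgpos : 0 < h (u t) := lt_of_lt_of_le one_pos (h1 _)
    have : g (u t) * deriv u t ≤ g (u t) * h (u t) :=
      mul_le_mul_of_nonneg_left (hineq t) (inv_nonneg.2 hgpos.le)
    rw [hgdef] at this
    simp only [inv_mul_cancel₀ (hne (u t))] at this
    linarith
  have := hφmono hτ
  have hsub : H (u τ₂) - H (u τ₁) = ∫ s in (u τ₁)..(u τ₂), g s :=
    integral_interval_sub_left (hg.intervalIntegrable _ _) (hg.intervalIntegrable _ _)
  have : H (u τ₂) - H (u τ₁) ≤ τ₂ - τ₁ := by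
    simp only [hφdef] at this; linarith [this]
  linarith [hsub ▸ this]

/-- If at every zero of a periodic differentiable `w` the derivative is positive,
then `w` cannot take both positive and negative values. -/
lemma no_crossing {w : ℝ → ℝ} (hw : Differentiable ℝ w) (hper : Function.Periodic w 1)
    (hz : ∀ t, w t = 0 → 0 < deriv w t) {p q : ℝ} (hq : 0 < w q) (hp : w p < 0) :
    False := by
  -- shift p above q
  set n : ℤ := ⌈q - p⌉ + 1 with hn
  set p' : ℝ := p + n with hp'
  have hqp' : q < p' := by
    have h1 : (q - p : ℝ) ≤ ⌈q - p⌉ := Int.le_ceil _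
    have : (n : ℝ) = (⌈q - p⌉ : ℝ) + 1 := by exact_mod_cast rfl
    rw [hp', this]; linarith
  have hwp' : w p' < 0 := by rw [hp', per_int_shift hper p n]; exact hp
  set Z : Set ℝ := Icc q p' ∩ w ⁻¹' (Iic 0) with hZ
  have hZclosed : IsClosed Z := isClosed_Icc.inter (isClosed_Iic.preimage hw.continuous)
  have hZne : Z.Nonempty := ⟨p', ⟨le_of_lt hqp', le_rfl⟩, hwp'.le⟩
  have hZbdd : BddBelow Z := (bddBelow_Icc : BddBelow (Icc q p')).mono (inter_subset_left)
  set t₃ : ℝ := sInf Z with ht₃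
  have ht₃Z : t₃ ∈ Z := hZclosed.csInf_mem hZne hZbdd
  have hqt₃ : q < t₃ := by
    rcases lt_or_eq_of_le ht₃Z.1.1 with h | h
    · exact h
    · exfalso; have := ht₃Z.2; rw [← h] at this; exact absurd hq (by simpa using this)
  have hpos : ∀ t, q ≤ t → t < t₃ → 0 < w t := by
    intro t h1 h2
    by_contra hle
    have : t ∈ Z := ⟨⟨h1, h2.le.trans ht₃Z.1.2⟩, by simpa using not_lt.1 hle⟩
    exact absurd (csInf_le hZbdd this) (not_le.2 h2)
  have hzero : w t₃ = 0 := by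
    refine le_antisymm (by simpa using ht₃Z.2) ?_
    have htend : Tendsto w (nhdsWithin t₃ (Iio t₃)) (nhds (w t₃)) :=
      (hw.continuous.continuousAt).continuousWithinAt.tendsto
    refine ge_of_tendsto htend ?_
    filter_upwards [Ioo_mem_nhdsLT_of_mem (⟨hqt₃, le_rfl⟩ : t₃ ∈ Ioc q t₃)] with t ht
    exact (hpos t ht.1.le ht.2).le
  have hc : 0 < deriv w t₃ := hz t₃ hzero
  have hslope : Tendsto (slope w t₃) (nhdsWithin t₃ {t₃}ᶜ) (nhds (deriv w t₃)) :=
    hasDerivAt_iff_tendsto_slope.1 (hw t₃).hasDerivAt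
  have hslope' : Tendsto (slope w t₃) (nhdsWithin t₃ (Iio t₃)) (nhds (deriv w t₃)) :=
    hslope.mono_left (nhdsWithin_mono _ (fun x hx => ne_of_lt hx))
  have hev : ∀ᶠ t in nhdsWithin t₃ (Iio t₃), 0 < slope w t₃ t :=
    (tendsto_order.1 hslope').1 0 hc
  have hev2 : Ioo q t₃ ∈ nhdsWithin t₃ (Iio t₃) :=
    Ioo_mem_nhdsLT_of_mem (⟨hqt₃, le_rfl⟩ : t₃ ∈ Ioc q t₃)
  obtain ⟨t, hslopet, htIoo⟩ := (hev.and (eventually_of_mem hev2 (fun t ht => ht))).exists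
  have hwt : 0 < w t := hpos t htIoo.1.le htIoo.2
  have : slope w t₃ t = w t / (t - t₃) := by
    rw [slope_def_field, hzero]; ring_nf
  rw [this] at hslopet
  have hden : t - t₃ < 0 := by linarith [htIoo.2]
  have := div_pos_iff.1 hslopet
  rcases this with ⟨h1, h2⟩ | ⟨h1, h2⟩
  · linarith
  · linarith

lemma no_crossing' {w : ℝ → ℝ} (hw : Differentiable ℝ w) (hper : Function.Periodic w 1)
    (hz : ∀ t, w t = 0 → deriv w t < 0) {p q : ℝ} (hq : 0 < w q) (hp : w p < 0) :
    False := by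
  set v : ℝ → ℝ := fun t => w (-t) with hv
  have hvd : Differentiable ℝ v := hw.comp (differentiable_neg)
  have hvder : ∀ t, HasDerivAt v (-(deriv w (-t))) t := by
    intro t
    have h1 : HasDerivAt (fun t : ℝ => -t) (-1) t := (hasDerivAt_id t).neg
    have := ((hw (-t)).hasDerivAt).comp t h1
    simp only [mul_neg, mul_one] at this
    exact this
  have hvper : Function.Periodic v 1 := by
    intro t
    simp only [hv]
    have : -(t + 1) = -t - 1 := by ring
    rw [this, hper.sub_eq]
  refine no_crossing hvd hvper (fun t ht => ?_) (p := -p) (q := -q)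
    (by simpa [hv] using hq) (by simpa [hv] using hp)
  rw [(hvder t).deriv]
  have : w (-t) = 0 := by simpa [hv] using ht
  have := hz (-t) this
  linarith

/-- Grönwall-type uniqueness: if `|w'| ≤ L|w|` and `w t₀ = 0` then `w t = 0` for `t ≥ t₀`. -/
lemma zero_of_gronwall {w : ℝ → ℝ} (hw : Differentiable ℝ w) {L : ℝ} (hL : 0 ≤ L)
    (hineq : ∀ t, |deriv w t| ≤ L * |w t|) {t₀ : ℝ} (h0 : w t₀ = 0) {t : ℝ} (ht : t₀ ≤ t) :
    w t = 0 := by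
  set φ : ℝ → ℝ := fun t => w t * w t * Real.exp (-(2*L) * t) with hφ
  have hφder : ∀ s, HasDerivAt φ
      ((deriv w s * w s + w s * deriv w s) * Real.exp (-(2*L)*s)
        + (w s * w s) * (Real.exp (-(2*L)*s) * (-(2*L)))) s := by
    intro s
    have h1 : HasDerivAt (fun s => w s * w s) (deriv w s * w s + w s * deriv w s) s :=
      ((hw s).hasDerivAt).mul ((hw s).hasDerivAt)
    have hlin : HasDerivAt (fun s : ℝ => -(2*L)*s) (-(2*L)) s := by
      simpa using (hasDerivAt_id s).const_mul (-(2*L))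
    exact h1.mul hlin.exp
  have hφanti : Antitone φ := by
    apply antitone_of_deriv_nonpos (fun s => (hφder s).differentiableAt)
    intro s
    rw [(hφder s).deriv]
    have hexp : 0 < Real.exp (-(2*L)*s) := Real.exp_pos _
    have key : deriv w s * w s + w s * deriv w s ≤ 2 * L * (w s * w s) := by
      have h3 : w s * deriv w s ≤ |w s * deriv w s| := le_abs_self _
      have h4 : |w s * deriv w s| = |w s| * |deriv w s| := abs_mul _ _
      have h5 : |w s| * |deriv w s| ≤ |w s| * (L * |w s|) :=
        mul_le_mul_of_nonneg_left (hineq s) (abs_nonneg _)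
      have h6 : |w s| * (L * |w s|) = L * (|w s| * |w s|) := by ring
      have h7 : |w s| * |w s| = w s * w s := abs_mul_abs_self _
      nlinarith
    nlinarith
  have h1 : φ t ≤ φ t₀ := hφanti ht
  have h2 : φ t₀ = 0 := by simp [hφ, h0]
  have h3 : 0 ≤ w t * w t := mul_self_nonneg _
  have h4 : 0 < Real.exp (-(2*L)*t) := Real.exp_pos _
  have : w t * w t = 0 := by
    by_contra h
    have : 0 < w t * w t := lt_of_le_of_ne h3 (Ne.symm h)
    have : 0 < φ t := mul_pos this h4
    linarith
  exact mul_self_eq_zero.1 this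

/-- Core comparison: solutions with larger mean are pointwise larger. -/
lemma compare_core {f : ℝ → ℝ → ℝ} (hf : ContDiff ℝ (⊤ : ℕ∞) (Function.uncurry f))
    (hfper : ∀ t x, f (t + 1) x = f t x)
    {vt : ℝ → ℝ} {u₁ u₂ : ℝ → ℝ} {ν₁ ν₂ a b : ℝ}
    (h₁cd : ContDiff ℝ 1 u₁) (h₁per : Function.Periodic u₁ 1)
    (h₁mean : (∫ t in (0:ℝ)..1, u₁ t) = a)
    (h₁ode : ∀ t, deriv u₁ t + f t (u₁ t) = vt t + ν₁)
    (h₂cd : ContDiff ℝ 1 u₂) (h₂per : Function.Periodic u₂ 1)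
    (h₂mean : (∫ t in (0:ℝ)..1, u₂ t) = b)
    (h₂ode : ∀ t, deriv u₂ t + f t (u₂ t) = vt t + ν₂)
    (hab : a < b) : ∀ t, u₁ t < u₂ t := by
  have h₁c : Continuous u₁ := h₁cd.continuous
  have h₂c : Continuous u₂ := h₂cd.continuous
  have h₁d : Differentiable ℝ u₁ := h₁cd.differentiable (by norm_num)
  have h₂d : Differentiable ℝ u₂ := h₂cd.differentiable (by norm_num)
  set w : ℝ → ℝ := fun t => u₂ t - u₁ t with hw
  have hwd : Differentiable ℝ w := h₂d.sub h₁d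
  have hwc : Continuous w := h₂c.sub h₁c
  have hwper : Function.Periodic w 1 := fun t => by simp only [hw, h₁per t, h₂per t]
  have hwint : (∫ t in (0:ℝ)..1, w t) = b - a := by
    rw [hw]
    rw [intervalIntegral.integral_sub (h₂c.intervalIntegrable 0 1) (h₁c.intervalIntegrable 0 1),
      h₁mean, h₂mean]
  set c : ℝ := ν₂ - ν₁ with hc
  have derivw : ∀ t, deriv w t = c - (f t (u₂ t) - f t (u₁ t)) := by
    intro t
    have : deriv w t = deriv u₂ t - deriv u₁ t := deriv_sub (h₂d t) (h₁d t)
    rw [this]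
    have e₁ := h₁ode t; have e₂ := h₂ode t
    rw [hc]; linarith
  have hz : ∀ t, w t = 0 → deriv w t = c := by
    intro t ht
    have : u₂ t = u₁ t := by rw [hw] at ht; linarith [sub_eq_zero.1 ht]
    rw [derivw t, this]; ring
  -- somewhere positive
  have hq : ∃ q, 0 < w q := by
    by_contra hcon
    push_neg at hcon
    have : (∫ t in (0:ℝ)..1, w t) ≤ ∫ t in (0:ℝ)..1, (0:ℝ) := by
      apply intervalIntegral.integral_mono_on (by norm_num) (hwc.intervalIntegrable 0 1)
        intervalIntegrable_const
      exact fun x _ => hcon x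
    rw [hwint] at this
    simp at this
    linarith
  obtain ⟨q, hqpos⟩ := hq
  -- Lipschitz constant on the joint range
  set A : ℝ := min (sInf (u₁ '' Icc (0:ℝ) 1)) (sInf (u₂ '' Icc (0:ℝ) 1)) with hA
  set B : ℝ := max (sSup (u₁ '' Icc (0:ℝ) 1)) (sSup (u₂ '' Icc (0:ℝ) 1)) with hB
  have hrange₁ : ∀ t, u₁ t ∈ Icc A B := by
    intro t
    obtain ⟨τ, _, hval, hmin⟩ := exists_glob_min h₁c h₁per
    obtain ⟨σ, _, hval', hmax⟩ := exists_glob_max h₁c h₁per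
    exact ⟨le_trans (min_le_left _ _) (hval ▸ hmin t), le_trans (hval' ▸ hmax t) (le_max_left _ _)⟩
  have hrange₂ : ∀ t, u₂ t ∈ Icc A B := by
    intro t
    obtain ⟨τ, _, hval, hmin⟩ := exists_glob_min h₂c h₂per
    obtain ⟨σ, _, hval', hmax⟩ := exists_glob_max h₂c h₂per
    exact ⟨le_trans (min_le_right _ _) (hval ▸ hmin t), le_trans (hval' ▸ hmax t) (le_max_right _ _)⟩
  obtain ⟨L, hL0, hLip⟩ := lipschitz_aux hf A B
  have hfp : ∀ x : ℝ, Function.Periodic (fun t => f t x) 1 := fun x t => hfper t x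
  have hLip' : ∀ t x y, x ∈ Icc A B → y ∈ Icc A B → |f t x - f t y| ≤ L * |x - y| := by
    intro t x y hx hy
    have hx' : f t x = f (Int.fract t) x := (per_fract (hfp x) t).symm
    have hy' : f t y = f (Int.fract t) y := (per_fract (hfp y) t).symm
    rw [hx', hy']
    exact hLip _ (fract_mem_Icc t) _ hx _ hy
  -- no zeros
  have hnz : ∀ t, w t ≠ 0 := by
    intro t₀ ht₀
    rcases eq_or_ne c 0 with hc0 | hc0
    · -- Grönwall: w ≡ 0, contradicting the mean
      have hineq : ∀ t, |deriv w t| ≤ L * |w t| := by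
        intro t
        rw [derivw t, hc0]
        have : |(0:ℝ) - (f t (u₂ t) - f t (u₁ t))| = |f t (u₂ t) - f t (u₁ t)| := by
          rw [zero_sub, abs_neg]
        rw [this]
        have := hLip' t (u₂ t) (u₁ t) (hrange₂ t) (hrange₁ t)
        simpa [hw] using this
      have hzero : ∀ t ∈ Icc (0:ℝ) 1, w t = 0 := by
        intro t ht
        set N : ℤ := max 0 ⌈t₀⌉ with hN
        have hshift : w t = w (t + N) := (per_int_shift hwper t N).symm
        have htN : t₀ ≤ t + N := by
          have h1 : (t₀ : ℝ) ≤ ⌈t₀⌉ := Int.le_ceil _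
          have h2 : (⌈t₀⌉ : ℝ) ≤ N := by exact_mod_cast le_max_right 0 ⌈t₀⌉
          linarith [ht.1]
        rw [hshift]
        exact zero_of_gronwall hwd hL0 hineq ht₀ htN
      have : (∫ t in (0:ℝ)..1, w t) = 0 := by
        rw [intervalIntegral.integral_congr (g := fun _ => (0:ℝ)) (fun x hx => hzero x (by
          rwa [Set.uIcc_of_le (by norm_num : (0:ℝ) ≤ 1)] at hx))]
        simp
      rw [hwint] at this; linarith
    · by_cases hneg : ∃ p, w p < 0
      · obtain ⟨p, hp⟩ := hneg
        rcases lt_or_gt_of_ne hc0 with hclt | hcgt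
        · exact no_crossing' hwd hwper (fun s hs => (hz s hs) ▸ hclt) hqpos hp
        · exact no_crossing hwd hwper (fun s hs => (hz s hs) ▸ hcgt) hqpos hp
      · push_neg at hneg
        have hmin : IsLocalMin w t₀ :=
          Filter.Eventually.of_forall (fun s => ht₀ ▸ hneg s)
        exact hc0 ((hz t₀ ht₀) ▸ hmin.deriv_eq_zero)
  -- conclude positivity
  intro t
  by_contra hle
  have hwt : w t < 0 := by
    rcases lt_or_eq_of_le (not_lt.1 hle) with h | h
    · simpa [hw] using sub_neg.2 h
    · exact absurd (by simp [hw, h]) (hnz t)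
  have h0mem : (0:ℝ) ∈ Set.uIcc (w t) (w q) := by
    rw [Set.mem_uIcc]; left; exact ⟨hwt.le, hqpos.le⟩
  obtain ⟨s, _, hs⟩ := intermediate_value_uIcc (hwc.continuousOn) h0mem
  exact hnz s hs
/-- Oscillation estimate: the tameness integrands over `[min u, max u]` are bounded
by `2(1+V+B)` where `V` bounds `|vt|` and `B` bounds `|ν|`. -/
lemma osc_bound {f : ℝ → ℝ → ℝ} (hf : ContDiff ℝ (⊤ : ℕ∞) (Function.uncurry f))
    (hfper : ∀ t x, f (t + 1) x = f t x)
    {vt : ℝ → ℝ} {u : ℝ → ℝ} {ν V B : ℝ}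
    (hcd : ContDiff ℝ 1 u) (hper : Function.Periodic u 1)
    (hode : ∀ t, deriv u t + f t (u t) = vt t + ν)
    (hV : ∀ t, |vt t| ≤ V) (hB : |ν| ≤ B) :
    (∫ s in (sInf (u '' Icc (0:ℝ) 1))..(sSup (u '' Icc (0:ℝ) 1)),
        (max 1 (sSup ((fun t => - f t s) '' Icc (0:ℝ) 1)))⁻¹) ≤ 2*(1+V+B) ∧
    (∫ s in (sInf (u '' Icc (0:ℝ) 1))..(sSup (u '' Icc (0:ℝ) 1)),
        (max 1 (sSup ((fun t => f t s) '' Icc (0:ℝ) 1)))⁻¹) ≤ 2*(1+V+B) := by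
  have hV0 : 0 ≤ V := le_trans (abs_nonneg _) (hV 0)
  have hB0 : 0 ≤ B := le_trans (abs_nonneg _) hB
  have hc : Continuous u := hcd.continuous
  have hd : Differentiable ℝ u := hcd.differentiable (by norm_num)
  set Fs : ℝ → ℝ := fun s => sSup ((fun t => f t s) '' Icc (0:ℝ) 1) with hFs
  set Gs : ℝ → ℝ := fun s => sSup ((fun t => - f t s) '' Icc (0:ℝ) 1) with hGs
  have hFc : Continuous Fs := sup_image_continuous hf.continuous
  have hGc : Continuous Gs := by
    have : Continuous (Function.uncurry (fun t x => - f t x)) := hf.continuous.neg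
    exact sup_image_continuous this
  have hfp : ∀ x : ℝ, Function.Periodic (fun t => f t x) 1 := fun x t => hfper t x
  have hfle : ∀ t s, f t s ≤ Fs s := by
    intro t s
    rw [← per_fract (hfp s) t]
    exact le_sSup_aux (hf.continuous.comp (continuous_id.prodMk continuous_const)) (fract_mem_Icc t)
  have hgle : ∀ t s, - f t s ≤ Gs s := by
    intro t s
    have : - f t s = - f (Int.fract t) s := by rw [per_fract (hfp s) t]
    rw [this]
    exact le_sSup_aux ((hf.continuous.comp (continuous_id.prodMk continuous_const)).neg)
      (fract_mem_Icc t)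
  set K : ℝ := 1 + V + B with hK
  have hK1 : (1:ℝ) ≤ K := by rw [hK]; linarith
  have hK0 : K ≠ 0 := by positivity
  set m : ℝ := sInf (u '' Icc (0:ℝ) 1) with hm
  set M : ℝ := sSup (u '' Icc (0:ℝ) 1) with hM
  obtain ⟨τ₁, hτ₁, hval₁, hmin⟩ := exists_glob_min hc hper
  obtain ⟨τ₂, hτ₂, hval₂, hmax⟩ := exists_glob_max hc hper
  have uderiv : ∀ t, deriv u t = vt t + ν - f t (u t) := fun t => by linarith [hode t]
  constructor
  · -- up estimate with Gs
    set h : ℝ → ℝ := fun s => K * max 1 (Gs s) with hh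
    have hhc : Continuous h := continuous_const.mul (continuous_const.max hGc)
    have hh1 : ∀ s, 1 ≤ h s := by
      intro s
      have h1 : (1:ℝ) ≤ max 1 (Gs s) := le_max_left _ _
      calc (1:ℝ) = 1 * 1 := by ring
        _ ≤ K * max 1 (Gs s) := by nlinarith
    have hineq : ∀ t, deriv u t ≤ h (u t) := by
      intro t
      rw [uderiv t]
      have h1 : vt t ≤ V := le_trans (le_abs_self _) (hV t)
      have h2 : ν ≤ B := le_trans (le_abs_self _) hB
      have h3 : - f t (u t) ≤ Gs (u t) := hgle t (u t)
      have h4 : (1:ℝ) ≤ max 1 (Gs (u t)) := le_max_left _ _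
      have h5 : Gs (u t) ≤ max 1 (Gs (u t)) := le_max_right _ _
      have h6 : (V+B) * 1 ≤ (V+B) * max 1 (Gs (u t)) :=
        mul_le_mul_of_nonneg_left h4 (by linarith)
      simp only [hh, hK]
      nlinarith
    have key : (∫ s in m..M, (h s)⁻¹) ≤ 2 := by
      rcases le_or_gt τ₁ τ₂ with hord | hord
      · have := up_estimate hd hhc hh1 hineq hord
        rw [hval₁, hval₂] at this
        refine this.trans ?_
        linarith [hτ₂.2, hτ₁.1]
      · have hord' : τ₁ ≤ τ₂ + 1 := by linarith [hτ₁.2, hτ₂.1]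
        have := up_estimate hd hhc hh1 hineq hord'
        rw [hval₁, hper τ₂, hval₂] at this
        refine this.trans ?_
        linarith [hτ₂.1, hτ₁.1, hτ₁.2]
    have hrw : ∀ s, (max 1 (Gs s))⁻¹ = K * (h s)⁻¹ := by
      intro s
      rw [hh]
      simp only [mul_inv]
      rw [← mul_assoc, mul_inv_cancel₀ hK0, one_mul]
    calc (∫ s in m..M, (max 1 (Gs s))⁻¹) = ∫ s in m..M, K * (h s)⁻¹ := by
          simp only [hrw]
      _ = K * ∫ s in m..M, (h s)⁻¹ := intervalIntegral.integral_const_mul _ _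
      _ ≤ K * 2 := by
          apply mul_le_mul_of_nonneg_left key (by positivity)
      _ = 2 * (1+V+B) := by rw [hK]; ring
  · -- down estimate with Fs
    set h : ℝ → ℝ := fun s => K * max 1 (Fs s) with hh
    have hhc : Continuous h := continuous_const.mul (continuous_const.max hFc)
    have hh1 : ∀ s, 1 ≤ h s := by
      intro s
      have h1 : (1:ℝ) ≤ max 1 (Fs s) := le_max_left _ _
      calc (1:ℝ) = 1 * 1 := by ring
        _ ≤ K * max 1 (Fs s) := by nlinarith
    set v : ℝ → ℝ := fun t => u (-t) with hv
    have hvd : Differentiable ℝ v := hd.comp differentiable_neg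
    have hvder : ∀ t, deriv v t = -(deriv u (-t)) := by
      intro t
      have h1 : HasDerivAt (fun t : ℝ => -t) (-1) t := (hasDerivAt_id t).neg
      have := ((hd (-t)).hasDerivAt).comp t h1
      have h2 : HasDerivAt v (deriv u (-t) * (-1)) t := this
      rw [h2.deriv]; ring
    have hineq : ∀ t, deriv v t ≤ h (v t) := by
      intro t
      rw [hvder t, hv]
      simp only
      rw [uderiv (-t)]
      have h1 : -vt (-t) ≤ V := le_trans (neg_le_abs _) (hV (-t))
      have h2 : -ν ≤ B := le_trans (neg_le_abs _) hB
      have h3 : f (-t) (u (-t)) ≤ Fs (u (-t)) := hfle (-t) (u (-t))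
      have h4 : (1:ℝ) ≤ max 1 (Fs (u (-t))) := le_max_left _ _
      have h5 : Fs (u (-t)) ≤ max 1 (Fs (u (-t))) := le_max_right _ _
      have h6 : (V+B) * 1 ≤ (V+B) * max 1 (Fs (u (-t))) :=
        mul_le_mul_of_nonneg_left h4 (by linarith)
      simp only [hh, hK]
      nlinarith
    have key : (∫ s in m..M, (h s)⁻¹) ≤ 2 := by
      rcases le_or_gt τ₂ τ₁ with hord | hord
      · have hord' : -τ₁ ≤ -τ₂ := by linarith
        have := up_estimate hvd hhc hh1 hineq hord'
        have e1 : v (-τ₁) = u τ₁ := by simp only [hv, neg_neg]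
        have e2 : v (-τ₂) = u τ₂ := by simp only [hv, neg_neg]
        rw [e1, e2, hval₁, hval₂] at this
        refine this.trans ?_
        linarith [hτ₂.1, hτ₁.2]
      · have hord' : -(τ₁ + 1) ≤ -τ₂ := by linarith [hτ₁.1, hτ₂.2]
        have := up_estimate hvd hhc hh1 hineq hord'
        have e1 : v (-(τ₁+1)) = u τ₁ := by simp only [hv, neg_neg]; exact hper τ₁
        have e2 : v (-τ₂) = u τ₂ := by simp only [hv, neg_neg]
        rw [e1, e2, hval₁, hval₂] at this
        refine this.trans ?_
        linarith [hτ₂.1, hτ₁.2]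
    have hrw : ∀ s, (max 1 (Fs s))⁻¹ = K * (h s)⁻¹ := by
      intro s
      rw [hh]
      simp only [mul_inv]
      rw [← mul_assoc, mul_inv_cancel₀ hK0, one_mul]
    calc (∫ s in m..M, (max 1 (Fs s))⁻¹) = ∫ s in m..M, K * (h s)⁻¹ := by
          simp only [hrw]
      _ = K * ∫ s in m..M, (h s)⁻¹ := intervalIntegral.integral_const_mul _ _
      _ ≤ K * 2 := by
          apply mul_le_mul_of_nonneg_left key (by positivity)
      _ = 2 * (1+V+B) := by rw [hK]; ring
/-- Engine for part (i): not wild at `+∞` forces `min u_a → +∞`. -/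
theorem min_tendsto_engine {f : ℝ → ℝ → ℝ}
    (hf : ContDiff ℝ (⊤ : ℕ∞) (Function.uncurry f)) (hfper : ∀ t x, f (t + 1) x = f t x)
    (hnw : ¬ WildOn f (Set.Ici 0))
    {vt : ℝ → ℝ} (hvt : Continuous vt) (hvtper : Function.Periodic vt 1)
    {u : ℝ → ℝ → ℝ} {ν : ℝ → ℝ}
    (hu : ∀ a, ContDiff ℝ 1 (u a) ∧ Function.Periodic (u a) 1 ∧
      (∫ t in (0:ℝ)..1, u a t) = a ∧ ∀ t, deriv (u a) t + f t (u a t) = vt t + ν a) :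
    Tendsto (fun a => sInf (u a '' Icc (0:ℝ) 1)) atTop atTop := by
  set mfun : ℝ → ℝ := fun a => sInf (u a '' Icc (0:ℝ) 1) with hmfun
  set Mfun : ℝ → ℝ := fun a => sSup (u a '' Icc (0:ℝ) 1) with hMfun
  have hcomp : ∀ {a b : ℝ}, a < b → ∀ t, u a t < u b t := by
    intro a b hab
    exact compare_core hf hfper (hu a).1 (hu a).2.1 (hu a).2.2.1 (hu a).2.2.2
      (hu b).1 (hu b).2.1 (hu b).2.2.1 (hu b).2.2.2 hab
  have hmono : Monotone mfun := by
    intro a b hab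
    rcases eq_or_lt_of_le hab with h | h
    · rw [h]
    · obtain ⟨τ, hτ, hval, hmin⟩ := exists_glob_min (hu b).1.continuous (hu b).2.1
      obtain ⟨σ, hσ, hval', hmin'⟩ := exists_glob_min (hu a).1.continuous (hu a).2.1
      calc mfun a = u a σ := hval'.symm
        _ ≤ u a τ := hmin' τ
        _ ≤ u b τ := (hcomp h τ).le
        _ = mfun b := hval
  apply tendsto_atTop_atTop_of_monotone hmono
  by_contra hcon
  push_neg at hcon
  obtain ⟨C, hC⟩ := hcon
  -- uniform bounds
  obtain ⟨V, hV0, hV⟩ := periodic_bound hvt hvtper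
  obtain ⟨S, hS0, hS⟩ := bound_aux hf.continuous (mfun 0) C
  set B : ℝ := S + V with hB
  have hmb : ∀ a, 0 ≤ a → mfun a ∈ Icc (mfun 0) C :=
    fun a ha => ⟨hmono ha, (hC a).le⟩
  have hνB : ∀ a, 0 ≤ a → |ν a| ≤ B := by
    intro a ha
    obtain ⟨τ, hτ, hval, hmin⟩ := exists_glob_min (hu a).1.continuous (hu a).2.1
    have hld : IsLocalMin (u a) τ := Filter.Eventually.of_forall hmin
    have hder : deriv (u a) τ = 0 := hld.deriv_eq_zero
    have hode := (hu a).2.2.2 τ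
    rw [hder, zero_add] at hode
    have hνval : ν a = f τ (u a τ) - vt τ := by linarith
    have huτ : u a τ ∈ Icc (mfun 0) C := hval ▸ hmb a ha
    have h1 : |f τ (u a τ)| ≤ S := hS τ hτ _ huτ
    rw [hνval, hB]
    calc |f τ (u a τ) - vt τ| ≤ |f τ (u a τ)| + |vt τ| := abs_sub _ _
      _ ≤ S + V := add_le_add h1 (hV τ)
  set K : ℝ := 2 * (1 + V + B) with hKdef
  have hK0 : 0 ≤ K := by rw [hKdef]; positivity
  have hosc : ∀ a, 0 ≤ a →
      (∫ s in (mfun a)..(Mfun a),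
        (max 1 (sSup ((fun t => - f t s) '' Icc (0:ℝ) 1)))⁻¹) ≤ K ∧
      (∫ s in (mfun a)..(Mfun a),
        (max 1 (sSup ((fun t => f t s) '' Icc (0:ℝ) 1)))⁻¹) ≤ K := by
    intro a ha
    exact osc_bound hf hfper (hu a).1 (hu a).2.1 (hu a).2.2.2 hV (hνB a ha)
  have hMge : ∀ a, a ≤ Mfun a :=
    fun a => mean_le_sSup (hu a).1.continuous (hu a).2.1 (hu a).2.2.1
  have hmle : ∀ a, mfun a ≤ a :=
    fun a => sInf_le_mean (hu a).1.continuous (hu a).2.1 (hu a).2.2.1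
  -- generic integrability argument
  have main : ∀ g : ℝ → ℝ, Continuous g → (∀ s, 0 < g s) → (∀ s, g s ≤ 1) →
      (∀ a, 0 ≤ a → (∫ s in (mfun a)..(Mfun a), g s) ≤ K) →
      IntegrableOn g (Set.Ici (0:ℝ)) := by
    intro g hgc hgpos hgle hgint
    rw [integrableOn_Ici_iff_integrableOn_Ioi]
    apply MeasureTheory.integrableOn_Ioi_of_intervalIntegral_norm_bounded
      (l := atTop) (b := fun a : ℝ => Mfun a) (max C 0 + K) 0
    · exact fun i => hgc.integrableOn_Ioc
    · exact tendsto_atTop_mono hMge tendsto_id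
    · filter_upwards [eventually_ge_atTop (0:ℝ)] with a ha
      have heq : (∫ x in (0:ℝ)..(Mfun a), ‖g x‖) = ∫ x in (0:ℝ)..(Mfun a), g x := by
        apply intervalIntegral.integral_congr
        intro x _
        exact Real.norm_of_nonneg (hgpos x).le
      rw [heq]
      set p : ℝ := max (mfun a) 0 with hp
      have hpMa : p ≤ Mfun a :=
        max_le ((hmle a).trans (hMge a)) (ha.trans (hMge a))
      have h0p : (0:ℝ) ≤ p := le_max_right _ _
      have hsplit : (∫ x in (0:ℝ)..(Mfun a), g x)
          = (∫ x in (0:ℝ)..p, g x) + ∫ x in p..(Mfun a), g x :=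
        (intervalIntegral.integral_add_adjacent_intervals
          (hgc.intervalIntegrable _ _) (hgc.intervalIntegrable _ _)).symm
      rw [hsplit]
      have h1 : (∫ x in (0:ℝ)..p, g x) ≤ max C 0 := by
        have : (∫ x in (0:ℝ)..p, g x) ≤ ∫ x in (0:ℝ)..p, (1:ℝ) :=
          intervalIntegral.integral_mono_on h0p (hgc.intervalIntegrable _ _)
            intervalIntegrable_const (fun x _ => hgle x)
        simp only [intervalIntegral.integral_const, smul_eq_mul, mul_one, sub_zero] at this
        refine this.trans (max_le_max_right 0 (hC a).le)
      have h2 : (∫ x in p..(Mfun a), g x) ≤ ∫ x in (mfun a)..(Mfun a), g x := by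
        apply intervalIntegral.integral_mono_interval (le_max_left _ _) hpMa le_rfl
          (Filter.Eventually.of_forall (fun x => (hgpos x).le)) (hgc.intervalIntegrable _ _)
      linarith [hgint a ha]
  -- contradiction with non-wildness
  apply hnw
  constructor
  · have := main _ ((continuous_const.max (sup_image_continuous hf.continuous)).inv₀
      (fun s => by positivity)) ?_ ?_ (fun a ha => (hosc a ha).2)
    · simp only [one_div]; exact this
    · intro s; exact inv_pos.2 (lt_of_lt_of_le one_pos (le_max_left _ _))
    · intro s
      exact inv_le_one_of_one_le₀ (le_max_left _ _)
  · have hneg : Continuous (Function.uncurry (fun t x => - f t x)) := by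
      have : Function.uncurry (fun t x => - f t x) = fun p : ℝ × ℝ => - (Function.uncurry f p) := rfl
      rw [this]; exact hf.continuous.neg
    have := main _ ((continuous_const.max (sup_image_continuous hneg)).inv₀
      (fun s => by positivity)) ?_ ?_ (fun a ha => (hosc a ha).1)
    · simp only [one_div]; exact this
    · intro s; exact inv_pos.2 (lt_of_lt_of_le one_pos (le_max_left _ _))
    · intro s
      exact inv_le_one_of_one_le₀ (le_max_left _ _)
/-- Lipschitz version of `lipschitz_aux` valid for every time `t`. -/
lemma lipschitz_all {f : ℝ → ℝ → ℝ} (hf : ContDiff ℝ (⊤ : ℕ∞) (Function.uncurry f))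
    (hfper : ∀ t x, f (t + 1) x = f t x) (A B : ℝ) :
    ∃ L : ℝ, 0 ≤ L ∧ ∀ t x y, x ∈ Icc A B → y ∈ Icc A B → |f t x - f t y| ≤ L * |x - y| := by
  obtain ⟨L, hL0, hLip⟩ := lipschitz_aux hf A B
  refine ⟨L, hL0, fun t x y hx hy => ?_⟩
  have hfp : ∀ x : ℝ, Function.Periodic (fun s => f s x) 1 := fun x s => hfper s x
  rw [← per_fract (hfp x) t, ← per_fract (hfp y) t]
  exact hLip _ (fract_mem_Icc t) _ hx _ hy

/-- The evaluation map `a ↦ u a t₀` is continuous. -/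
theorem eval_continuous {f : ℝ → ℝ → ℝ}
    (hf : ContDiff ℝ (⊤ : ℕ∞) (Function.uncurry f)) (hfper : ∀ t x, f (t + 1) x = f t x)
    {vt : ℝ → ℝ} {u : ℝ → ℝ → ℝ} {ν : ℝ → ℝ}
    (hu : ∀ a, ContDiff ℝ 1 (u a) ∧ Function.Periodic (u a) 1 ∧
      (∫ t in (0:ℝ)..1, u a t) = a ∧ ∀ t, deriv (u a) t + f t (u a t) = vt t + ν a)
    (t₀ : ℝ) : Continuous fun a => u a t₀ := by
  have hcomp : ∀ {a b : ℝ}, a < b → ∀ t, u a t < u b t := by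
    intro a b hab
    exact compare_core hf hfper (hu a).1 (hu a).2.1 (hu a).2.2.1 (hu a).2.2.2
      (hu b).1 (hu b).2.1 (hu b).2.2.1 (hu b).2.2.2 hab
  have hcomple : ∀ {a b : ℝ}, a ≤ b → ∀ t, u a t ≤ u b t := by
    intro a b hab t
    rcases eq_or_lt_of_le hab with h | h
    · rw [h]
    · exact (hcomp h t).le
  rw [continuous_iff_continuousAt]
  intro a₀
  set A : ℝ := sInf (u (a₀ - 1) '' Icc (0:ℝ) 1) with hA
  set Bv : ℝ := sSup (u (a₀ + 1) '' Icc (0:ℝ) 1) with hBv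
  have hrange : ∀ a, a₀ - 1 ≤ a → a ≤ a₀ + 1 → ∀ t, u a t ∈ Icc A Bv := by
    intro a h1 h2 t
    obtain ⟨τ, _, hval, hmin⟩ := exists_glob_min (hu (a₀-1)).1.continuous (hu (a₀-1)).2.1
    obtain ⟨σ, _, hval', hmax⟩ := exists_glob_max (hu (a₀+1)).1.continuous (hu (a₀+1)).2.1
    constructor
    · rw [hA, ← hval]; exact (hmin t).trans (hcomple h1 t)
    · rw [hBv, ← hval']; exact (hcomple h2 t).trans (hmax t)
  obtain ⟨L, hL0, hLip⟩ := lipschitz_all hf hfper A Bv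
  set L' : ℝ := L + 1 with hL'def
  have hL'0 : (0:ℝ) < L' := by rw [hL'def]; linarith
  set CL : ℝ := 2 * Real.exp L' with hCL
  have hCL0 : 0 < CL := by rw [hCL]; positivity
  -- the key Lipschitz estimate
  have key : ∀ a b, a₀ - 1 ≤ a → a < b → b ≤ a₀ + 1 → u b t₀ - u a t₀ ≤ CL * (b - a) := by
    intro a b hwin1 hab hwin2
    have h₁c : Continuous (u a) := (hu a).1.continuous
    have h₂c : Continuous (u b) := (hu b).1.continuous
    have h₁d : Differentiable ℝ (u a) := (hu a).1.differentiable (by norm_num)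
    have h₂d : Differentiable ℝ (u b) := (hu b).1.differentiable (by norm_num)
    set w : ℝ → ℝ := fun t => u b t - u a t with hw
    have hwd : Differentiable ℝ w := h₂d.sub h₁d
    have hwc : Continuous w := h₂c.sub h₁c
    have hwper : Function.Periodic w 1 := fun t => by
      simp only [hw, (hu a).2.1 t, (hu b).2.1 t]
    have hwpos : ∀ t, 0 < w t := fun t => sub_pos.2 (hcomp hab t)
    have hwint : (∫ t in (0:ℝ)..1, w t) = b - a := by
      rw [hw, intervalIntegral.integral_sub (h₂c.intervalIntegrable 0 1)
        (h₁c.intervalIntegrable 0 1), (hu a).2.2.1, (hu b).2.2.1]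
    set c : ℝ := ν b - ν a with hc
    have derivw : ∀ t, deriv w t = c - (f t (u b t) - f t (u a t)) := by
      intro t
      have : deriv w t = deriv (u b) t - deriv (u a) t := deriv_sub (h₂d t) (h₁d t)
      rw [this]
      have e₁ := (hu a).2.2.2 t; have e₂ := (hu b).2.2.2 t
      rw [hc]; linarith
    obtain ⟨σ, hσIcc, hσval, hσmin⟩ := exists_glob_min hwc hwper
    -- w σ ≤ b - a
    have hwσ : w σ ≤ b - a := by
      have h1 : (∫ t in (0:ℝ)..1, w σ) ≤ ∫ t in (0:ℝ)..1, w t :=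
        intervalIntegral.integral_mono_on (by norm_num) intervalIntegrable_const
          (hwc.intervalIntegrable 0 1) (fun x _ => hσmin x)
      rw [hwint] at h1
      simpa only [intervalIntegral.integral_const, sub_zero, one_smul] using h1
    -- |c| ≤ L (b - a)
    have hcb : |c| ≤ L * (b - a) := by
      have hld : IsLocalMin w σ := Filter.Eventually.of_forall hσmin
      have hder0 : deriv w σ = 0 := hld.deriv_eq_zero
      have := derivw σ
      rw [hder0] at this
      have hceq : c = f σ (u b σ) - f σ (u a σ) := by linarith
      rw [hceq]
      have := hLip σ (u b σ) (u a σ) (hrange b (by linarith) hwin2 σ)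
        (hrange a hwin1 (by linarith) σ)
      refine this.trans ?_
      apply mul_le_mul_of_nonneg_left _ hL0
      have : |u b σ - u a σ| = w σ := abs_of_pos (hwpos σ)
      rw [this]
      linarith
    have hder_le : ∀ t, deriv w t ≤ |c| + L * w t := by
      intro t
      rw [derivw t]
      have h1 := hLip t (u b t) (u a t) (hrange b (by linarith) hwin2 t)
        (hrange a hwin1 (by linarith) t)
      have h2 : |u b t - u a t| = w t := abs_of_pos (hwpos t)
      rw [h2] at h1
      have h3 : -(f t (u b t) - f t (u a t)) ≤ |f t (u b t) - f t (u a t)| := neg_le_abs _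
      have h4 : c ≤ |c| := le_abs_self _
      linarith
    set q : ℝ := |c| / L' with hq
    have hq0 : 0 ≤ q := div_nonneg (abs_nonneg _) hL'0.le
    have hq' : L' * q = |c| := by rw [hq]; field_simp
    set φ : ℝ → ℝ := fun t => (w t + q) * Real.exp (L' * (σ - t)) with hφ
    have hφder : ∀ t, HasDerivAt φ
        (deriv w t * Real.exp (L' * (σ - t))
          + (w t + q) * (Real.exp (L' * (σ - t)) * (L' * (0 - 1)))) t := by
      intro t
      have hlin : HasDerivAt (fun t : ℝ => L' * (σ - t)) (L' * (0 - 1)) t :=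
        ((hasDerivAt_const t σ).sub (hasDerivAt_id t)).const_mul L'
      exact ((hwd t).hasDerivAt.add_const q).mul hlin.exp
    have hφanti : Antitone φ := by
      apply antitone_of_deriv_nonpos (fun s => (hφder s).differentiableAt)
      intro x
      rw [(hφder x).deriv]
      have heq : deriv w x * Real.exp (L' * (σ - x))
          + (w x + q) * (Real.exp (L' * (σ - x)) * (L' * (0 - 1)))
          = Real.exp (L' * (σ - x)) * (deriv w x - L' * (w x + q)) := by ring
      rw [heq]
      have hdist : L' * (w x + q) = L' * w x + |c| := by rw [mul_add, hq']
      have hL'w : L' * w x = L * w x + w x := by rw [hL'def]; ring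
      have hA2 : deriv w x - L' * (w x + q) ≤ 0 := by
        have := hder_le x
        linarith [hwpos x]
      exact mul_nonpos_of_nonneg_of_nonpos (Real.exp_pos _).le hA2
    -- transfer t₀ into [σ, σ+1)
    set n : ℤ := ⌊t₀ - σ⌋ with hn
    set t₁ : ℝ := t₀ - n with ht₁
    have hσt₁ : σ ≤ t₁ := by
      have : (n:ℝ) ≤ t₀ - σ := Int.floor_le _
      rw [ht₁]; linarith
    have ht₁σ : t₁ ≤ σ + 1 := by
      have : t₀ - σ - 1 < n := Int.sub_one_lt_floor _
      rw [ht₁]; linarith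
    have hwshift : w t₀ = w t₁ := by
      have h := per_int_shift hwper t₁ n
      have ht₁n : t₁ + n = t₀ := by rw [ht₁]; ring
      rw [ht₁n] at h
      exact h
    have hφt : φ t₁ ≤ φ σ := hφanti hσt₁
    have hφσ : φ σ = w σ + q := by rw [hφ]; simp
    have h4 : (w t₁ + q) * Real.exp (-L') ≤ w σ + q := by
      have h6 : Real.exp (-L') ≤ Real.exp (L' * (σ - t₁)) := by
        apply Real.exp_le_exp.2
        nlinarith
      have h7 : 0 ≤ w t₁ + q := by linarith [hwpos t₁]
      calc (w t₁ + q) * Real.exp (-L') ≤ (w t₁ + q) * Real.exp (L' * (σ - t₁)) :=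
            mul_le_mul_of_nonneg_left h6 h7
        _ = φ t₁ := rfl
        _ ≤ φ σ := hφt
        _ = w σ + q := hφσ
    have h5 : w t₁ + q ≤ (w σ + q) * Real.exp L' := by
      have hE : (0:ℝ) < Real.exp L' := Real.exp_pos _
      have := mul_le_mul_of_nonneg_right h4 hE.le
      rwa [mul_assoc, ← Real.exp_add, neg_add_cancel, Real.exp_zero, mul_one] at this
    -- assemble
    have hqb : q ≤ b - a := by
      rw [hq, div_le_iff₀ hL'0]
      calc |c| ≤ L * (b - a) := hcb
        _ ≤ (b - a) * L' := by rw [hL'def]; nlinarith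
    have hfin : w t₁ ≤ CL * (b - a) := by
      have h8 : w σ + q ≤ 2 * (b - a) := by linarith
      have h9 : (w σ + q) * Real.exp L' ≤ 2 * (b - a) * Real.exp L' :=
        mul_le_mul_of_nonneg_right h8 (Real.exp_pos _).le
      rw [hCL]
      calc w t₁ ≤ w t₁ + q := by linarith
        _ ≤ (w σ + q) * Real.exp L' := h5
        _ ≤ 2 * (b - a) * Real.exp L' := h9
        _ = 2 * Real.exp L' * (b - a) := by ring
    calc u b t₀ - u a t₀ = w t₀ := rfl
      _ = w t₁ := hwshift
      _ ≤ CL * (b - a) := hfin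
  -- ε-δ continuity
  rw [Metric.continuousAt_iff]
  intro ε hε
  refine ⟨min 1 (ε / (CL + 1)), by positivity, ?_⟩
  intro x hx
  rw [Real.dist_eq] at hx ⊢
  have hx1 : |x - a₀| < 1 := lt_of_lt_of_le hx (min_le_left _ _)
  have hx2 : |x - a₀| < ε / (CL + 1) := lt_of_lt_of_le hx (min_le_right _ _)
  have habs := abs_lt.1 hx1
  have hbound : |u x t₀ - u a₀ t₀| ≤ CL * |x - a₀| := by
    rcases lt_trichotomy x a₀ with h | h | h
    · have := key x a₀ (by linarith [habs.1]) h (by linarith)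
      have hpos : 0 < u a₀ t₀ - u x t₀ := sub_pos.2 (hcomp h t₀)
      rw [abs_of_neg (by linarith : u x t₀ - u a₀ t₀ < 0), abs_of_neg (by linarith : x - a₀ < 0)]
      linarith
    · rw [h]; simp
    · have := key a₀ x (by linarith) h (by linarith [habs.2])
      have hpos : 0 < u x t₀ - u a₀ t₀ := sub_pos.2 (hcomp h t₀)
      rw [abs_of_pos hpos, abs_of_pos (by linarith : (0:ℝ) < x - a₀)]
      linarith
  calc |u x t₀ - u a₀ t₀| ≤ CL * |x - a₀| := hbound
    _ < (CL + 1) * (ε / (CL + 1)) := by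
        apply lt_of_le_of_lt (mul_le_mul_of_nonneg_right (le_add_of_nonneg_right zero_le_one)
          (abs_nonneg _))
        exact mul_lt_mul_of_pos_left hx2 (by positivity)
    _ = ε := by field_simp
end Stmt3Aux

/-- **Lemma 1.3** (fibres are parametrized by average and by evaluation).
If for each `a` the function `u a` is the unique `C¹` 1-periodic function of
mean `a` with `(u a)' + f(t, u a) = ṽ + ν a` for some constant `ν a`, then
`min_{[0,1]} u a → +∞` as `a → +∞`, `max_{[0,1]} u a → −∞` as `a → −∞`, and
for every `t₀` the map `a ↦ u a t₀` is a strictly increasing bijection of `ℝ`. -/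
theorem stmt3 (f : ℝ → ℝ → ℝ) (hf : Nonlinearity f) (htame : Tame f)
    (vt : ℝ → ℝ) (hvt : Continuous vt) (hvtper : Periodic1 vt)
    (hvtmean : (∫ t in (0:ℝ)..1, vt t) = 0)
    (u : ℝ → ℝ → ℝ) (ν : ℝ → ℝ)
    (hu : ∀ a, ContDiff ℝ 1 (u a) ∧ Periodic1 (u a) ∧
      (∫ t in (0:ℝ)..1, u a t) = a ∧
      ∀ t, deriv (u a) t + f t (u a t) = vt t + ν a) :
    Tendsto (fun a => sInf (u a '' Set.Icc (0:ℝ) 1)) atTop atTop ∧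
    Tendsto (fun a => sSup (u a '' Set.Icc (0:ℝ) 1)) atBot atBot ∧
    ∀ t₀ : ℝ, StrictMono (fun a => u a t₀) ∧
      Function.Bijective (fun a => u a t₀) := by
  obtain ⟨hfc, hfper⟩ := hf
  have hub : ∀ a, ContDiff ℝ 1 (u a) ∧ Function.Periodic (u a) 1 ∧
      (∫ t in (0:ℝ)..1, u a t) = a ∧ ∀ t, deriv (u a) t + f t (u a t) = vt t + ν a :=
    fun a => ⟨(hu a).1, (hu a).2.1, (hu a).2.2.1, (hu a).2.2.2⟩
  have hvtper' : Function.Periodic vt 1 := hvtper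
  have part1 : Tendsto (fun a => sInf (u a '' Set.Icc (0:ℝ) 1)) atTop atTop :=
    Stmt3Aux.min_tendsto_engine hfc hfper htame.1 hvt hvtper' hub
  -- duality setup
  set f' : ℝ → ℝ → ℝ := fun t x => - f t (-x) with hf'
  set vt' : ℝ → ℝ := fun t => - vt t with hvt'd
  set u' : ℝ → ℝ → ℝ := fun a t => - u (-a) t with hu'def
  set ν' : ℝ → ℝ := fun a => - ν (-a) with hν'
  have hf'c : ContDiff ℝ (⊤ : ℕ∞) (Function.uncurry f') := by
    have h : Function.uncurry f' = fun p : ℝ × ℝ => - (Function.uncurry f (p.1, -p.2)) := rfl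
    rw [h]
    exact (hfc.comp (contDiff_fst.prodMk contDiff_snd.neg)).neg
  have hf'per : ∀ t x, f' (t + 1) x = f' t x := by
    intro t x; simp only [hf']; rw [hfper]
  have hvt'c : Continuous vt' := hvt.neg
  have hvt'per : Function.Periodic vt' 1 := by
    intro t
    simp only [hvt'd]
    rw [hvtper t]
  have hubar : ∀ a, ContDiff ℝ 1 (u' a) ∧ Function.Periodic (u' a) 1 ∧
      (∫ t in (0:ℝ)..1, u' a t) = a ∧
      ∀ t, deriv (u' a) t + f' t (u' a t) = vt' t + ν' a := by
    intro a
    have hper' : Function.Periodic (u' a) 1 := by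
      intro t
      simp only [hu'def]
      rw [(hu (-a)).2.1 t]
    refine ⟨(hu (-a)).1.neg, hper', ?_, ?_⟩
    · have : (∫ t in (0:ℝ)..1, u' a t) = - ∫ t in (0:ℝ)..1, u (-a) t := by
        simp only [hu'def]
        exact intervalIntegral.integral_neg
      rw [this, (hu (-a)).2.2.1]; ring
    · intro t
      have hd : deriv (u' a) t = - deriv (u (-a)) t := by
        simp only [hu'def]
        exact deriv.neg
      have hode := (hu (-a)).2.2.2 t
      simp only [hu'def, hf', hvt'd, hν', hd, neg_neg]
      linarith
  have hnegpre : (Neg.neg ⁻¹' (Set.Iic (0:ℝ))) = Set.Ici 0 := by ext x; simp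
  have htrans : ∀ g : ℝ → ℝ, MeasureTheory.IntegrableOn (fun s => g (-s)) (Set.Ici (0:ℝ)) →
      MeasureTheory.IntegrableOn g (Set.Iic (0:ℝ)) := by
    intro g hg
    have := (MeasurePreserving.integrableOn_comp_preimage
      (Measure.measurePreserving_neg (volume : Measure ℝ))
      (Homeomorph.neg ℝ).measurableEmbedding (f := g) (s := Set.Iic 0))
    rw [hnegpre] at this
    exact this.1 hg
  have hnw' : ¬ WildOn f' (Set.Ici 0) := by
    intro hwild
    apply htame.2
    obtain ⟨h1, h2⟩ := hwild
    constructor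
    · -- from h2
      apply htrans
      have heq : (fun s : ℝ => (1 : ℝ) / max 1 (sSup ((fun t => f t (-s)) '' Set.Icc (0:ℝ) 1)))
          = fun s => 1 / max 1 (sSup ((fun t => - f' t s) '' Set.Icc (0:ℝ) 1)) := by
        funext s
        have hfun : (fun t => - f' t s) = (fun t => f t (-s)) := by
          funext t
          simp only [hf', neg_neg]
        rw [hfun]
      exact heq ▸ h2
    · -- from h1
      apply htrans
      exact h1
  have part2 : Tendsto (fun a => sSup (u a '' Set.Icc (0:ℝ) 1)) atBot atBot := by
    have e := Stmt3Aux.min_tendsto_engine hf'c hf'per hnw' hvt'c hvt'per hubar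
    have himg : ∀ a : ℝ, sInf (u' a '' Set.Icc (0:ℝ) 1)
        = - sSup (u (-a) '' Set.Icc (0:ℝ) 1) := by
      intro a
      have h1 : u' a '' Set.Icc (0:ℝ) 1 = -(u (-a) '' Set.Icc (0:ℝ) 1) := by
        rw [← Set.image_neg_eq_neg, ← Set.image_comp]
        rfl
      rw [h1, Real.sInf_def, neg_neg]
    simp only [himg] at e
    have e2 : Tendsto (fun a : ℝ => sSup (u (-a) '' Set.Icc (0:ℝ) 1)) atTop atBot :=
      tendsto_neg_atTop_iff.1 e
    have e3 := e2.comp (tendsto_neg_atBot_atTop (G := ℝ))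
    have : ((fun a : ℝ => sSup (u (-a) '' Set.Icc (0:ℝ) 1)) ∘ Neg.neg)
        = fun a : ℝ => sSup (u a '' Set.Icc (0:ℝ) 1) := by
      funext a; simp [Function.comp]
    rwa [this] at e3
  refine ⟨part1, part2, fun t₀ => ?_⟩
  have hmono : StrictMono (fun a => u a t₀) := fun a b hab =>
    Stmt3Aux.compare_core hfc hfper (hub a).1 (hub a).2.1 (hub a).2.2.1 (hub a).2.2.2
      (hub b).1 (hub b).2.1 (hub b).2.2.1 (hub b).2.2.2 hab t₀
  have hcont : Continuous fun a => u a t₀ := Stmt3Aux.eval_continuous hfc hfper hub t₀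
  have hinfle : ∀ a, sInf (u a '' Set.Icc (0:ℝ) 1) ≤ u a t₀ := by
    intro a
    obtain ⟨τ, _, hval, hmin⟩ := Stmt3Aux.exists_glob_min (hub a).1.continuous (hub a).2.1
    exact hval ▸ hmin t₀
  have hlesup : ∀ a, u a t₀ ≤ sSup (u a '' Set.Icc (0:ℝ) 1) := by
    intro a
    obtain ⟨τ, _, hval, hmax⟩ := Stmt3Aux.exists_glob_max (hub a).1.continuous (hub a).2.1
    exact hval ▸ hmax t₀
  have htop : Tendsto (fun a => u a t₀) atTop atTop := tendsto_atTop_mono hinfle part1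
  have hbot : Tendsto (fun a => u a t₀) atBot atBot := tendsto_atBot_mono hlesup part2
  exact ⟨hmono, hmono.injective, hcont.surjective htop hbot⟩
end

section
/- Let f : ℝ × ℝ → ℝ be a proper nonlinearity. Then for every k > 0 there exists M > 0 such that every continuously differentiable 1-periodic u : ℝ → ℝ satisfying |u'(t) + f(t,u(t))| ≤ k for all t also satisfies |u(t)| ≤ M for all t. -/
open Filter

/-- A nonlinearity is proper if `inf_{t ∈ [0,1]} |f(t,x)| → ∞` as `|x| → ∞`. -/
def ProperNL (f : ℝ → ℝ → ℝ) : Prop :=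
  Tendsto (fun x : ℝ => sInf ((fun t => |f t x|) '' Set.Icc (0:ℝ) 1))
    (Filter.comap (fun x : ℝ => |x|) Filter.atTop) Filter.atTop

/-- **Proposition 1.4** (key a priori estimate: properness of `f` implies
properness of `F`). If `f` is a proper nonlinearity, then periodic functions
`u` with `‖u' + f(t,u)‖_∞ ≤ k` are uniformly bounded. -/
theorem stmt4 (f : ℝ → ℝ → ℝ) (hf : Nonlinearity f) (hproper : ProperNL f)
    (k : ℝ) (hk : 0 < k) :
    ∃ M : ℝ, 0 < M ∧ ∀ u : ℝ → ℝ, ContDiff ℝ 1 u → Periodic1 u →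
      (∀ t, |deriv u t + f t (u t)| ≤ k) → ∀ t, |u t| ≤ M := by
  -- Extract a radius `R` beyond which `|f t x| ≥ k + 1` for `t ∈ [0,1]`.
  have hev : ∀ᶠ b in atTop, ∀ x : ℝ, |x| = b →
      k + 1 ≤ sInf ((fun t => |f t x|) '' Set.Icc (0:ℝ) 1) :=
    Filter.eventually_comap.mp (hproper.eventually (Filter.eventually_ge_atTop (k + 1)))
  obtain ⟨R, hR⟩ := Filter.eventually_atTop.mp hev
  have key : ∀ x : ℝ, R ≤ |x| → ∀ s ∈ Set.Icc (0:ℝ) 1, k + 1 ≤ |f s x| := by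
    intro x hx s hs
    have h1 : k + 1 ≤ sInf ((fun t => |f t x|) '' Set.Icc (0:ℝ) 1) :=
      hR |x| hx x rfl
    refine h1.trans (csInf_le ⟨0, ?_⟩ ⟨s, hs, rfl⟩)
    rintro y ⟨t, -, rfl⟩
    exact abs_nonneg _
  set M : ℝ := max R 1 + 1 with hM
  have hMpos : 0 < M := by
    have : (1:ℝ) ≤ max R 1 := le_max_right _ _
    linarith
  refine ⟨M, hMpos, ?_⟩
  intro u hu hper hbd t
  have hcont : Continuous u := hu.continuous
  have hperu : Function.Periodic u 1 := hper
  -- reduce every point to [0,1]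
  have hfract : ∀ s : ℝ, u s = u (Int.fract s) := by
    intro s
    have := hperu.sub_int_mul_eq (x := s) ⌊s⌋
    simp only [mul_one] at this
    rw [Int.fract, this]
  -- max and min on [0,1]
  obtain ⟨a, ha, hmax⟩ := isCompact_Icc.exists_isMaxOn (α := ℝ) (s := Set.Icc (0:ℝ) 1)
    ⟨0, by norm_num⟩ hcont.continuousOn
  obtain ⟨b, hb, hmin⟩ := isCompact_Icc.exists_isMinOn (α := ℝ) (s := Set.Icc (0:ℝ) 1)
    ⟨0, by norm_num⟩ hcont.continuousOn
  have hglobmax : ∀ s, u s ≤ u a := by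
    intro s
    rw [hfract s]
    exact hmax ⟨(Int.fract_nonneg s), (Int.fract_lt_one s).le⟩
  have hglobmin : ∀ s, u b ≤ u s := by
    intro s
    rw [hfract s]
    exact hmin ⟨(Int.fract_nonneg s), (Int.fract_lt_one s).le⟩
  have hda : deriv u a = 0 :=
    IsLocalMax.deriv_eq_zero (Filter.Eventually.of_forall hglobmax)
  have hdb : deriv u b = 0 :=
    IsLocalMin.deriv_eq_zero (Filter.Eventually.of_forall hglobmin)
  -- at the extrema, |f| ≤ k, so |u| < R there
  have hsmall : ∀ c ∈ Set.Icc (0:ℝ) 1, deriv u c = 0 → |u c| < R := by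
    intro c hc hdc
    by_contra h
    push_neg at h
    have h1 := key (u c) h c hc
    have h2 := hbd c
    rw [hdc, zero_add] at h2
    linarith
  have hua : |u a| < R := hsmall a ha hda
  have hub : |u b| < R := hsmall b hb hdb
  have h1 : u t ≤ M := by
    have := hglobmax t
    have h2 : u a ≤ |u a| := le_abs_self _
    have h3 : R ≤ max R 1 := le_max_left _ _
    linarith
  have h2 : -M ≤ u t := by
    have := hglobmin t
    have h2 : -|u b| ≤ u b := neg_abs_le _
    have h3 : R ≤ max R 1 := le_max_left _ _
    linarith
  exact abs_le.mpr ⟨h2, h1⟩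
end

section
/- Let q : ℝ → ℝ be continuous and 1-periodic and let m ∈ ℝ. Then there exists a unique pair (α, ω) where α ∈ ℝ and ω : ℝ → ℝ is continuously differentiable and 1-periodic, such that ∫₀¹ ω(t) dt = m and ω'(t) + q(t)·ω(t) = α for all t. Moreover, if m = 1 then ω(t) > 0 for all t. -/
namespace Stmt5Aux

variable (q : ℝ → ℝ)

noncomputable def Q (t : ℝ) : ℝ := ∫ s in (0:ℝ)..t, q s
noncomputable def E (t : ℝ) : ℝ := Real.exp (Q q t)
noncomputable def P (t : ℝ) : ℝ := ∫ s in (0:ℝ)..t, E q s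

variable {q} (hq : Continuous q)
include hq

theorem hQd (t : ℝ) : HasDerivAt (Q q) (q t) t :=
  (hq.integral_hasStrictDerivAt 0 t).hasDerivAt

theorem hQcont : Continuous (Q q) := by
  have h : Differentiable ℝ (Q q) := fun t => (hQd hq t).differentiableAt
  exact h.continuous

theorem hEcont : Continuous (E q) := Real.continuous_exp.comp (hQcont hq)

theorem hEpos (t : ℝ) : 0 < E q t := Real.exp_pos _

theorem hPd (t : ℝ) : HasDerivAt (P q) (E q t) t :=
  ((hEcont hq).integral_hasStrictDerivAt 0 t).hasDerivAt

theorem hQ0 : Q q 0 = 0 := intervalIntegral.integral_same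
theorem hE0 : E q 0 = 1 := by rw [E, hQ0 hq, Real.exp_zero]
theorem hP0 : P q 0 = 0 := intervalIntegral.integral_same

theorem hEmul (t : ℝ) : Real.exp (-(Q q t)) * E q t = 1 := by
  rw [E, ← Real.exp_add, neg_add_cancel, Real.exp_zero]

/-- Key formula: any C¹ solution of ω' + qω = α satisfies E·ω = ω 0 + α·P. -/
theorem key {ω : ℝ → ℝ} {α : ℝ} (hω : ContDiff ℝ 1 ω)
    (heq : ∀ t, deriv ω t + q t * ω t = α) (t : ℝ) :
    E q t * ω t = ω 0 + α * P q t := by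
  have hωd : ∀ s, HasDerivAt ω (deriv ω s) s := fun s =>
    ((hω.differentiable one_ne_zero) s).hasDerivAt
  set g : ℝ → ℝ := fun s => E q s * ω s - α * P q s with hg
  have hgd : ∀ s, HasDerivAt g 0 s := by
    intro s
    have h1 : HasDerivAt (E q) (E q s * q s) s := (hQd hq s).exp
    have h2 := ((h1.mul (hωd s)).sub ((hPd hq s).const_mul α))
    refine h2.congr_deriv ?_
    have h3 : deriv ω s = α - q s * ω s := by linarith [heq s]
    rw [h3]; ring
  have hconst : ∀ s, g s = g 0 := by
    intro s
    apply is_const_of_deriv_eq_zero (fun x => (hgd x).differentiableAt)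
    intro x; exact (hgd x).deriv
  have := hconst t
  simp only [hg, hE0 hq, hP0 hq, one_mul, mul_zero, sub_zero] at this
  linarith

end Stmt5Aux

open Stmt5Aux

/-- **Lemma 1.5**. For continuous 1-periodic `q` and `m ∈ ℝ` there is a unique
pair `(α, ω)` with `ω` a `C¹` 1-periodic function of mean `m` satisfying
`ω' + q·ω = α`; moreover for `m = 1` the solution `ω` is strictly positive. -/
theorem stmt5 (q : ℝ → ℝ) (hq : Continuous q) (hqper : Periodic1 q) (m : ℝ) :
    (∃! p : ℝ × (ℝ → ℝ),
      ContDiff ℝ 1 p.2 ∧ Periodic1 p.2 ∧ (∫ t in (0:ℝ)..1, p.2 t) = m ∧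
      ∀ t, deriv p.2 t + q t * p.2 t = p.1) ∧
    (m = 1 → ∀ (α : ℝ) (ω : ℝ → ℝ),
      ContDiff ℝ 1 ω → Periodic1 ω → (∫ t in (0:ℝ)..1, ω t) = m →
      (∀ t, deriv ω t + q t * ω t = α) → ∀ t, 0 < ω t) := by
  -- basic quantities
  have hI : 0 < P q 1 :=
    intervalIntegral.intervalIntegral_pos_of_pos
      ((hEcont hq).intervalIntegrable 0 1) (hEpos hq) one_pos
  set α₀ : ℝ := (E q 1 - 1) / P q 1 with hα₀
  set ω₀ : ℝ → ℝ := fun t => Real.exp (-(Q q t)) * (1 + α₀ * P q t) with hω₀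
  -- derivative of ω₀
  have hω₀d : ∀ t, HasDerivAt ω₀ (α₀ - q t * ω₀ t) t := by
    intro t
    have h1 : HasDerivAt (fun t => Real.exp (-(Q q t))) (Real.exp (-(Q q t)) * (-(q t))) t :=
      (hQd hq t).neg.exp
    have h2 := h1.mul (((hPd hq t).const_mul α₀).const_add 1)
    refine h2.congr_deriv ?_
    have h3 := hEmul hq t
    show _ = α₀ - q t * (Real.exp (-(Q q t)) * (1 + α₀ * P q t))
    linear_combination α₀ * h3
  have hω₀diff : Differentiable ℝ ω₀ := fun t => (hω₀d t).differentiableAt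
  have hω₀deriv : ∀ t, deriv ω₀ t = α₀ - q t * ω₀ t := fun t => (hω₀d t).deriv
  have hω₀cd : ContDiff ℝ 1 ω₀ := by
    rw [contDiff_one_iff_deriv]
    refine ⟨hω₀diff, ?_⟩
    have : deriv ω₀ = fun t => α₀ - q t * ω₀ t := funext hω₀deriv
    rw [this]
    exact continuous_const.sub (hq.mul hω₀diff.continuous)
  have hω₀eq : ∀ t, deriv ω₀ t + q t * ω₀ t = α₀ := by
    intro t; rw [hω₀deriv t]; ring
  -- periodicity lemmas
  have hQadd : ∀ t, Q q (t + 1) = Q q 1 + Q q t := by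
    intro t
    have h1 : (∫ s in (0:ℝ)..1, q s) + ∫ s in (1:ℝ)..(t+1), q s = ∫ s in (0:ℝ)..(t+1), q s :=
      intervalIntegral.integral_add_adjacent_intervals
        (hq.intervalIntegrable _ _) (hq.intervalIntegrable _ _)
    have h2 : (∫ s in (1:ℝ)..(t+1), q s) = ∫ s in (0:ℝ)..t, q s := by
      have hqper' : ∀ s, q (s + 1) = q s := hqper
      have h3 := intervalIntegral.integral_comp_add_right (a := (0:ℝ)) (b := t) (f := q) 1
      simp only [hqper', zero_add] at h3
      exact h3.symm
    rw [Q, Q, Q, ← h1, h2]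
  have hEadd : ∀ t, E q (t + 1) = E q 1 * E q t := by
    intro t; rw [E, hQadd t, Real.exp_add]; rfl
  have hPadd : ∀ t, P q (t + 1) = P q 1 + E q 1 * P q t := by
    intro t
    have h1 : (∫ s in (0:ℝ)..1, E q s) + ∫ s in (1:ℝ)..(t+1), E q s
        = ∫ s in (0:ℝ)..(t+1), E q s :=
      intervalIntegral.integral_add_adjacent_intervals
        ((hEcont hq).intervalIntegrable _ _) ((hEcont hq).intervalIntegrable _ _)
    have h2 : (∫ s in (1:ℝ)..(t+1), E q s) = ∫ s in (0:ℝ)..t, E q 1 * E q s := by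
      have h3 := intervalIntegral.integral_comp_add_right (a := (0:ℝ)) (b := t) (f := E q) 1
      simp only [hEadd, zero_add] at h3
      exact h3.symm
    rw [P, P, P, ← h1, h2, intervalIntegral.integral_const_mul]
  have hω₀per : Periodic1 ω₀ := by
    intro t
    have h1 : 1 + α₀ * P q 1 = E q 1 := by rw [hα₀, div_mul_cancel₀ _ hI.ne']; ring
    have h2 := hEmul hq 1
    simp only [hω₀, hQadd t, hPadd t, neg_add, Real.exp_add]
    linear_combination (Real.exp (-Q q t) * Real.exp (-Q q 1)) * h1 +
      (Real.exp (-Q q t) * (1 + α₀ * P q t)) * h2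
  -- positivity of ω₀
  have hω₀pos : ∀ t, 0 < ω₀ t := by
    have hbase : ∀ t, 0 ≤ t → t ≤ 1 → 0 < ω₀ t := by
      intro t ht0 ht1
      have hP0t : 0 ≤ P q t :=
        intervalIntegral.integral_nonneg ht0 (fun x _ => (hEpos hq x).le)
      have hPt1 : P q t ≤ P q 1 := by
        have h1 : (∫ s in (0:ℝ)..t, E q s) + ∫ s in t..(1:ℝ), E q s = ∫ s in (0:ℝ)..1, E q s :=
          intervalIntegral.integral_add_adjacent_intervals
            ((hEcont hq).intervalIntegrable _ _) ((hEcont hq).intervalIntegrable _ _)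
        have h2 : 0 ≤ ∫ s in t..(1:ℝ), E q s :=
          intervalIntegral.integral_nonneg ht1 (fun x _ => (hEpos hq x).le)
        rw [P, P, ← h1]; linarith
      have hfac : 0 < 1 + α₀ * P q t := by
        rcases le_or_gt 0 α₀ with h | h
        · nlinarith
        · have h1 : 1 + α₀ * P q 1 = E q 1 := by rw [hα₀, div_mul_cancel₀ _ hI.ne']; ring
          nlinarith [hEpos hq 1, mul_le_mul_of_nonpos_left hPt1 h.le]
      exact mul_pos (Real.exp_pos _) hfac
    intro t
    have hper' : Function.Periodic ω₀ 1 := hω₀per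
    have := hper'.sub_int_mul_eq (x := t) ⌊t⌋
    rw [mul_one] at this
    rw [← this]
    exact hbase _ (by linarith [Int.floor_le t]) (by linarith [Int.lt_floor_add_one t])
  -- mean of ω₀
  set M : ℝ := ∫ t in (0:ℝ)..1, ω₀ t with hM
  have hMpos : 0 < M :=
    intervalIntegral.intervalIntegral_pos_of_pos
      (hω₀diff.continuous.intervalIntegrable 0 1) hω₀pos one_pos
  set c : ℝ := m / M with hc
  set p₀ : ℝ × (ℝ → ℝ) := (c * α₀, fun t => c * ω₀ t) with hp₀
  -- p₀ satisfies the conditions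
  have hp₀prop : ContDiff ℝ 1 p₀.2 ∧ Periodic1 p₀.2 ∧ (∫ t in (0:ℝ)..1, p₀.2 t) = m ∧
      ∀ t, deriv p₀.2 t + q t * p₀.2 t = p₀.1 := by
    refine ⟨contDiff_const.mul hω₀cd, fun t => by simp [hp₀, hω₀per t], ?_, ?_⟩
    · simp only [hp₀, intervalIntegral.integral_const_mul, ← hM, hc]
      field_simp
    · intro t
      have hd : HasDerivAt (fun t => c * ω₀ t) (c * (α₀ - q t * ω₀ t)) t :=
        (hω₀d t).const_mul c
      simp only [hp₀, hd.deriv]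
      ring
  -- uniqueness: any solution equals p₀
  have huniq : ∀ p : ℝ × (ℝ → ℝ),
      (ContDiff ℝ 1 p.2 ∧ Periodic1 p.2 ∧ (∫ t in (0:ℝ)..1, p.2 t) = m ∧
        ∀ t, deriv p.2 t + q t * p.2 t = p.1) → p = p₀ := by
    rintro ⟨α, ω⟩ ⟨hcd, hper, hmean, heq⟩
    dsimp only at hcd hper hmean heq ⊢
    have hkey := key hq hcd heq
    have hω1 : ω 1 = ω 0 := by have := hper 0; rwa [zero_add] at this
    have hα : α = ω 0 * α₀ := by
      have h1 := hkey 1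
      rw [hω1] at h1
      rw [hα₀]
      field_simp
      linear_combination -h1
    have hωeq : ∀ t, ω t = ω 0 * ω₀ t := by
      intro t
      have h1 := hkey t
      have h2 := hEmul hq t
      simp only [hω₀]
      linear_combination (Real.exp (-Q q t)) * h1 - ω t * h2 +
        (Real.exp (-Q q t) * P q t) * hα
    have hω0 : ω 0 = c := by
      have : (∫ t in (0:ℝ)..1, ω t) = ω 0 * M := by
        rw [hM, ← intervalIntegral.integral_const_mul]
        exact intervalIntegral.integral_congr (fun t _ => hωeq t)
      rw [this] at hmean
      rw [hc, ← hmean]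
      field_simp
    refine Prod.ext ?_ ?_
    · simp only [hp₀]; rw [hα, hω0]
    · simp only [hp₀]; funext t; rw [hωeq t, hω0]
  refine ⟨⟨p₀, hp₀prop, huniq⟩, ?_⟩
  intro hm α ω hcd hper hmean heq t
  have := huniq (α, ω) ⟨hcd, hper, hmean, heq⟩
  have hω : ω = fun t => c * ω₀ t := congrArg Prod.snd this
  rw [hω]
  have hcpos : 0 < c := by rw [hc, hm]; positivity
  exact mul_pos hcpos (hω₀pos t)
end

section
/- Let q : ℝ → ℝ be continuous and 1-periodic, set Q = ∫₀¹ q(s) ds, and let w(t) = exp(Q·t − ∫₀ᵗ q(s) ds). Let α = α(q) be the unique real number for which the equation ω' + q·ω = α admits a continuously differentiable 1-periodic solution of mean 1. Then ∫₀¹ q(t)·w(t) dt = Q · ∫₀¹ w(t) dt, and there exist strictly positive real numbers P₁, P₂ (depending on q) such that ∫₀¹ q(t)·w(t) dt = P₁·Q and α = P₂·Q. In particular, the three quantities Q, ∫₀¹ q·w, and α have the same sign, and one of them vanishes if and only if all do. -/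
/-- **Lemma 1.6**. With `q` continuous 1-periodic, `Q = ∫₀¹ q`,
`w t = exp (Q t − ∫₀ᵗ q)` and `α` the unique real number for which
`ω' + q ω = α` has a `C¹` 1-periodic solution of mean 1, we have
`∫₀¹ q w = Q ∫₀¹ w` and both `∫₀¹ q w` and `α` are strictly positive
multiples of `Q`. -/
theorem stmt6 (q : ℝ → ℝ) (hq : Continuous q) (hqper : Periodic1 q)
    (Q : ℝ) (hQ : Q = ∫ s in (0:ℝ)..1, q s)
    (w : ℝ → ℝ)
    (hw : ∀ t, w t = Real.exp (Q * t - ∫ s in (0:ℝ)..t, q s))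
    (α : ℝ)
    (hα : ∃ ω : ℝ → ℝ, ContDiff ℝ 1 ω ∧ Periodic1 ω ∧
      (∫ t in (0:ℝ)..1, ω t) = 1 ∧ ∀ t, deriv ω t + q t * ω t = α) :
    (∫ t in (0:ℝ)..1, q t * w t) = Q * ∫ t in (0:ℝ)..1, w t ∧
    (∃ P₁ : ℝ, 0 < P₁ ∧ (∫ t in (0:ℝ)..1, q t * w t) = P₁ * Q) ∧
    (∃ P₂ : ℝ, 0 < P₂ ∧ α = P₂ * Q) := by
  obtain ⟨ω, hω, hωper, hωmean, hωode⟩ := hα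
  set F : ℝ → ℝ := (fun t => ∫ s in (0:ℝ)..t, q s) with hFdef
  have hFderiv : ∀ t, HasDerivAt F (q t) t := fun t =>
    intervalIntegral.integral_hasDerivAt_right (hq.intervalIntegrable _ _)
      (hq.stronglyMeasurableAtFilter _ _) hq.continuousAt
  have hFcont : Continuous F := by
    have : Differentiable ℝ F := fun t => (hFderiv t).differentiableAt
    exact this.continuous
  have hF0 : F 0 = 0 := intervalIntegral.integral_same
  have hF1 : F 1 = Q := hQ.symm
  have hwcont : Continuous w := by
    have : Continuous fun t => Real.exp (Q * t - F t) :=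
      (Real.continuous_exp.comp ((continuous_const.mul continuous_id).sub hFcont))
    exact this.congr fun t => (hw t).symm
  have hwpos : ∀ t, 0 < w t := fun t => by rw [hw]; exact Real.exp_pos _
  have hwderiv : ∀ t, HasDerivAt w ((Q - q t) * w t) t := by
    intro t
    have h1 : HasDerivAt (fun t => Q * t - F t) (Q - q t) t := by
      exact (((hasDerivAt_id t).const_mul Q).sub (hFderiv t)).congr_deriv (by ring)
    have h2 := h1.exp
    have : HasDerivAt (fun t => Real.exp (Q * t - F t))
        (Real.exp (Q * t - F t) * (Q - q t)) t := h2
    rw [hw t, mul_comm]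
    exact this.congr_of_eventuallyEq (Filter.Eventually.of_forall fun s => (hw s))
  -- Part 1
  have hw0 : w 0 = 1 := by rw [hw]; simp [hF0]
  have hw1 : w 1 = 1 := by rw [hw, ← hQ]; simp
  have hint1 : (∫ t in (0:ℝ)..1, (Q - q t) * w t) = 0 := by
    rw [intervalIntegral.integral_eq_sub_of_hasDerivAt
      (fun t _ => hwderiv t)
      (((continuous_const.sub hq).mul hwcont).intervalIntegrable _ _), hw1, hw0, sub_self]
  have hiqw : IntervalIntegrable (fun t => q t * w t) MeasureTheory.volume 0 1 :=
    (hq.mul hwcont).intervalIntegrable _ _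
  have hiw : IntervalIntegrable w MeasureTheory.volume 0 1 := hwcont.intervalIntegrable _ _
  have part1 : (∫ t in (0:ℝ)..1, q t * w t) = Q * ∫ t in (0:ℝ)..1, w t := by
    have expand : (∫ t in (0:ℝ)..1, (Q - q t) * w t)
        = Q * (∫ t in (0:ℝ)..1, w t) - ∫ t in (0:ℝ)..1, q t * w t := by
      rw [← intervalIntegral.integral_const_mul, ← intervalIntegral.integral_sub (f := fun t => Q * w t)
        ((continuous_const.mul hwcont).intervalIntegrable _ _) hiqw]
      congr 1; ext t; ring
    linarith [hint1, expand]
  have hIw : 0 < ∫ t in (0:ℝ)..1, w t :=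
    intervalIntegral.intervalIntegral_pos_of_pos hiw hwpos one_pos
  refine ⟨part1, ⟨∫ t in (0:ℝ)..1, w t, hIw, by rw [part1, mul_comm]⟩, ?_⟩
  -- Part 3
  set E : ℝ → ℝ := fun t => Real.exp (F t) with hEdef
  have hEcont : Continuous E := Real.continuous_exp.comp hFcont
  have hEpos : ∀ t, 0 < E t := fun t => Real.exp_pos _
  set G : ℝ → ℝ := (fun t => ∫ s in (0:ℝ)..t, E s) with hGdef
  have hGderiv : ∀ t, HasDerivAt G (E t) t := fun t =>
    intervalIntegral.integral_hasDerivAt_right (hEcont.intervalIntegrable _ _)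
      (hEcont.stronglyMeasurableAtFilter _ _) hEcont.continuousAt
  have hG0 : G 0 = 0 := intervalIntegral.integral_same
  have hωdiff : Differentiable ℝ ω := hω.differentiable one_ne_zero
  set g : ℝ → ℝ := fun t => ω t * E t - α * G t with hgdef
  have hgderiv : ∀ t, HasDerivAt g 0 t := by
    intro t
    have h1 : HasDerivAt (fun t => ω t * E t)
        (deriv ω t * E t + ω t * (E t * q t)) t :=
      (hωdiff t).hasDerivAt.mul ((hFderiv t).exp)
    have h2 : HasDerivAt g (deriv ω t * E t + ω t * (E t * q t) - α * E t) t :=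
      h1.sub ((hGderiv t).const_mul α)
    have key : deriv ω t * E t + ω t * (E t * q t) - α * E t = 0 := by
      have hd : deriv ω t = α - q t * ω t := by linarith [hωode t]
      rw [hd]; ring
    rwa [key] at h2
  have hgconst : ∀ t, g t = g 0 := by
    intro t
    exact is_const_of_deriv_eq_zero (fun s => (hgderiv s).differentiableAt)
      (fun s => (hgderiv s).deriv) t 0
  have hkey : ∀ t, ω t * E t = ω 0 + α * G t := by
    intro t
    have h := hgconst t
    simp only [hgdef, hEdef, hG0, hF0, Real.exp_zero, mul_zero, mul_one, sub_zero] at h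
    simp only [hEdef]
    linarith
  -- G monotone bounds on [0,1]
  have hGnonneg : ∀ t ∈ Set.Icc (0:ℝ) 1, 0 ≤ G t := by
    intro t ht
    exact intervalIntegral.integral_nonneg ht.1 (fun s _ => (hEpos s).le)
  have hGle : ∀ t ∈ Set.Icc (0:ℝ) 1, G t ≤ G 1 := by
    intro t ht
    have i1 : IntervalIntegrable E MeasureTheory.volume 0 t := hEcont.intervalIntegrable _ _
    have i2 : IntervalIntegrable E MeasureTheory.volume t 1 := hEcont.intervalIntegrable _ _
    have hadd := intervalIntegral.integral_add_adjacent_intervals i1 i2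
    have h2 : 0 ≤ ∫ s in t..1, E s :=
      intervalIntegral.integral_nonneg ht.2 (fun s _ => (hEpos s).le)
    have e1 : G t = ∫ s in (0:ℝ)..t, E s := rfl
    have e2 : G 1 = ∫ s in (0:ℝ)..1, E s := rfl
    linarith
  have hω01 : ω 1 = ω 0 := by have := hωper 0; simpa using this
  have hbal : ω 0 * Real.exp Q - ω 0 = α * G 1 := by
    have := hkey 1
    rw [hω01, hEdef] at this
    simp only at this
    rw [hF1] at this
    linarith
  have hG1pos : 0 < G 1 :=
    intervalIntegral.intervalIntegral_pos_of_pos (hEcont.intervalIntegrable _ _) hEpos one_pos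
  -- ω 0 > 0
  have hω0pos : 0 < ω 0 := by
    by_contra h
    push_neg at h
    have hωnonpos : ∀ t ∈ Set.Icc (0:ℝ) 1, ω t ≤ 0 := by
      intro t ht
      have hE := hEpos t
      have hkt := hkey t
      have hα0 : ω 0 + α * G t ≤ 0 := by
        rcases le_or_gt 0 α with hα | hα
        · have : α * G t ≤ α * G 1 := mul_le_mul_of_nonneg_left (hGle t ht) hα
          have h2 : ω 0 + α * G 1 = ω 0 * Real.exp Q := by linarith [hbal]
          have h3 : ω 0 * Real.exp Q ≤ 0 :=
            mul_nonpos_of_nonpos_of_nonneg h (Real.exp_pos Q).le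
          linarith
        · have : α * G t ≤ 0 := mul_nonpos_of_nonpos_of_nonneg hα.le (hGnonneg t ht)
          linarith
      nlinarith [hkt, hE]
    have : (∫ t in (0:ℝ)..1, ω t) ≤ ∫ t in (0:ℝ)..1, (0:ℝ) := by
      apply intervalIntegral.integral_mono_on zero_le_one
        (hωdiff.continuous.intervalIntegrable _ _)
        (continuous_const.intervalIntegrable _ _) hωnonpos
    simp at this
    rw [hωmean] at this
    linarith
  rcases eq_or_ne Q 0 with hQ0 | hQ0
  · refine ⟨1, one_pos, ?_⟩
    have : α * G 1 = 0 := by rw [← hbal, hQ0]; simp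
    have hα0 : α = 0 := by
      rcases mul_eq_zero.mp this with h | h
      · exact h
      · exact absurd h hG1pos.ne'
    rw [hα0, hQ0]; ring
  · refine ⟨α / Q, ?_, (div_mul_cancel₀ α hQ0).symm⟩
    have hαval : α = ω 0 * (Real.exp Q - 1) / G 1 := by
      field_simp
      linarith [hbal]
    rcases lt_or_gt_of_ne hQ0 with hQneg | hQpos
    · have hexp : Real.exp Q < 1 := by
        rw [← Real.exp_zero]; exact Real.exp_lt_exp.mpr hQneg
      have hαneg : α < 0 := by
        rw [hαval]
        apply div_neg_of_neg_of_pos _ hG1pos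
        nlinarith
      exact div_pos_of_neg_of_neg hαneg hQneg
    · have hexp : 1 < Real.exp Q := by
        rw [← Real.exp_zero]; exact Real.exp_lt_exp.mpr hQpos
      have hαpos : 0 < α := by
        rw [hαval]
        apply div_pos _ hG1pos
        nlinarith
      exact div_pos hαpos hQpos
end

section
/- Let f : ℝ × ℝ → ℝ be a nonlinearity, v : ℝ → ℝ continuous and 1-periodic, and u a periodic solution of u' + f(t,u) = v. Let J be an open interval containing u(0) such that for every c ∈ J the (unique) solution of the initial value problem y'(t) + f(t,y(t)) = v(t), y(0) = c, is defined on [0,1], and define the return map ρ : J → ℝ by ρ(c) = y(1). Then ρ(u(0)) = u(0), the map ρ is differentiable at u(0), and ρ'(u(0)) = exp(−∫₀¹ D₂f(t,u(t)) dt) > 0. In particular ρ'(u(0)) = 1 if and only if ∫₀¹ D₂f(t,u(t)) dt = 0, i.e. if and only if u is a critical point of the operator F(u) = u' + f(t,u). -/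
open Set Function intervalIntegral
open scoped Interval

private lemma d2_hasDerivAt (f : ℝ → ℝ → ℝ) (hf : ContDiff ℝ (⊤:ℕ∞) (uncurry f)) (t x : ℝ) :
    HasDerivAt (f t) (deriv (f t) x) x := by
  have h1 : HasFDerivAt (uncurry f) (fderiv ℝ (uncurry f) (t, x)) (t, x) :=
    (hf.differentiable (by simp)).differentiableAt.hasFDerivAt
  have h2 : HasDerivAt (fun x : ℝ => ((t : ℝ), x)) ((0 : ℝ), (1 : ℝ)) x :=
    (hasDerivAt_const x t).prodMk (hasDerivAt_id x)
  have h3 := h1.comp_hasDerivAt x h2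
  exact h3.deriv ▸ h3

private lemma d2_cont (f : ℝ → ℝ → ℝ) (hf : ContDiff ℝ (⊤:ℕ∞) (uncurry f)) :
    Continuous (fun p : ℝ × ℝ => deriv (f p.1) p.2) := by
  have : (fun p : ℝ × ℝ => deriv (f p.1) p.2)
      = fun p : ℝ × ℝ => (fderiv ℝ (uncurry f) p) ((0:ℝ), (1:ℝ)) := by
    funext p
    have h1 : HasFDerivAt (uncurry f) (fderiv ℝ (uncurry f) (p.1, p.2)) (p.1, p.2) :=
      (hf.differentiable (by simp)).differentiableAt.hasFDerivAt
    have h2 : HasDerivAt (fun x : ℝ => (p.1, x)) ((0 : ℝ), (1 : ℝ)) p.2 :=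
      (hasDerivAt_const p.2 p.1).prodMk (hasDerivAt_id p.2)
    exact (h1.comp_hasDerivAt p.2 h2).deriv
  rw [this]
  exact (hf.continuous_fderiv (by simp)).clm_apply continuous_const

private lemma hadamard (f : ℝ → ℝ → ℝ) (hf : ContDiff ℝ (⊤:ℕ∞) (uncurry f)) (t a b : ℝ) :
    f t b - f t a = (b - a) * ∫ θ in (0:ℝ)..1, deriv (f t) (a + θ * (b - a)) := by
  have key : ∀ θ ∈ uIcc (0:ℝ) 1,
      HasDerivAt (fun θ : ℝ => f t (a + θ * (b - a)))
        (deriv (f t) (a + θ * (b - a)) * (b - a)) θ := by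
    intro θ _
    have h2 : HasDerivAt (fun θ : ℝ => a + θ * (b - a)) (b - a) θ := by
      simpa using ((hasDerivAt_id θ).mul_const (b - a)).const_add a
    exact (d2_hasDerivAt f hf t _).comp θ h2
  have hcont : Continuous fun θ : ℝ => deriv (f t) (a + θ * (b - a)) * (b - a) :=
    (((d2_cont f hf).comp (continuous_const.prodMk (by fun_prop))).mul continuous_const)
  have := intervalIntegral.integral_eq_sub_of_hasDerivAt key (hcont.intervalIntegrable _ _)
  rw [intervalIntegral.integral_mul_const] at this
  simp only [one_mul, zero_mul, add_zero, add_sub_cancel] at this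
  rw [← this]; ring

private noncomputable def proj01 (t : ℝ) : ℝ := max 0 (min 1 t)

private lemma proj01_mem (t : ℝ) : proj01 t ∈ Icc (0:ℝ) 1 :=
  ⟨le_max_left _ _, by simp only [proj01, max_le_iff]; exact ⟨zero_le_one, min_le_left _ _⟩⟩

private lemma proj01_eq {t : ℝ} (ht : t ∈ Icc (0:ℝ) 1) : proj01 t = t := by
  simp only [proj01, min_eq_right ht.2, max_eq_right ht.1]

private lemma proj01_continuous : Continuous proj01 := by unfold proj01; fun_prop

private noncomputable def gA (f : ℝ → ℝ → ℝ) (u w : ℝ → ℝ) (t : ℝ) : ℝ :=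
  ∫ θ in (0:ℝ)..1, deriv (f t) (u (proj01 t) + θ * (w (proj01 t) - u (proj01 t)))

private lemma gA_cont (f : ℝ → ℝ → ℝ) (hf : ContDiff ℝ (⊤:ℕ∞) (uncurry f)) (u w : ℝ → ℝ)
    (hu : Continuous u) (hw : ContinuousOn w (Icc (0:ℝ) 1)) :
    Continuous (gA f u w) := by
  have cw : Continuous (fun t => w (proj01 t)) :=
    hw.comp_continuous proj01_continuous proj01_mem
  have cu : Continuous (fun t => u (proj01 t)) := hu.comp proj01_continuous
  have : Continuous (uncurry fun t θ : ℝ =>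
      deriv (f t) (u (proj01 t) + θ * (w (proj01 t) - u (proj01 t)))) := by
    apply Continuous.comp (d2_cont f hf) (f := fun p : ℝ × ℝ =>
      ((p.1 : ℝ), u (proj01 p.1) + p.2 * (w (proj01 p.1) - u (proj01 p.1))))
    exact continuous_fst.prodMk
      (((cu.comp continuous_fst)).add
        (continuous_snd.mul ((cw.comp continuous_fst).sub (cu.comp continuous_fst))))
  exact continuous_parametric_intervalIntegral_of_continuous' this 0 1

/-- Integrating factor identity: the difference of two solutions is an explicit
exponential times its initial value. -/
private lemma lemA (f : ℝ → ℝ → ℝ) (hf : ContDiff ℝ (⊤:ℕ∞) (uncurry f))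
    (v : ℝ → ℝ) (u w : ℝ → ℝ) (hu : ContDiff ℝ 1 u)
    (husol : ∀ t, deriv u t + f t (u t) = v t)
    (hw : ∀ t ∈ Icc (0:ℝ) 1, HasDerivAt w (v t - f t (w t)) t)
    (T : ℝ) (hT : T ∈ Icc (0:ℝ) 1) :
    w T - u T = (w 0 - u 0) * Real.exp (-(∫ s in (0:ℝ)..T, gA f u w s)) := by
  have hu' : ∀ t, HasDerivAt u (v t - f t (u t)) t := by
    intro t
    have h := (hu.differentiable one_ne_zero t).hasDerivAt
    have : deriv u t = v t - f t (u t) := by linarith [husol t]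
    rwa [this] at h
  have hucont : Continuous u := hu.continuous
  have hwcont : ContinuousOn w (Icc (0:ℝ) 1) := fun t ht =>
    (hw t ht).continuousAt.continuousWithinAt
  have hg := gA_cont f hf u w hucont hwcont
  set g := gA f u w with hgdef
  set W : ℝ → ℝ := fun t => (w t - u t) * Real.exp (∫ s in (0:ℝ)..t, g s) with hWdef
  have hWcont : ContinuousOn W (Icc 0 T) := by
    apply ContinuousOn.mul
    · exact (hwcont.mono (Icc_subset_Icc le_rfl hT.2)).sub hucont.continuousOn
    · apply Continuous.continuousOn
      have : Continuous (fun t => ∫ s in (0:ℝ)..t, g s) :=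
        intervalIntegral.continuous_primitive (fun a b => hg.intervalIntegrable a b) 0
      exact this.rexp
  have hWderiv : ∀ x ∈ Ico (0:ℝ) T, HasDerivWithinAt W 0 (Ici x) x := by
    intro x hx
    have hx1 : x ∈ Icc (0:ℝ) 1 := ⟨hx.1, le_trans (le_of_lt hx.2) hT.2⟩
    have hz : HasDerivAt (fun t => w t - u t)
        ((v x - f x (w x)) - (v x - f x (u x))) x := (hw x hx1).sub (hu' x)
    have hI : HasDerivAt (fun t => ∫ s in (0:ℝ)..t, g s) (g x) x :=
      intervalIntegral.integral_hasDerivAt_right (hg.intervalIntegrable _ _)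
        (hg.stronglyMeasurableAtFilter _ _) hg.continuousAt
    have hE := hI.exp
    have hkey : f x (w x) - f x (u x) = (w x - u x) * g x := by
      have := hadamard f hf x (u x) (w x)
      rw [hgdef]
      unfold gA
      rw [proj01_eq hx1]
      linarith [this]
    have hprod := hz.mul hE
    have : ((v x - f x (w x)) - (v x - f x (u x))) * Real.exp (∫ s in (0:ℝ)..x, g s)
        + (w x - u x) * (Real.exp (∫ s in (0:ℝ)..x, g s) * g x) = 0 := by
      have h2 : (v x - f x (w x)) - (v x - f x (u x)) = -((w x - u x) * g x) := by
        rw [← hkey]; ring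
      rw [h2]; ring
    rw [this] at hprod
    exact hprod.hasDerivWithinAt
  have hconst := constant_of_has_deriv_right_zero hWcont hWderiv T
    (right_mem_Icc.mpr hT.1)
  have hW0 : W 0 = w 0 - u 0 := by
    simp [hWdef, intervalIntegral.integral_same]
  rw [hW0] at hconst
  have hne : Real.exp (∫ s in (0:ℝ)..T, g s) ≠ 0 := Real.exp_ne_zero _
  have : (w T - u T) * Real.exp (∫ s in (0:ℝ)..T, g s) = w 0 - u 0 := hconst
  rw [Real.exp_neg]
  field_simp
  linarith [this]

private lemma gA_bound (f : ℝ → ℝ → ℝ) (u w : ℝ → ℝ) (M : ℝ)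
    (hM : ∀ s ∈ Icc (0:ℝ) 1, ∀ x : ℝ, |x - u s| ≤ 1 → |deriv (f s) x| ≤ M)
    (s : ℝ) (hs : s ∈ Icc (0:ℝ) 1) (hZ : |w s - u s| ≤ 1) :
    |gA f u w s| ≤ M := by
  have h1 : ∀ θ ∈ Ι (0:ℝ) 1,
      ‖deriv (f s) (u (proj01 s) + θ * (w (proj01 s) - u (proj01 s)))‖ ≤ M := by
    intro θ hθ
    rw [Set.uIoc_of_le zero_le_one] at hθ
    rw [proj01_eq hs]
    apply hM s hs
    have : |u s + θ * (w s - u s) - u s| = |θ| * |w s - u s| := by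
      rw [add_sub_cancel_left, abs_mul]
    rw [this]
    calc |θ| * |w s - u s| ≤ 1 * 1 := by
          apply mul_le_mul _ hZ (abs_nonneg _) zero_le_one
          rw [abs_le]; exact ⟨by linarith [hθ.1], hθ.2⟩
      _ = 1 := one_mul 1
  have := intervalIntegral.norm_integral_le_of_norm_le_const h1
  simpa [gA] using this

/-- A priori bound: a solution starting close to `u` stays close on `[0,1]`. -/
private lemma lemB (f : ℝ → ℝ → ℝ) (hf : ContDiff ℝ (⊤:ℕ∞) (uncurry f))
    (v : ℝ → ℝ) (u w : ℝ → ℝ) (hu : ContDiff ℝ 1 u)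
    (husol : ∀ t, deriv u t + f t (u t) = v t)
    (hw : ∀ t ∈ Icc (0:ℝ) 1, HasDerivAt w (v t - f t (w t)) t)
    (M : ℝ) (hM0 : 0 ≤ M)
    (hM : ∀ s ∈ Icc (0:ℝ) 1, ∀ x : ℝ, |x - u s| ≤ 1 → |deriv (f s) x| ≤ M)
    (hsmall : |w 0 - u 0| < Real.exp (-M)) :
    ∀ t ∈ Icc (0:ℝ) 1, |w t - u t| ≤ |w 0 - u 0| * Real.exp M ∧ |w t - u t| ≤ 1 := by
  have hwcont : ContinuousOn w (Icc (0:ℝ) 1) := fun t ht =>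
    (hw t ht).continuousAt.continuousWithinAt
  set Z : ℝ → ℝ := fun t => w (proj01 t) - u (proj01 t) with hZdef
  have hZcont : Continuous Z :=
    (hwcont.comp_continuous proj01_continuous proj01_mem).sub
      (hu.continuous.comp proj01_continuous)
  have hZeq : ∀ t ∈ Icc (0:ℝ) 1, Z t = w t - u t := fun t ht => by
    simp only [hZdef, proj01_eq ht]
  have step1 : ∀ t ∈ Icc (0:ℝ) 1, (∀ s ∈ Icc (0:ℝ) t, |w s - u s| ≤ 1) →
      |w t - u t| ≤ |w 0 - u 0| * Real.exp M := by
    intro t ht hsmall1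
    have hUA := lemA f hf v u w hu husol hw t ht
    have hbound : |∫ s in (0:ℝ)..t, gA f u w s| ≤ M * t := by
      have h1 : ∀ s ∈ Ι (0:ℝ) t, ‖gA f u w s‖ ≤ M := by
        intro s hs
        rw [Set.uIoc_of_le ht.1] at hs
        have hs1 : s ∈ Icc (0:ℝ) 1 := ⟨le_of_lt hs.1, le_trans hs.2 ht.2⟩
        exact gA_bound f u w M hM s hs1 (hsmall1 s ⟨le_of_lt hs.1, hs.2⟩)
      have := intervalIntegral.norm_integral_le_of_norm_le_const h1
      rwa [show |t - 0| = t by rw [sub_zero]; exact abs_of_nonneg ht.1] at this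
    rw [hUA, abs_mul, Real.abs_exp]
    apply mul_le_mul_of_nonneg_left _ (abs_nonneg _)
    apply Real.exp_le_exp.mpr
    have : -(∫ s in (0:ℝ)..t, gA f u w s) ≤ M * t := by
      have := abs_le.mp hbound
      linarith [this.1]
    calc -(∫ s in (0:ℝ)..t, gA f u w s) ≤ M * t := this
      _ ≤ M * 1 := mul_le_mul_of_nonneg_left ht.2 hM0
      _ = M := mul_one M
  have hsmall' : |w 0 - u 0| < 1 := by
    calc |w 0 - u 0| < Real.exp (-M) := hsmall
      _ ≤ Real.exp 0 := Real.exp_le_exp.mpr (by linarith)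
      _ = 1 := Real.exp_zero
  have step2 : ∀ t ∈ Icc (0:ℝ) 1, |Z t| ≤ 1 := by
    by_contra hcon
    push_neg at hcon
    set A : Set ℝ := {t ∈ Icc (0:ℝ) 1 | 1 ≤ |Z t|} with hAdef
    have hAne : A.Nonempty := by
      obtain ⟨t, ht, h1⟩ := hcon
      exact ⟨t, ht, le_of_lt h1⟩
    have hAclosed : IsClosed A := by
      have : A = Icc (0:ℝ) 1 ∩ {t | 1 ≤ |Z t|} := by ext x; simp [hAdef, and_comm]
      rw [this]
      exact isClosed_Icc.inter (isClosed_le continuous_const hZcont.abs)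
    have hAbdd : BddBelow A := ⟨0, fun x hx => hx.1.1⟩
    set t₁ := sInf A with ht₁def
    have ht₁A : t₁ ∈ A := hAclosed.csInf_mem hAne hAbdd
    have ht₁Icc : t₁ ∈ Icc (0:ℝ) 1 := ht₁A.1
    have hZ0 : |Z 0| < 1 := by
      rw [hZeq 0 ⟨le_rfl, zero_le_one⟩]; exact hsmall'
    have ht₁pos : 0 < t₁ := by
      rcases lt_or_eq_of_le ht₁Icc.1 with h | h
      · exact h
      · exfalso; rw [← h] at ht₁A; linarith [ht₁A.2, hZ0]
    have hlt : ∀ s, 0 ≤ s → s < t₁ → |Z s| < 1 := by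
      intro s hs0 hst
      by_contra h
      push_neg at h
      have hsA : s ∈ A := ⟨⟨hs0, le_trans (le_of_lt hst) ht₁Icc.2⟩, h⟩
      linarith [csInf_le hAbdd hsA]
    have hZt₁le : |Z t₁| ≤ 1 := by
      have hmem : t₁ ∈ closure (Ico (0:ℝ) t₁) := by
        rw [closure_Ico (ne_of_lt ht₁pos)]
        exact ⟨ht₁Icc.1, le_rfl⟩
      have hsub : Ico (0:ℝ) t₁ ⊆ {s | |Z s| ≤ 1} := fun s hs =>
        le_of_lt (hlt s hs.1 hs.2)
      have : t₁ ∈ closure {s | |Z s| ≤ 1} := closure_mono hsub hmem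
      have hcl : IsClosed {s : ℝ | |Z s| ≤ 1} := isClosed_le hZcont.abs continuous_const
      exact hcl.closure_subset this
    have hfinal := step1 t₁ ht₁Icc (fun s hs => by
      rcases lt_or_eq_of_le hs.2 with h | h
      · rw [← hZeq s ⟨hs.1, le_trans (le_of_lt h) ht₁Icc.2⟩]
        exact le_of_lt (hlt s hs.1 h)
      · rw [← hZeq s ⟨hs.1, h ▸ ht₁Icc.2⟩, h]; exact hZt₁le)
    have : |w t₁ - u t₁| < 1 := by
      calc |w t₁ - u t₁| ≤ |w 0 - u 0| * Real.exp M := hfinal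
        _ < Real.exp (-M) * Real.exp M :=
            mul_lt_mul_of_pos_right hsmall (Real.exp_pos M)
        _ = 1 := by rw [← Real.exp_add]; simp
    rw [← hZeq t₁ ht₁Icc] at this
    linarith [ht₁A.2]
  intro t ht
  have h1 : |w t - u t| ≤ |w 0 - u 0| * Real.exp M :=
    step1 t ht (fun s hs => by
      have hs1 : s ∈ Icc (0:ℝ) 1 := ⟨hs.1, le_trans hs.2 ht.2⟩
      rw [← hZeq s hs1]; exact step2 s hs1)
  refine ⟨h1, ?_⟩
  rw [← hZeq t ht]; exact step2 t ht


/-- **Proposition 2.3, case k = 1** (return map). Let `u` be a periodic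
solution of `u' + f(t,u) = v`, let `J = (p,q)` be an open interval containing
`u 0` such that for each `c ∈ J` the solution `y c` of the initial value
problem `y' + f(t,y) = v`, `y 0 = c` is defined on `[0,1]`, and let
`ρ c = y c 1` be the return map. Then `ρ (u 0) = u 0`, `ρ` is differentiable
at `u 0` with derivative `exp (−∫₀¹ D₂f(t,u t) dt) > 0`, and this derivative
equals 1 exactly when `∫₀¹ D₂f(t,u t) dt = 0`, i.e. when `u` is a critical
point of `F(u) = u' + f(t,u)`. -/
theorem stmt7 (f : ℝ → ℝ → ℝ) (hf : Nonlinearity f)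
    (v : ℝ → ℝ) (hv : Continuous v) (hvper : Periodic1 v)
    (u : ℝ → ℝ) (hu : ContDiff ℝ 1 u) (huper : Periodic1 u)
    (husol : ∀ t, deriv u t + f t (u t) = v t)
    (p q : ℝ) (hpq : u 0 ∈ Set.Ioo p q)
    (y : ℝ → ℝ → ℝ)
    (hy : ∀ c ∈ Set.Ioo p q, y c 0 = c ∧
      ∀ t ∈ Set.Icc (0:ℝ) 1, HasDerivAt (y c) (v t - f t (y c t)) t)
    (ρ : ℝ → ℝ) (hρ : ∀ c, ρ c = y c 1) :
    ρ (u 0) = u 0 ∧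
    HasDerivAt ρ (Real.exp (-(∫ t in (0:ℝ)..1, deriv (f t) (u t)))) (u 0) ∧
    0 < Real.exp (-(∫ t in (0:ℝ)..1, deriv (f t) (u t))) ∧
    (Real.exp (-(∫ t in (0:ℝ)..1, deriv (f t) (u t))) = 1 ↔
      (∫ t in (0:ℝ)..1, deriv (f t) (u t)) = 0) := by
  obtain ⟨hfC, -⟩ := hf
  set c₀ := u 0 with hc₀def
  have hu1 : u 1 = u 0 := by simpa using huper 0
  set G₀ := ∫ t in (0:ℝ)..1, deriv (f t) (u t) with hG₀def
  set G : ℝ → ℝ := fun c => ∫ t in (0:ℝ)..1, gA f u (y c) t with hGdef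
  -- the slope formula
  have hslope : ∀ c ∈ Ioo p q, ρ c - c₀ = (c - c₀) * Real.exp (-(G c)) := by
    intro c hc
    obtain ⟨hc0, hcw⟩ := hy c hc
    have := lemA f hfC v u (y c) hu husol hcw 1 ⟨zero_le_one, le_rfl⟩
    rw [hc0, hu1, ← hρ c] at this
    rw [hGdef]
    exact this
  have hρc₀ : ρ c₀ = c₀ := by
    have := hslope c₀ hpq
    simp at this
    linarith [this]
  refine ⟨hρc₀, ?_, Real.exp_pos _, ?_⟩
  swap
  · rw [Real.exp_eq_one_iff, neg_eq_zero]
  -- the bound M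
  have hdc : Continuous (fun pp : ℝ × ℝ => deriv (f pp.1) pp.2) := d2_cont f hfC
  set K : Set (ℝ × ℝ) :=
    (fun q : ℝ × ℝ => (q.1, u q.1 + q.2)) '' (Icc 0 1 ×ˢ Icc (-1) 1) with hKdef
  have hKcomp : IsCompact K :=
    (isCompact_Icc.prod isCompact_Icc).image
      (continuous_fst.prodMk ((hu.continuous.comp continuous_fst).add continuous_snd))
  obtain ⟨C, hC⟩ := hKcomp.exists_bound_of_continuousOn hdc.continuousOn
  set M := max C 0 with hMdef
  have hM0 : (0:ℝ) ≤ M := le_max_right _ _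
  have hmemK : ∀ s ∈ Icc (0:ℝ) 1, ∀ x : ℝ, |x - u s| ≤ 1 → (s, x) ∈ K := by
    intro s hs x hx
    exact ⟨(s, x - u s), ⟨hs, abs_le.mp hx⟩, by simp⟩
  have hM : ∀ s ∈ Icc (0:ℝ) 1, ∀ x : ℝ, |x - u s| ≤ 1 → |deriv (f s) x| ≤ M := by
    intro s hs x hx
    exact le_trans (hC (s, x) (hmemK s hs x hx)) (le_max_left _ _)
  -- uniform continuity of the derivative on K
  have hUC := hKcomp.uniformContinuousOn_of_continuous hdc.continuousOn
  rw [Metric.uniformContinuousOn_iff] at hUC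
  -- limit of G
  have hGlim : Filter.Tendsto G (nhdsWithin c₀ (Ioo p q)) (nhds G₀) := by
    rw [Metric.tendsto_nhdsWithin_nhds]
    intro ε hε
    obtain ⟨δ₁, hδ₁, hδ₁'⟩ := hUC (ε / 2) (by linarith)
    refine ⟨min δ₁ 1 * Real.exp (-M) / 2, by positivity, ?_⟩
    intro c hc hdist
    obtain ⟨hc0, hcw⟩ := hy c hc
    rw [Real.dist_eq] at hdist
    have hsmall : |y c 0 - u 0| < Real.exp (-M) := by
      rw [hc0]
      calc |c - u 0| < min δ₁ 1 * Real.exp (-M) / 2 := hdist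
        _ ≤ 1 * Real.exp (-M) / 2 := by
            gcongr
            exact min_le_right _ _
        _ < Real.exp (-M) := by linarith [Real.exp_pos (-M)]
    have hB := lemB f hfC v u (y c) hu husol hcw M hM0 hM hsmall
    have hZsmall : ∀ t ∈ Icc (0:ℝ) 1, |y c t - u t| < min δ₁ 1 := by
      intro t ht
      calc |y c t - u t| ≤ |y c 0 - u 0| * Real.exp M := (hB t ht).1
        _ < min δ₁ 1 * Real.exp (-M) / 2 * Real.exp M := by
            apply mul_lt_mul_of_pos_right _ (Real.exp_pos M)
            rw [hc0]; exact hdist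
        _ = min δ₁ 1 / 2 := by
            rw [div_mul_eq_mul_div, mul_assoc, ← Real.exp_add]
            simp
        _ < min δ₁ 1 := by
            have : (0:ℝ) < min δ₁ 1 := lt_min hδ₁ one_pos
            linarith
    -- pointwise bound on the integrand difference
    have hpt : ∀ t ∈ Icc (0:ℝ) 1, |gA f u (y c) t - deriv (f t) (u t)| ≤ ε / 2 := by
      intro t ht
      have hproj : proj01 t = t := proj01_eq ht
      have hsplit : gA f u (y c) t - deriv (f t) (u t)
          = ∫ θ in (0:ℝ)..1,
              (deriv (f t) (u t + θ * (y c t - u t)) - deriv (f t) (u t)) := by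
        rw [gA, hproj]
        rw [intervalIntegral.integral_sub _ (intervalIntegrable_const)]
        · simp
        · apply Continuous.intervalIntegrable
          exact hdc.comp (continuous_const.prodMk (by fun_prop))
      rw [hsplit]
      have hb : ∀ θ ∈ Ι (0:ℝ) 1,
          ‖deriv (f t) (u t + θ * (y c t - u t)) - deriv (f t) (u t)‖ ≤ ε / 2 := by
        intro θ hθ
        rw [Set.uIoc_of_le zero_le_one] at hθ
        have hθ1 : |θ| ≤ 1 := by rw [abs_le]; exact ⟨by linarith [hθ.1], hθ.2⟩
        have habs : |θ * (y c t - u t)| ≤ |y c t - u t| := by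
          rw [abs_mul]
          calc |θ| * |y c t - u t| ≤ 1 * |y c t - u t| :=
                mul_le_mul_of_nonneg_right hθ1 (abs_nonneg _)
            _ = |y c t - u t| := one_mul _
        have hmem1 : (t, u t + θ * (y c t - u t)) ∈ K := by
          apply hmemK t ht
          rw [add_sub_cancel_left]
          exact le_trans habs (le_trans (hZsmall t ht).le (min_le_right _ _))
        have hmem2 : (t, u t) ∈ K := by
          apply hmemK t ht; simp
        have hdst : dist ((t, u t + θ * (y c t - u t)) : ℝ × ℝ) (t, u t) < δ₁ := by
          rw [Prod.dist_eq]
          simp only [dist_self]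
          rw [max_lt_iff]
          constructor
          · exact hδ₁
          · rw [Real.dist_eq, add_sub_cancel_left]
            exact lt_of_le_of_lt habs (lt_of_lt_of_le (hZsmall t ht) (min_le_left _ _))
        have := hδ₁' _ hmem1 _ hmem2 hdst
        rw [Real.dist_eq] at this
        exact this.le
      have := intervalIntegral.norm_integral_le_of_norm_le_const hb
      simpa using this
    -- conclude
    rw [Real.dist_eq, hGdef, hG₀def]
    have hgc : Continuous (gA f u (y c)) :=
      gA_cont f hfC u (y c) hu.continuous
        (fun t ht => (hcw t ht).continuousAt.continuousWithinAt)
    have hg0 : Continuous (fun t => deriv (f t) (u t)) :=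
      hdc.comp (continuous_id.prodMk hu.continuous)
    have hsub : (∫ t in (0:ℝ)..1, gA f u (y c) t) - ∫ t in (0:ℝ)..1, deriv (f t) (u t)
        = ∫ t in (0:ℝ)..1, (gA f u (y c) t - deriv (f t) (u t)) :=
      (intervalIntegral.integral_sub (hgc.intervalIntegrable _ _)
        (hg0.intervalIntegrable _ _)).symm
    rw [hsub]
    have hb2 : ∀ t ∈ Ι (0:ℝ) 1, ‖gA f u (y c) t - deriv (f t) (u t)‖ ≤ ε / 2 := by
      intro t ht
      rw [Set.uIoc_of_le zero_le_one] at ht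
      exact hpt t ⟨ht.1.le, ht.2⟩
    have := intervalIntegral.norm_integral_le_of_norm_le_const hb2
    simp only [sub_zero, abs_one, mul_one] at this
    calc |∫ t in (0:ℝ)..1, (gA f u (y c) t - deriv (f t) (u t))| ≤ ε / 2 := by
          simpa using this
      _ < ε := by linarith
  -- assemble the derivative
  rw [hasDerivAt_iff_tendsto_slope]
  have hmemIoo : Ioo p q ∈ nhds c₀ := isOpen_Ioo.mem_nhds hpq
  have hle : nhdsWithin c₀ {c₀}ᶜ ≤ nhdsWithin c₀ (Ioo p q) := by
    apply le_inf nhdsWithin_le_nhds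
    rw [Filter.le_principal_iff]
    exact mem_nhdsWithin_of_mem_nhds hmemIoo
  have h2 : Filter.Tendsto (fun c => Real.exp (-(G c))) (nhdsWithin c₀ {c₀}ᶜ)
      (nhds (Real.exp (-G₀))) :=
    (Real.continuous_exp.continuousAt.tendsto.comp (hGlim.neg)).mono_left hle
  apply h2.congr'
  have hev : Ioo p q ∈ nhdsWithin c₀ {c₀}ᶜ := mem_nhdsWithin_of_mem_nhds hmemIoo
  filter_upwards [hev, self_mem_nhdsWithin] with c hc hc'
  have hne : c - c₀ ≠ 0 := sub_ne_zero.mpr hc'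
  rw [slope_def_field, hρc₀]
  have := hslope c hc
  rw [this]
  field_simp
end

section
/- Let h : [0,1] → ℝ be continuously differentiable. Then there exists a unique real number A with A > max_{t∈[0,1]} h(t) such that ∫₀¹ dt / (A − h(t)) = 1. Moreover, the map A ↦ ∫₀¹ dt / (A − h(t)) is strictly decreasing on (max h, ∞), tends to 0 as A → ∞, and tends to +∞ as A decreases to max h. -/
open Filter Topology MeasureTheory Set intervalIntegral

private lemma aux_log_tendsto (L : ℝ) (hL : 0 < L) :
    Tendsto (fun ε : ℝ => ∫ s in (0:ℝ)..(1/2 : ℝ), (ε + L * s)⁻¹) (𝓝[>] (0:ℝ)) atTop := by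
  have heq : ∀ ε ∈ Set.Ioi (0:ℝ),
      (∫ s in (0:ℝ)..(1/2 : ℝ), (ε + L * s)⁻¹)
        = L⁻¹ * (Real.log (L * (1/2) + ε) - Real.log ε) := by
    intro ε hε
    have hε : (0:ℝ) < ε := hε
    have h1 : (∫ s in (0:ℝ)..(1/2 : ℝ), (ε + L * s)⁻¹)
        = ∫ s in (0:ℝ)..(1/2 : ℝ), (fun x : ℝ => x⁻¹) (L * s + ε) := by
      refine intervalIntegral.integral_congr fun s _ => ?_
      simp [add_comm]
    rw [h1, intervalIntegral.integral_comp_mul_add (fun x : ℝ => x⁻¹) hL.ne' ε,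
      mul_zero, zero_add, integral_inv (by
        refine Set.notMem_uIcc_of_lt hε ?_
        nlinarith)]
    rw [smul_eq_mul, Real.log_div (by nlinarith) hε.ne']
  have h2 : Tendsto (fun ε : ℝ => L⁻¹ * (Real.log (L * (1/2) + ε) - Real.log ε))
      (𝓝[>] (0:ℝ)) atTop := by
    apply Tendsto.const_mul_atTop (by positivity : (0:ℝ) < L⁻¹)
    have h3 : Tendsto (fun ε : ℝ => Real.log (L * (1/2) + ε)) (𝓝[>] (0:ℝ))
        (𝓝 (Real.log (L * (1/2) + 0))) :=
      (ContinuousAt.comp (Real.continuousAt_log (by positivity))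
        (continuous_add_left (L * (1/2))).continuousAt).continuousWithinAt.tendsto
    have h4 : Tendsto (fun ε : ℝ => -Real.log ε) (𝓝[>] (0:ℝ)) atTop :=
      tendsto_neg_atBot_atTop.comp Real.tendsto_log_nhdsGT_zero
    exact (h3.add_atTop h4).congr fun ε => by ring
  exact h2.congr' (eventuallyEq_of_mem self_mem_nhdsWithin fun ε hε => (heq ε hε).symm)

/-- **Key analytic claim in Lemma 3.1**. For `h : [0,1] → ℝ` continuously
differentiable and `M = max_{[0,1]} h`, there is a unique `A > M` with
`∫₀¹ dt/(A − h t) = 1`; moreover `A ↦ ∫₀¹ dt/(A − h t)` is strictly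
decreasing on `(M,∞)`, tends to `0` at `+∞` and to `+∞` as `A ↓ M`. -/
theorem stmt8 (h : ℝ → ℝ) (hh : ContDiffOn ℝ 1 h (Set.Icc 0 1))
    (M : ℝ) (hM : M = sSup (h '' Set.Icc (0:ℝ) 1)) :
    (∃! A : ℝ, M < A ∧ (∫ t in (0:ℝ)..1, 1 / (A - h t)) = 1) ∧
    StrictAntiOn (fun A : ℝ => ∫ t in (0:ℝ)..1, 1 / (A - h t)) (Set.Ioi M) ∧
    Tendsto (fun A : ℝ => ∫ t in (0:ℝ)..1, 1 / (A - h t)) atTop (𝓝 0) ∧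
    Tendsto (fun A : ℝ => ∫ t in (0:ℝ)..1, 1 / (A - h t))
      (𝓝[>] M) atTop := by
  have h01 : (0:ℝ) ≤ 1 := zero_le_one
  have hcont : ContinuousOn h (Set.Icc 0 1) := hh.continuousOn
  -- the max is attained
  obtain ⟨t₀, ht₀, ht₀max⟩ := isCompact_Icc.exists_isMaxOn (⟨0, by simp⟩ : (Set.Icc (0:ℝ) 1).Nonempty) hcont
  have hMt₀ : M = h t₀ := by
    rw [hM]
    refine le_antisymm (csSup_le (Set.Nonempty.image _ ⟨0, by simp⟩) ?_) (le_csSup ?_ ⟨t₀, ht₀, rfl⟩)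
    · rintro x ⟨t, ht, rfl⟩; exact ht₀max ht
    · exact (isCompact_Icc.image_of_continuousOn hcont).bddAbove
  have hleM : ∀ t ∈ Set.Icc (0:ℝ) 1, h t ≤ M := fun t ht => hMt₀ ▸ ht₀max ht
  have hpos : ∀ {A : ℝ}, M < A → ∀ t ∈ Set.Icc (0:ℝ) 1, 0 < A - h t :=
    fun {A} hA t ht => sub_pos.2 ((hleM t ht).trans_lt hA)
  have hcand : ∀ {A : ℝ}, M < A → ContinuousOn (fun t => 1 / (A - h t)) (Set.Icc 0 1) :=
    fun {A} hA => continuousOn_const.div (continuousOn_const.sub hcont)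
      (fun t ht => (hpos hA t ht).ne')
  have hint : ∀ {A : ℝ}, M < A →
      IntervalIntegrable (fun t => 1 / (A - h t)) MeasureSpace.volume 0 1 :=
    fun {A} hA => (hcand hA).intervalIntegrable_of_Icc h01
  -- strict antitonicity
  have hanti : StrictAntiOn (fun A : ℝ => ∫ t in (0:ℝ)..1, 1 / (A - h t)) (Set.Ioi M) := by
    intro A hA B hB hAB
    refine intervalIntegral.integral_lt_integral_of_continuousOn_of_le_of_exists_lt zero_lt_one
      (hcand hB) (hcand hA) ?_ ?_
    · intro t ht
      have := hpos hA t (Set.Ioc_subset_Icc_self ht)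
      exact one_div_le_one_div_of_le this (by linarith)
    · refine ⟨0, by simp, ?_⟩
      have := hpos hA 0 (by simp)
      exact one_div_lt_one_div_of_lt this (by linarith)
  -- upper bound and limit at infinity
  have hub : ∀ {A : ℝ}, M < A →
      (∫ t in (0:ℝ)..1, 1 / (A - h t)) ≤ 1 / (A - M) := by
    intro A hA
    calc (∫ t in (0:ℝ)..1, 1 / (A - h t)) ≤ ∫ _t in (0:ℝ)..1, 1 / (A - M) := by
          refine intervalIntegral.integral_mono_on h01 (hint hA) intervalIntegrable_const ?_
          intro t ht
          exact one_div_le_one_div_of_le (sub_pos.2 hA) (by linarith [hleM t ht])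
      _ = 1 / (A - M) := by simp
  have hnonneg : ∀ {A : ℝ}, M < A → 0 ≤ ∫ t in (0:ℝ)..1, 1 / (A - h t) := by
    intro A hA
    refine intervalIntegral.integral_nonneg h01 fun t ht => ?_
    have := hpos hA t ht
    positivity
  have htop : Tendsto (fun A : ℝ => ∫ t in (0:ℝ)..1, 1 / (A - h t)) atTop (𝓝 0) := by
    refine squeeze_zero' (g := fun A : ℝ => 1 / (A - M)) ?_ ?_ ?_
    · filter_upwards [eventually_gt_atTop M] with A hA using hnonneg hA
    · filter_upwards [eventually_gt_atTop M] with A hA using hub hA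
    · have : Tendsto (fun A : ℝ => A - M) atTop atTop := tendsto_atTop_add_const_right _ _ tendsto_id
      simpa [one_div, Pi.inv_def] using this.inv_tendsto_atTop
  -- Lipschitz bound near the max
  have hderiv := hh.continuousOn_derivWithin (uniqueDiffOn_Icc one_pos) le_rfl
  obtain ⟨C, hC⟩ := isCompact_Icc.exists_bound_of_continuousOn hderiv
  set L : ℝ := max C 1 with hLdef
  have hL : (0:ℝ) < L := lt_of_lt_of_le one_pos (le_max_right _ _)
  have hlip : ∀ t ∈ Set.Icc (0:ℝ) 1, M - h t ≤ L * |t - t₀| := by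
    intro t ht
    have := Convex.norm_image_sub_le_of_norm_derivWithin_le
      (hh.differentiableOn one_ne_zero) (fun x hx => (hC x hx).trans (le_max_left C 1))
      (convex_Icc 0 1) ht₀ ht
    rw [Real.norm_eq_abs, Real.norm_eq_abs] at this
    calc M - h t = h t₀ - h t := by rw [hMt₀]
      _ ≤ |h t - h t₀| := by rw [abs_sub_comm]; exact le_abs_self _
      _ ≤ L * |t - t₀| := this
  -- key lower bound via the logarithmic integral
  have hkey : ∀ {A : ℝ}, M < A →
      (∫ s in (0:ℝ)..(1/2 : ℝ), ((A - M) + L * s)⁻¹) ≤ ∫ t in (0:ℝ)..1, 1 / (A - h t) := by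
    intro A hA
    have hεpos : (0:ℝ) < A - M := sub_pos.2 hA
    rcases le_or_gt t₀ (1/2 : ℝ) with hc | hc
    · -- use the interval [t₀, t₀ + 1/2]
      have hsub : Set.Icc t₀ (t₀ + 1/2) ⊆ Set.Icc (0:ℝ) 1 :=
        Set.Icc_subset_Icc ht₀.1 (by linarith)
      have step1 : (∫ s in (0:ℝ)..(1/2 : ℝ), ((A - M) + L * s)⁻¹)
          = ∫ t in t₀..(t₀ + 1/2), ((A - M) + L * (t - t₀))⁻¹ := by
        rw [intervalIntegral.integral_comp_sub_right (fun x => ((A - M) + L * x)⁻¹) t₀]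
        norm_num
      have step2 : (∫ t in t₀..(t₀ + 1/2), ((A - M) + L * (t - t₀))⁻¹)
          ≤ ∫ t in t₀..(t₀ + 1/2), 1 / (A - h t) := by
        refine intervalIntegral.integral_mono_on (by linarith) ?_ ?_ ?_
        · refine (ContinuousOn.inv₀ (continuousOn_const.add (continuousOn_const.mul
            ((continuousOn_id.sub continuousOn_const)))) ?_).intervalIntegrable_of_Icc (by linarith)
          intro t ht
          have : 0 ≤ L * (t - t₀) := mul_nonneg hL.le (by linarith [ht.1])
          show (A - M) + L * (t - t₀) ≠ 0
          exact ne_of_gt (by linarith)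
        · exact ((hcand hA).mono hsub).intervalIntegrable_of_Icc (by linarith)
        · intro t ht
          have ht' : t ∈ Set.Icc (0:ℝ) 1 := hsub ht
          have h1 : 0 < A - h t := hpos hA t ht'
          have h2 : A - h t ≤ (A - M) + L * (t - t₀) := by
            have := hlip t ht'
            rw [abs_of_nonneg (by linarith [ht.1] : (0:ℝ) ≤ t - t₀)] at this
            linarith
          rw [one_div]
          exact inv_anti₀ h1 h2
      have step3 : (∫ t in t₀..(t₀ + 1/2), 1 / (A - h t)) ≤ ∫ t in (0:ℝ)..1, 1 / (A - h t) := by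
        refine intervalIntegral.integral_mono_interval ht₀.1 (by linarith) (by linarith) ?_ (hint hA)
        filter_upwards [ae_restrict_mem measurableSet_Ioc] with t ht
        have := hpos hA t (Set.Ioc_subset_Icc_self ht)
        positivity
      linarith [step1 ▸ step2, step3]
    · -- use the interval [t₀ - 1/2, t₀]
      have hsub : Set.Icc (t₀ - 1/2) t₀ ⊆ Set.Icc (0:ℝ) 1 :=
        Set.Icc_subset_Icc (by linarith) ht₀.2
      have step1 : (∫ s in (0:ℝ)..(1/2 : ℝ), ((A - M) + L * s)⁻¹)
          = ∫ t in (t₀ - 1/2)..t₀, ((A - M) + L * (t₀ - t))⁻¹ := by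
        rw [intervalIntegral.integral_comp_sub_left (fun x => ((A - M) + L * x)⁻¹) t₀]
        norm_num
      have step2 : (∫ t in (t₀ - 1/2)..t₀, ((A - M) + L * (t₀ - t))⁻¹)
          ≤ ∫ t in (t₀ - 1/2)..t₀, 1 / (A - h t) := by
        refine intervalIntegral.integral_mono_on (by linarith) ?_ ?_ ?_
        · refine (ContinuousOn.inv₀ (continuousOn_const.add (continuousOn_const.mul
            ((continuousOn_const.sub continuousOn_id)))) ?_).intervalIntegrable_of_Icc (by linarith)
          intro t ht
          have : 0 ≤ L * (t₀ - t) := mul_nonneg hL.le (by linarith [ht.2])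
          show (A - M) + L * (t₀ - t) ≠ 0
          exact ne_of_gt (by linarith)
        · exact ((hcand hA).mono hsub).intervalIntegrable_of_Icc (by linarith)
        · intro t ht
          have ht' : t ∈ Set.Icc (0:ℝ) 1 := hsub ht
          have h1 : 0 < A - h t := hpos hA t ht'
          have h2 : A - h t ≤ (A - M) + L * (t₀ - t) := by
            have := hlip t ht'
            rw [abs_of_nonpos (by linarith [ht.2] : t - t₀ ≤ 0)] at this
            linarith
          rw [one_div]
          exact inv_anti₀ h1 h2
      have step3 : (∫ t in (t₀ - 1/2)..t₀, 1 / (A - h t)) ≤ ∫ t in (0:ℝ)..1, 1 / (A - h t) := by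
        refine intervalIntegral.integral_mono_interval (by linarith) (by linarith) ht₀.2 ?_ (hint hA)
        filter_upwards [ae_restrict_mem measurableSet_Ioc] with t ht
        have := hpos hA t (Set.Ioc_subset_Icc_self ht)
        positivity
      linarith [step1 ▸ step2, step3]
  -- limit at M from the right
  have hbot : Tendsto (fun A : ℝ => ∫ t in (0:ℝ)..1, 1 / (A - h t)) (𝓝[>] M) atTop := by
    have hsubM : Tendsto (fun A : ℝ => A - M) (𝓝[>] M) (𝓝[>] (0:ℝ)) := by
      refine tendsto_nhdsWithin_of_tendsto_nhds_of_eventually_within _ ?_ ?_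
      · have h0 : Tendsto (fun A : ℝ => A - M) (𝓝 M) (𝓝 (M - M)) :=
          (continuous_id.sub continuous_const).tendsto M
        rw [sub_self] at h0
        exact h0.mono_left nhdsWithin_le_nhds
      · filter_upwards [self_mem_nhdsWithin] with A (hA : M < A)
        exact sub_pos.2 hA
    refine tendsto_atTop_mono' _ ?_ ((aux_log_tendsto L hL).comp hsubM)
    filter_upwards [self_mem_nhdsWithin] with A (hA : M < A)
    exact hkey hA
  -- continuity of the integral in A
  have hIcont : ∀ A₀ : ℝ, M < A₀ →
      ContinuousAt (fun A : ℝ => ∫ t in (0:ℝ)..1, 1 / (A - h t)) A₀ := by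
    intro A₀ hA₀
    set A' : ℝ := (M + A₀) / 2 with hA'def
    have hA'M : M < A' := by rw [hA'def]; linarith
    have hA'A₀ : A' < A₀ := by rw [hA'def]; linarith
    refine intervalIntegral.continuousAt_of_dominated_interval
      (bound := fun _ => (A' - M)⁻¹) ?_ ?_ intervalIntegrable_const ?_
    · filter_upwards [eventually_gt_nhds hA'A₀] with A hA
      refine ((hcand (hA'M.trans hA)).mono ?_).aestronglyMeasurable measurableSet_uIoc
      rw [Set.uIoc_of_le h01]
      exact Set.Ioc_subset_Icc_self
    · filter_upwards [eventually_gt_nhds hA'A₀] with A hA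
      refine Filter.Eventually.of_forall fun t ht => ?_
      rw [Set.uIoc_of_le h01] at ht
      have ht' := Set.Ioc_subset_Icc_self ht
      have h1 : 0 < A - h t := hpos (hA'M.trans hA) t ht'
      have h2 : A' - M ≤ A - h t := by linarith [hleM t ht']
      rw [Real.norm_eq_abs, one_div, abs_of_pos (by positivity)]
      exact inv_anti₀ (by linarith) h2
    · refine Filter.Eventually.of_forall fun t ht => ?_
      rw [Set.uIoc_of_le h01] at ht
      have h1 : 0 < A₀ - h t := hpos hA₀ t (Set.Ioc_subset_Icc_self ht)
      exact ContinuousAt.div continuousAt_const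
        ((continuous_id.sub continuous_const).continuousAt) h1.ne'
  -- existence and uniqueness
  refine ⟨?_, hanti, htop, hbot⟩
  obtain ⟨A₁, hA₁big, hA₁M⟩ :=
    ((hbot.eventually_gt_atTop 1).and self_mem_nhdsWithin).exists
  obtain ⟨A₂, hA₂small, hA₂M⟩ :=
    ((htop.eventually (gt_mem_nhds one_pos)).and (eventually_gt_atTop M)).exists
  have hA₁A₂ : A₁ < A₂ := by
    rcases lt_trichotomy A₁ A₂ with h' | h' | h'
    · exact h'
    · exfalso; rw [h'] at hA₁big; linarith
    · exfalso
      have := hanti hA₂M hA₁M h'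
      simp only at this
      linarith
  have hIccsub : Set.Icc A₁ A₂ ⊆ Set.Ioi M := fun x hx => hA₁M.trans_le hx.1
  have hcontIcc : ContinuousOn (fun A : ℝ => ∫ t in (0:ℝ)..1, 1 / (A - h t)) (Set.Icc A₁ A₂) :=
    fun x hx => (hIcont x (hIccsub hx)).continuousWithinAt
  have hmem : (1:ℝ) ∈ Set.Icc ((fun A : ℝ => ∫ t in (0:ℝ)..1, 1 / (A - h t)) A₂)
      ((fun A : ℝ => ∫ t in (0:ℝ)..1, 1 / (A - h t)) A₁) := ⟨hA₂small.le, hA₁big.le⟩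
  obtain ⟨A, hAmem, hIA⟩ := intermediate_value_Icc' hA₁A₂.le hcontIcc hmem
  refine ⟨A, ⟨hA₁M.trans_le hAmem.1, hIA⟩, ?_⟩
  rintro B ⟨hBM, hIB⟩
  exact hanti.injOn hBM (hA₁M.trans_le hAmem.1) (by simpa using hIB.trans hIA.symm)
end

section
/- Let k ≥ 1 and let f : ℝ → ℝ be a smooth k-good function. Then there exists a continuously differentiable 1-periodic u : ℝ → ℝ with ∫₀¹ f^{(i)}(u(t)) dt = 0 for every i = 1, …, k if and only if 0 ∈ ℝ^k lies in the interior of the convex hull of the image of γ̂_k. -/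
/-- `γ̂_k(x) = (f'(x), f''(x), …, f^{(k)}(x)) ∈ ℝ^k`. -/
noncomputable def gammaHat (f : ℝ → ℝ) (k : ℕ) (x : ℝ) : Fin k → ℝ :=
  fun i => iteratedDeriv (i.1 + 1) f x

/-- `f` is `k`-good if `γ̂_k` never vanishes and the image of every nonempty
open interval under `γ̂_k` is not contained in a hyperplane of `ℝ^k` through
the origin (i.e. in the kernel of a nonzero linear functional). -/
def KGood (f : ℝ → ℝ) (k : ℕ) : Prop :=
  (∀ x, gammaHat f k x ≠ 0) ∧
  ∀ a b : ℝ, a < b → ∀ φ : (Fin k → ℝ) →ₗ[ℝ] ℝ, φ ≠ 0 →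
    ¬ (gammaHat f k '' Set.Ioo a b ⊆ {y | φ y = 0})

open MeasureTheory intervalIntegral Set Finset

lemma contDeriv {f : ℝ → ℝ} (hf : ContDiff ℝ (⊤:ℕ∞) f) (n : ℕ) :
    Continuous (iteratedDeriv n f) := by
  rw [iteratedDeriv_eq_iterate]
  exact (hf.iterate_deriv n).continuous

lemma gammaHat_cont {f : ℝ → ℝ} (hf : ContDiff ℝ (⊤:ℕ∞) f) (k : ℕ) (j : Fin k) :
    Continuous (fun x => gammaHat f k x j) := contDeriv hf _

/-- integral of any linear functional of `γ̂ ∘ u` vanishes -/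
lemma integral_phi_zero {f : ℝ → ℝ} (hf : ContDiff ℝ (⊤:ℕ∞) f) {k : ℕ}
    {u : ℝ → ℝ} (hu : Continuous u)
    (hint : ∀ i : ℕ, 1 ≤ i → i ≤ k → (∫ t in (0:ℝ)..1, iteratedDeriv i f (u t)) = 0)
    (φ : (Fin k → ℝ) →ₗ[ℝ] ℝ) :
    (∫ t in (0:ℝ)..1, φ (gammaHat f k (u t))) = 0 := by
  have hrw : ∀ t, φ (gammaHat f k (u t))
      = ∑ j : Fin k, gammaHat f k (u t) j * φ (Pi.single j 1) := by
    intro t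
    conv_lhs => rw [pi_eq_sum_univ (gammaHat f k (u t))]
    rw [map_sum]
    refine Finset.sum_congr rfl (fun j _ => ?_)
    rw [LinearMap.map_smul, smul_eq_mul]
    have : (fun j_1 => if j = j_1 then (1:ℝ) else 0) = Pi.single j 1 := by
      funext x
      simp [Pi.single_apply, eq_comm]
    rw [this]
  simp only [hrw]
  rw [intervalIntegral.integral_finset_sum]
  · refine Finset.sum_eq_zero (fun j _ => ?_)
    rw [intervalIntegral.integral_mul_const]
    have := hint (j.1 + 1) (by omega) (by omega)
    simp only [gammaHat]
    rw [this, zero_mul]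
  · intro j _
    exact (((gammaHat_cont hf k j).comp hu).mul continuous_const).intervalIntegrable _ _

/-- a continuous nonneg function on [0,1] with zero integral vanishes on [0,1] -/
lemma cont_nonneg_integral_zero {g : ℝ → ℝ} (hg : Continuous g) (h0 : ∀ t, 0 ≤ g t)
    (hI : (∫ t in (0:ℝ)..1, g t) = 0) : ∀ t ∈ Icc (0:ℝ) 1, g t = 0 := by
  by_contra hcon
  push_neg at hcon
  obtain ⟨t₀, ht₀, hne⟩ := hcon
  have hpos : 0 < g t₀ := lt_of_le_of_ne (h0 t₀) (Ne.symm hne)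
  have hopen : IsOpen {t | 0 < g t} := isOpen_lt continuous_const hg
  obtain ⟨ε, hε, hball⟩ := Metric.isOpen_iff.1 hopen t₀ hpos
  -- find a subinterval of Ioc 0 1 where g > 0
  have key : 0 < ∫ t in (0:ℝ)..1, g t := by
    rw [intervalIntegral.integral_pos_iff_support_of_nonneg_ae
      (Filter.Eventually.of_forall h0) ((hg.intervalIntegrable _ _))]
    refine ⟨one_pos, ?_⟩
    -- a set of positive measure inside support ∩ Ioc 0 1
    set a := max (t₀ - ε/2) 0 with ha
    set b := min (t₀ + ε/2) 1 with hb
    have hab : a < b := by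
      rcases ht₀ with ⟨h1, h2⟩
      have : 0 < ε/2 := by linarith
      rcases le_or_gt t₀ (1/2) with hc | hc
      · have hb' : min (t₀ + ε/2) 1 > t₀ := by
          apply lt_min (by linarith)
          -- t₀ < 1 or t₀ = 1 ; if t₀ ≤ 1/2 then t₀ < 1
          linarith
        calc a ≤ t₀ := by apply max_le (by linarith) h1
        _ < b := hb'
      · have ha' : a < t₀ := by
          apply max_lt (by linarith) (by linarith)
        calc a < t₀ := ha'
        _ ≤ b := le_min (by linarith) h2
    have hsub : Ioc a b ⊆ Function.support g ∩ Ioc 0 1 := by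
      intro x hx
      constructor
      · have : dist x t₀ < ε := by
          rw [Real.dist_eq, abs_lt]
          rcases hx with ⟨hx1, hx2⟩
          constructor
          · have : x > t₀ - ε/2 := lt_of_le_of_lt (le_max_left _ _) hx1
            linarith
          · have : x ≤ t₀ + ε/2 := le_trans hx2 (min_le_left _ _)
            linarith
        have := hball this
        exact ne_of_gt this
      · exact ⟨lt_of_le_of_lt (le_max_right _ _) hx.1, le_trans hx.2 (min_le_right _ _)⟩
    calc (0:ENNReal) < volume (Ioc a b) := by
          rw [Real.volume_Ioc]
          simp [hab]
    _ ≤ volume (Function.support g ∩ Ioc 0 1) := measure_mono hsub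
  rw [hI] at key
  exact lt_irrefl 0 key

lemma forward_dir {k : ℕ} {f : ℝ → ℝ} (hk : 1 ≤ k) (hf : ContDiff ℝ (⊤:ℕ∞) f)
    (hgood : KGood f k) (u : ℝ → ℝ) (hu : ContDiff ℝ 1 u) (hper : Periodic1 u)
    (hint : ∀ i : ℕ, 1 ≤ i → i ≤ k → (∫ t in (0:ℝ)..1, iteratedDeriv i f (u t)) = 0) :
    (0 : Fin k → ℝ) ∈ interior (convexHull ℝ (Set.range (gammaHat f k))) := by
  by_contra h0
  set S := Set.range (gammaHat f k) with hS
  obtain ⟨φ, hφne, hφle⟩ : ∃ φ : (Fin k → ℝ) →ₗ[ℝ] ℝ, φ ≠ 0 ∧ ∀ x, φ (gammaHat f k x) ≤ 0 := by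
    by_cases hne : (interior (convexHull ℝ S)).Nonempty
    · obtain ⟨ψ, hψ⟩ := geometric_hahn_banach_open_point
        (convex_convexHull ℝ S).interior isOpen_interior h0
      obtain ⟨y₀, hy₀⟩ := hne
      have hy₀neg : ψ y₀ < 0 := by simpa using hψ y₀ hy₀
      have hle : ∀ y ∈ convexHull ℝ S, ψ y ≤ 0 := by
        intro y hy
        by_contra hpos
        push_neg at hpos
        set θ : ℝ := ψ y / (ψ y - ψ y₀) with hθ
        have hden : 0 < ψ y - ψ y₀ := by linarith
        have hθ0 : 0 < θ := div_pos hpos hden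
        have hθ1 : θ < 1 := by
          rw [div_lt_one hden]; linarith
        have hmem : θ • y₀ + (1 - θ) • y ∈ interior (convexHull ℝ S) :=
          (convex_convexHull ℝ S).combo_interior_closure_mem_interior hy₀
            (subset_closure hy) hθ0 (by linarith) (by ring)
        have h1 : θ * ψ y₀ + (1 - θ) * ψ y < 0 := by
          have h := hψ _ hmem
          rw [map_add] at h
          simpa [smul_eq_mul] using h
        have h2 : θ * ψ y₀ + (1 - θ) * ψ y = 0 := by
          rw [hθ]
          field_simp
          ring
        linarith
      refine ⟨ψ.toLinearMap, ?_, ?_⟩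
      · intro hzero
        have : ψ y₀ = 0 := by
          have := congrArg (fun (m : (Fin k → ℝ) →ₗ[ℝ] ℝ) => m y₀) hzero
          simpa using this
        linarith
      · intro x
        exact hle _ (subset_convexHull ℝ S ⟨x, rfl⟩)
    · -- interior empty : affine span not top
      have hfd : FiniteDimensional ℝ (Fin k → ℝ) := inferInstance
      have hspan : affineSpan ℝ (convexHull ℝ S) ≠ ⊤ := by
        intro htop
        exact hne ((convex_convexHull ℝ S).interior_nonempty_iff_affineSpan_eq_top.2 htop)
      rw [affineSpan_convexHull] at hspan
      have hSne : S.Nonempty := ⟨gammaHat f k 0, ⟨0, rfl⟩⟩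
      have hvs : vectorSpan ℝ S < ⊤ := by
        rcases lt_or_eq_of_le (le_top (a := vectorSpan ℝ S)) with h | h
        · exact h
        · exfalso
          apply hspan
          rw [← AffineSubspace.affineSpan_eq_top_iff_vectorSpan_eq_top_of_nonempty ℝ (Fin k → ℝ) (Fin k → ℝ) hSne] at h
          exact h
      obtain ⟨φ, hφne, hmap⟩ := Submodule.exists_dual_map_eq_bot_of_lt_top hvs inferInstance
      have hker : ∀ v ∈ vectorSpan ℝ S, φ v = 0 := by
        intro v hv
        have hm : φ v ∈ Submodule.map φ (vectorSpan ℝ S) := Submodule.mem_map_of_mem hv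
        rw [hmap] at hm
        simpa using hm
      have hconst : ∀ x, φ (gammaHat f k x) = φ (gammaHat f k 0) := by
        intro x
        have hmem : gammaHat f k x -ᵥ gammaHat f k 0 ∈ vectorSpan ℝ S :=
          vsub_mem_vectorSpan ℝ ⟨x, rfl⟩ ⟨0, rfl⟩
        have := hker _ hmem
        simp only [vsub_eq_sub, map_sub] at this
        linarith
      have hc0 : φ (gammaHat f k 0) = 0 := by
        have hI := integral_phi_zero hf (hu.continuous) hint φ
        have : (∫ t in (0:ℝ)..1, φ (gammaHat f k (u t))) = φ (gammaHat f k 0) := by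
          rw [intervalIntegral.integral_congr
            (g := fun _ => φ (gammaHat f k 0)) (fun t _ => hconst (u t))]
          simp
        rw [hI] at this
        exact this.symm
      exact ⟨φ, hφne, fun x => le_of_eq (by rw [hconst x, hc0])⟩
  -- main flow
  have hγcont : Continuous (gammaHat f k) := continuous_pi (fun j => gammaHat_cont hf k j)
  have hφcont : Continuous φ := φ.continuous_of_finiteDimensional
  have hgcont : Continuous fun t => -φ (gammaHat f k (u t)) :=
    (hφcont.comp (hγcont.comp hu.continuous)).neg
  have hgzero : ∀ t ∈ Icc (0:ℝ) 1, φ (gammaHat f k (u t)) = 0 := by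
    have := cont_nonneg_integral_zero hgcont
      (fun t => by simpa using hφle (u t)) ?_
    · intro t ht
      have := this t ht
      linarith
    · rw [intervalIntegral.integral_neg, integral_phi_zero hf hu.continuous hint φ, neg_zero]
  obtain ⟨tm, htm, hmin⟩ := isCompact_Icc.exists_isMinOn (nonempty_Icc.2 zero_le_one)
    hu.continuous.continuousOn
  obtain ⟨tM, htM, hmax⟩ := isCompact_Icc.exists_isMaxOn (nonempty_Icc.2 zero_le_one)
    hu.continuous.continuousOn
  by_cases hmm : u tm = u tM
  · -- u constant on [0,1]
    have hconst : ∀ t ∈ Icc (0:ℝ) 1, u t = u 0 := by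
      intro t ht
      have h1 := isMinOn_iff.1 hmin t ht
      have h2 := isMaxOn_iff.1 hmax t ht
      have h3 := isMinOn_iff.1 hmin 0 ⟨le_refl 0, zero_le_one⟩
      have h4 := isMaxOn_iff.1 hmax 0 ⟨le_refl 0, zero_le_one⟩
      rw [hmm] at h1 h3
      linarith
    have hzero : gammaHat f k (u 0) = 0 := by
      funext j
      have hIj := hint (j.1 + 1) (by omega) (by omega)
      have : (∫ t in (0:ℝ)..1, iteratedDeriv (j.1+1) f (u t))
          = iteratedDeriv (j.1+1) f (u 0) := by
        rw [intervalIntegral.integral_congr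
          (g := fun _ => iteratedDeriv (j.1+1) f (u 0)) ?_]
        · simp
        · intro t ht
          rw [Set.uIcc_of_le zero_le_one] at ht
          simp [hconst t ht]
      rw [hIj] at this
      exact (congrFun (rfl : gammaHat f k (u 0) = gammaHat f k (u 0)) j).trans this.symm
    exact hgood.1 (u 0) hzero
  · have hlt : u tm < u tM := lt_of_le_of_ne (isMinOn_iff.1 hmin tM htM) hmm
    refine hgood.2 (u tm) (u tM) hlt φ hφne ?_
    rintro y ⟨x, hx, rfl⟩
    have hx' : x ∈ Set.uIcc (u tm) (u tM) := by
      rw [Set.uIcc_of_le hlt.le]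
      exact ⟨hx.1.le, hx.2.le⟩
    obtain ⟨t, ht, hxt⟩ := intermediate_value_uIcc
      (hu.continuous.continuousOn (s := Set.uIcc tm tM)) hx'
    have htIcc : t ∈ Icc (0:ℝ) 1 := by
      have : Set.uIcc tm tM ⊆ Set.uIcc (0:ℝ) 1 := by
        apply Set.uIcc_subset_uIcc <;> rw [Set.uIcc_of_le zero_le_one]
        exacts [htm, htM]
      have := this ht
      rwa [Set.uIcc_of_le zero_le_one] at this
    show φ (gammaHat f k x) = 0
    rw [← hxt]
    exact hgzero t htIcc

noncomputable def startT (δ : ℝ) (s : ℕ → ℝ) (p : ℕ) : ℝ :=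
  δ + ∑ q ∈ Finset.range p, (s q + δ)

noncomputable def loopV (Y : ℕ → ℝ) (n : ℕ) (δ : ℝ) (s : ℕ → ℝ) (t : ℝ) : ℝ :=
  Y 0 + ∑ p ∈ Finset.range n,
    (Y (p+1) - Y p) * Real.smoothTransition ((t - (startT δ s p + s p))/δ)

section loop

variable {Y : ℕ → ℝ} {n : ℕ} {δ : ℝ} {s : ℕ → ℝ}

lemma startT_succ (p : ℕ) : startT δ s (p+1) = startT δ s p + s p + δ := by
  unfold startT
  rw [Finset.sum_range_succ]
  ring

lemma startT_mono (hδ : 0 < δ) (hs : ∀ p, 0 ≤ s p) {p q : ℕ} (h : p ≤ q) :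
    startT δ s p ≤ startT δ s q := by
  unfold startT
  have hsub : Finset.range p ⊆ Finset.range q := Finset.range_subset_range.2 h
  have H := Finset.sum_le_sum_of_subset_of_nonneg hsub
    (f := fun r => s r + δ) (fun r _ _ => by have := hs r; positivity)
  linarith

lemma loopV_plateau (hδ : 0 < δ) (hs : ∀ p, 0 ≤ s p) {p : ℕ} (hp : p ≤ n) (t : ℝ)
    (h1 : ∀ q, q < p → startT δ s (q+1) ≤ t)
    (h2 : ∀ q, p ≤ q → q < n → t ≤ startT δ s q + s q) :
    loopV Y n δ s t = Y p := by
  unfold loopV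
  have hcongr : ∀ q ∈ Finset.range n,
      (Y (q+1) - Y q) * Real.smoothTransition ((t - (startT δ s q + s q))/δ)
      = if q < p then Y (q+1) - Y q else 0 := by
    intro q hq
    rw [Finset.mem_range] at hq
    by_cases h : q < p
    · rw [if_pos h]
      have harg : 1 ≤ (t - (startT δ s q + s q))/δ := by
        rw [le_div_iff₀ hδ]
        have := h1 q h
        rw [startT_succ] at this
        linarith
      rw [Real.smoothTransition.one_of_one_le harg, mul_one]
    · rw [if_neg h]
      have harg : (t - (startT δ s q + s q))/δ ≤ 0 := by
        apply div_nonpos_of_nonpos_of_nonneg _ hδ.le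
        have := h2 q (not_lt.1 h) hq
        linarith
      rw [Real.smoothTransition.zero_of_nonpos harg, mul_zero]
  rw [Finset.sum_congr rfl hcongr, ← Finset.sum_filter]
  have hfil : Finset.filter (fun q => q < p) (Finset.range n) = Finset.range p := by
    ext q
    simp only [Finset.mem_filter, Finset.mem_range]
    omega
  rw [hfil, Finset.sum_range_sub (fun q => Y q)]
  ring

lemma loopV_transition (hδ : 0 < δ) (hs : ∀ p, 0 ≤ s p) {p : ℕ} (hp : p < n) (t : ℝ)
    (h1 : startT δ s p + s p ≤ t) (h2 : t ≤ startT δ s (p+1)) :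
    loopV Y n δ s t
      = Y p + (Y (p+1) - Y p) * Real.smoothTransition ((t - (startT δ s p + s p))/δ) := by
  unfold loopV
  have hcongr : ∀ q ∈ Finset.range n,
      (Y (q+1) - Y q) * Real.smoothTransition ((t - (startT δ s q + s q))/δ)
      = (if q < p then Y (q+1) - Y q else 0)
        + (if q = p then (Y (p+1) - Y p) * Real.smoothTransition ((t - (startT δ s p + s p))/δ)
           else 0) := by
    intro q hq
    rw [Finset.mem_range] at hq
    rcases lt_trichotomy q p with h | h | h
    · rw [if_pos h, if_neg (by omega)]
      have harg : 1 ≤ (t - (startT δ s q + s q))/δ := by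
        rw [le_div_iff₀ hδ]
        have hq1 : startT δ s (q+1) ≤ startT δ s p := startT_mono hδ hs (by omega)
        rw [startT_succ] at hq1
        have := hs p
        linarith
      rw [Real.smoothTransition.one_of_one_le harg, mul_one, add_zero]
    · subst h
      rw [if_neg (lt_irrefl q), if_pos rfl, zero_add]
    · rw [if_neg (by omega), if_neg (by omega)]
      have harg : (t - (startT δ s q + s q))/δ ≤ 0 := by
        apply div_nonpos_of_nonpos_of_nonneg _ hδ.le
        have hq1 : startT δ s (p+1) ≤ startT δ s q := startT_mono hδ hs (by omega)
        have := hs q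
        linarith
      rw [Real.smoothTransition.zero_of_nonpos harg, mul_zero, add_zero]
  rw [Finset.sum_congr rfl hcongr, Finset.sum_add_distrib, ← Finset.sum_filter]
  have hfil : Finset.filter (fun q => q < p) (Finset.range n) = Finset.range p := by
    ext q
    simp only [Finset.mem_filter, Finset.mem_range]
    omega
  rw [hfil, Finset.sum_range_sub (fun q => Y q), Finset.sum_ite_eq' (Finset.range n) p,
    if_pos (Finset.mem_range.2 hp)]
  ring

lemma loopV_contDiff (hδ : 0 < δ) : ContDiff ℝ 1 (loopV Y n δ s) := by
  unfold loopV
  apply ContDiff.add contDiff_const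
  apply ContDiff.sum
  intro p _
  apply ContDiff.mul contDiff_const
  exact Real.smoothTransition.contDiff.comp
    ((contDiff_id.sub contDiff_const).div_const δ)

lemma loopV_head (hδ : 0 < δ) (hs : ∀ p, 0 ≤ s p) (t : ℝ) (ht : t ≤ δ) :
    loopV Y n δ s t = Y 0 := by
  apply loopV_plateau hδ hs (Nat.zero_le n) t (fun q hq => by omega)
  intro q _ _
  have h1 : startT δ s 0 ≤ startT δ s q := startT_mono hδ hs (Nat.zero_le q)
  have h2 : startT δ s 0 = δ := by simp [startT]
  have := hs q
  linarith

lemma loopV_tail (hδ : 0 < δ) (hs : ∀ p, 0 ≤ s p) (hYn : Y n = Y 0) (t : ℝ)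
    (ht : startT δ s n ≤ t) :
    loopV Y n δ s t = Y 0 := by
  rw [← hYn]
  apply loopV_plateau hδ hs (le_refl n) t
  · intro q hq
    exact le_trans (startT_mono hδ hs (by omega)) ht
  · intro q hq hq'
    omega

end loop

section integrals

variable {Y : ℕ → ℝ} {n : ℕ} {δ : ℝ} {s : ℕ → ℝ} {h : ℝ → ℝ}

lemma tau_mono (hδ : 0 < δ) (hs : ∀ p, 0 ≤ s p) {p q : ℕ} (hle : p ≤ q) :
    startT δ s p + s p ≤ startT δ s q + s q := by
  rcases eq_or_lt_of_le hle with rfl | h'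
  · exact le_refl _
  · have hmono := startT_mono (s := s) hδ hs (show p + 1 ≤ q by omega)
    rw [startT_succ] at hmono
    linarith [hs q]

lemma integral_block (hδ : 0 < δ) (hs : ∀ p, 0 ≤ s p) (hh : Continuous h)
    {p : ℕ} (hp : p < n) :
    (∫ t in (startT δ s p)..(startT δ s (p+1)), h (loopV Y n δ s t))
      = s p * h (Y p)
        + δ * ∫ x in (0:ℝ)..1, h (Y p + (Y (p+1) - Y p) * Real.smoothTransition x) := by
  have hvcont : Continuous (loopV Y n δ s) := (loopV_contDiff hδ).continuous
  have hii : ∀ a b : ℝ, IntervalIntegrable (fun t => h (loopV Y n δ s t)) volume a b :=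
    fun a b => ((hh.comp hvcont).intervalIntegrable a b)
  have hτ : startT δ s p ≤ startT δ s p + s p := by linarith [hs p]
  have key1 : (∫ t in (startT δ s p)..(startT δ s p + s p), h (loopV Y n δ s t))
      = s p * h (Y p) := by
    rw [intervalIntegral.integral_congr (g := fun _ => h (Y p)) ?_]
    · rw [intervalIntegral.integral_const, smul_eq_mul]
      ring
    · intro t ht
      rw [Set.uIcc_of_le hτ] at ht
      show h (loopV Y n δ s t) = h (Y p)
      congr 1
      apply loopV_plateau hδ hs (le_of_lt hp) t
      · intro q hq
        have := startT_mono (s := s) hδ hs (show q + 1 ≤ p by omega)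
        linarith [ht.1]
      · intro q hq _
        have := tau_mono (s := s) hδ hs hq
        linarith [ht.2]
  have key2 : (∫ t in (startT δ s p + s p)..(startT δ s (p+1)), h (loopV Y n δ s t))
      = δ * ∫ x in (0:ℝ)..1, h (Y p + (Y (p+1) - Y p) * Real.smoothTransition x) := by
    rw [startT_succ]
    set τ := startT δ s p + s p with hτdef
    set F : ℝ → ℝ := fun x => h (Y p + (Y (p+1) - Y p) * Real.smoothTransition x) with hF
    have hcg : (∫ t in τ..(τ + δ), h (loopV Y n δ s t))
        = ∫ t in τ..(τ + δ), F ((t - τ)/δ) := by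
      apply intervalIntegral.integral_congr
      intro t ht
      rw [Set.uIcc_of_le (by linarith)] at ht
      show h (loopV Y n δ s t) = F ((t - τ)/δ)
      rw [hF]
      congr 1
      apply loopV_transition hδ hs hp t ht.1
      rw [startT_succ]
      exact ht.2
    rw [hcg]
    have e1 : (∫ t in τ..(τ + δ), F ((t - τ)/δ))
        = ∫ t in (τ - τ)..(τ + δ - τ), F (t/δ) :=
      intervalIntegral.integral_comp_sub_right (fun x => F (x/δ)) τ
    have e2 : (∫ t in (0:ℝ)..δ, F (t/δ)) = δ • ∫ x in (0/δ:ℝ)..(δ/δ), F x :=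
      intervalIntegral.integral_comp_div F hδ.ne'
    rw [e1]
    have : τ - τ = 0 := by ring
    rw [this]
    have : τ + δ - τ = δ := by ring
    rw [this, e2, zero_div, div_self hδ.ne', smul_eq_mul]
  calc (∫ t in (startT δ s p)..(startT δ s (p+1)), h (loopV Y n δ s t))
      = (∫ t in (startT δ s p)..(startT δ s p + s p), h (loopV Y n δ s t))
        + ∫ t in (startT δ s p + s p)..(startT δ s (p+1)), h (loopV Y n δ s t) :=
        (intervalIntegral.integral_add_adjacent_intervals (hii _ _) (hii _ _)).symm
  _ = _ := by rw [key1, key2]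

lemma integral_loopV (hδ : 0 < δ) (hs : ∀ p, 0 ≤ s p) (hh : Continuous h)
    (hYn : Y n = Y 0) (hend : startT δ s n = 1 - δ) :
    (∫ t in (0:ℝ)..1, h (loopV Y n δ s t))
      = 2 * δ * h (Y 0)
        + ∑ p ∈ Finset.range n, (s p * h (Y p)
          + δ * ∫ x in (0:ℝ)..1, h (Y p + (Y (p+1) - Y p) * Real.smoothTransition x)) := by
  have hvcont : Continuous (loopV Y n δ s) := (loopV_contDiff hδ).continuous
  have hii : ∀ a b : ℝ, IntervalIntegrable (fun t => h (loopV Y n δ s t)) volume a b :=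
    fun a b => ((hh.comp hvcont).intervalIntegrable a b)
  have hs0 : startT δ s 0 = δ := by simp [startT]
  have hmid : (∫ t in δ..(1 - δ), h (loopV Y n δ s t))
      = ∑ p ∈ Finset.range n, (s p * h (Y p)
          + δ * ∫ x in (0:ℝ)..1, h (Y p + (Y (p+1) - Y p) * Real.smoothTransition x)) := by
    calc (∫ t in δ..(1 - δ), h (loopV Y n δ s t))
        = ∫ t in (startT δ s 0)..(startT δ s n), h (loopV Y n δ s t) := by rw [hs0, hend]
    _ = ∑ p ∈ Finset.range n, ∫ t in (startT δ s p)..(startT δ s (p+1)), h (loopV Y n δ s t) :=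
        (intervalIntegral.sum_integral_adjacent_intervals (a := startT δ s)
          (fun i _ => hii _ _)).symm
    _ = _ := Finset.sum_congr rfl (fun p hp => integral_block hδ hs hh (Finset.mem_range.1 hp))
  have hhead : (∫ t in (0:ℝ)..δ, h (loopV Y n δ s t)) = δ * h (Y 0) := by
    rw [intervalIntegral.integral_congr (g := fun _ => h (Y 0)) ?_]
    · rw [intervalIntegral.integral_const, smul_eq_mul]; ring
    · intro t ht
      rw [Set.uIcc_of_le hδ.le] at ht
      show h (loopV Y n δ s t) = h (Y 0)
      rw [loopV_head hδ hs t ht.2]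
  have htail : (∫ t in (1 - δ)..(1:ℝ), h (loopV Y n δ s t)) = δ * h (Y 0) := by
    have hδ1 : 1 - δ ≤ 1 := by linarith
    rw [intervalIntegral.integral_congr (g := fun _ => h (Y 0)) ?_]
    · rw [intervalIntegral.integral_const, smul_eq_mul]; ring
    · intro t ht
      rw [Set.uIcc_of_le hδ1] at ht
      show h (loopV Y n δ s t) = h (Y 0)
      rw [loopV_tail hδ hs hYn t (by rw [hend]; exact ht.1)]
  have split1 : (∫ t in (0:ℝ)..1, h (loopV Y n δ s t))
      = (∫ t in (0:ℝ)..δ, h (loopV Y n δ s t))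
        + (∫ t in δ..(1-δ), h (loopV Y n δ s t))
        + (∫ t in (1-δ)..(1:ℝ), h (loopV Y n δ s t)) := by
    rw [intervalIntegral.integral_add_adjacent_intervals (hii _ _) (hii _ _),
      intervalIntegral.integral_add_adjacent_intervals (hii _ _) (hii _ _)]
  rw [split1, hhead, htail, hmid]
  ring

end integrals

noncomputable def loopU (Y : ℕ → ℝ) (n : ℕ) (δ : ℝ) (s : ℕ → ℝ) : ℝ → ℝ :=
  fun t => loopV Y n δ s (Int.fract t)

section loopU

variable {Y : ℕ → ℝ} {n : ℕ} {δ : ℝ} {s : ℕ → ℝ}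

lemma loopU_periodic : Periodic1 (loopU Y n δ s) := by
  intro t
  unfold loopU
  rw [Int.fract_add_one]

lemma loopU_contDiff (hδ : 0 < δ) (hs : ∀ p, 0 ≤ s p) (hYn : Y n = Y 0)
    (hend : startT δ s n = 1 - δ) : ContDiff ℝ 1 (loopU Y n δ s) := by
  have hδhalf : δ ≤ 1/2 := by
    have h0n := startT_mono (s := s) hδ hs (Nat.zero_le n)
    have hs0 : startT δ s 0 = δ := by simp [startT]
    rw [hs0, hend] at h0n
    linarith
  rw [contDiff_iff_contDiffAt]
  intro x
  rcases eq_or_lt_of_le (Int.fract_nonneg x) with h0 | hpos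
  · -- x is an integer ; u is locally constant
    have hx : (⌊x⌋ : ℝ) = x := by
      have hfr : Int.fract x = x - ⌊x⌋ := rfl
      rw [← h0] at hfr
      linarith
    apply ContDiffAt.congr_of_eventuallyEq (contDiffAt_const (c := Y 0))
    have hmem1 : x - δ < x := by linarith
    have hmem2 : x < x + δ := by linarith
    filter_upwards [Ioo_mem_nhds hmem1 hmem2] with t ht
    show loopU Y n δ s t = Y 0
    unfold loopU
    rcases le_or_gt x t with hle | hlt
    · have hfl : ⌊t⌋ = ⌊x⌋ := by
        rw [Int.floor_eq_iff]
        constructor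
        · rw [hx]; exact hle
        · push_cast
          rw [hx]
          have := ht.2
          linarith
      have hfr : Int.fract t = t - x := by
        rw [Int.fract, hfl, hx]
      rw [hfr]
      apply loopV_head hδ hs
      linarith [ht.2]
    · have hfl : ⌊t⌋ = ⌊x⌋ - 1 := by
        rw [Int.floor_eq_iff]
        push_cast
        rw [hx]
        constructor
        · linarith [ht.1, hδhalf]
        · linarith
      have hfr : Int.fract t = t - x + 1 := by
        rw [Int.fract, hfl]
        push_cast
        rw [hx]
        ring
      rw [hfr]
      apply loopV_tail hδ hs hYn
      rw [hend]
      linarith [ht.1]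
  · -- x not an integer
    have hlow : (⌊x⌋ : ℝ) < x := by
      have hfr : Int.fract x = x - ⌊x⌋ := rfl
      linarith [hpos.trans_eq hfr]
    have hhigh : x < ⌊x⌋ + 1 := Int.lt_floor_add_one x
    have hcd : ContDiffAt ℝ 1 (fun t => loopV Y n δ s (t - (⌊x⌋ : ℝ))) x :=
      ((loopV_contDiff hδ).comp (contDiff_id.sub contDiff_const)).contDiffAt
    apply ContDiffAt.congr_of_eventuallyEq hcd
    filter_upwards [Ioo_mem_nhds hlow hhigh] with t ht
    show loopU Y n δ s t = loopV Y n δ s (t - (⌊x⌋ : ℝ))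
    unfold loopU
    have hfl : ⌊t⌋ = ⌊x⌋ := by
      rw [Int.floor_eq_iff]
      exact ⟨ht.1.le, by exact_mod_cast ht.2⟩
    rw [Int.fract, hfl]

lemma integral_loopU {h : ℝ → ℝ} :
    (∫ t in (0:ℝ)..1, h (loopU Y n δ s t)) = ∫ t in (0:ℝ)..1, h (loopV Y n δ s t) := by
  apply intervalIntegral.integral_congr_ae
  have hae : ∀ᵐ (t : ℝ), t ≠ 1 := by
    rw [MeasureTheory.ae_iff]
    have : {t : ℝ | ¬ t ≠ 1} = {1} := by ext y; simp
    rw [this]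
    exact Real.volume_singleton
  filter_upwards [hae] with t ht hmem
  rw [Set.uIoc_of_le (zero_le_one)] at hmem
  have h1 : t < 1 := lt_of_le_of_ne hmem.2 ht
  show h (loopU Y n δ s t) = h (loopV Y n δ s t)
  unfold loopU
  rw [Int.fract_eq_self.2 ⟨hmem.1.le, h1⟩]

end loopU

lemma extract_weights {k m : ℕ} (g : Fin m → (Fin k → ℝ)) {w : Fin k → ℝ}
    (hw : w ∈ convexHull ℝ (Set.range g)) :
    ∃ lam : Fin m → ℝ, (∀ p, 0 ≤ lam p) ∧ ∑ p, lam p = 1 ∧ ∑ p, lam p • g p = w := by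
  obtain ⟨ι, hι, wι, z, hw0, hw1, hz, hsum⟩ := mem_convexHull_iff_exists_fintype.1 hw
  choose pick hpick using hz
  refine ⟨fun a => ∑ i, if pick i = a then wι i else 0, ?_, ?_, ?_⟩
  · intro a
    apply Finset.sum_nonneg
    intro i _
    by_cases hp : pick i = a
    · rw [if_pos hp]; exact hw0 i
    · rw [if_neg hp]
  · rw [Finset.sum_comm]
    rw [← hw1]
    apply Finset.sum_congr rfl
    intro i _
    rw [Finset.sum_ite_eq (Finset.univ) (pick i) (fun _ => wι i)]
    simp
  · rw [← hsum]
    have : ∀ a : Fin m, (∑ i, if pick i = a then wι i else 0) • g a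
        = ∑ i, (if pick i = a then wι i • g a else 0) := by
      intro a
      rw [Finset.sum_smul]
      apply Finset.sum_congr rfl
      intro i _
      by_cases hp : pick i = a
      · rw [if_pos hp, if_pos hp]
      · rw [if_neg hp, if_neg hp, zero_smul]
    simp_rw [this]
    rw [Finset.sum_comm]
    apply Finset.sum_congr rfl
    intro i _
    have : ∀ a : Fin m, (if pick i = a then wι i • g a else 0)
        = if pick i = a then wι i • g (pick i) else 0 := by
      intro a
      by_cases hp : pick i = a
      · rw [if_pos hp, if_pos hp, hp]
      · rw [if_neg hp, if_neg hp]
    simp_rw [this]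
    rw [Finset.sum_ite_eq (Finset.univ) (pick i) (fun _ => wι i • g (pick i))]
    simp [hpick i]

lemma exists_finite_ball {k : ℕ} (hk : 1 ≤ k) (g : ℝ → (Fin k → ℝ))
    (h0 : (0 : Fin k → ℝ) ∈ interior (convexHull ℝ (Set.range g))) :
    ∃ (m : ℕ) (Z : Fin m → ℝ) (ρ : ℝ), 0 < ρ ∧ 0 < m ∧
      Metric.ball (0 : Fin k → ℝ) ρ ⊆ convexHull ℝ (Set.range (fun p => g (Z p))) := by
  obtain ⟨r, hr, hball⟩ := Metric.mem_nhds_iff.1 (mem_interior_iff_mem_nhds.1 h0)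
  set E : Fin k → (Fin k → ℝ) := fun i => (fun j => if i = j then (1:ℝ) else 0) with hE
  have hEnorm : ∀ i, ‖E i‖ ≤ 1 := by
    intro i
    apply pi_norm_le_iff_of_nonneg zero_le_one |>.2
    intro j
    rw [hE]
    by_cases hj : i = j <;> simp [hj]
  set q : Fin k → Bool → (Fin k → ℝ) :=
    fun i σ => (if σ then r/2 else -(r/2)) • E i with hq
  have hr2 : (0:ℝ) < r/2 := by linarith
  have hqmem : ∀ i σ, q i σ ∈ convexHull ℝ (Set.range g) := by
    intro i σ
    apply hball
    rw [Metric.mem_ball, dist_zero_right]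
    have h2 : ‖(if σ then r/2 else -(r/2) : ℝ)‖ = r/2 := by
      cases σ
      · simp only [Bool.false_eq_true, if_false]
        rw [Real.norm_eq_abs, abs_of_nonpos (by linarith)]
        ring
      · simp only [if_true]
        rw [Real.norm_eq_abs, abs_of_nonneg (by linarith)]
    rw [hq]
    simp only
    rw [norm_smul, h2]
    calc r/2 * ‖E i‖ ≤ r/2 * 1 := mul_le_mul_of_nonneg_left (hEnorm i) hr2.le
    _ < r := by linarith
  have hrep : ∀ i : Fin k, ∀ σ : Bool,
      ∃ (ι : Type) (_ : Fintype ι) (w : ι → ℝ) (z : ι → (Fin k → ℝ)), (∀ a, 0 ≤ w a) ∧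
        ∑ a, w a = 1 ∧ (∀ a, z a ∈ Set.range g) ∧ ∑ a, w a • z a = q i σ :=
    fun i σ => mem_convexHull_iff_exists_fintype.1 (hqmem i σ)
  choose ι hι w z hw0 hw1 hz hsum using hrep
  have hzy : ∀ (i : Fin k) (σ : Bool) (a : ι i σ), ∃ y : ℝ, g y = z i σ a := fun i σ a => hz i σ a
  choose y hy using hzy
  letI : ∀ (i : Fin k) (σ : Bool), Fintype (ι i σ) := hι
  set T := (i : Fin k) × (σ : Bool) × ι i σ with hT
  set m := Fintype.card T with hm
  set e : Fin m ≃ T := (Fintype.equivFin T).symm with he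
  set Z : Fin m → ℝ := fun p => y (e p).1 (e p).2.1 (e p).2.2 with hZ
  set A : Set (Fin k → ℝ) := Set.range (fun p : Fin m => g (Z p)) with hA
  have hzA : ∀ (i : Fin k) (σ : Bool) (a : ι i σ), z i σ a ∈ A := by
    intro i σ a
    refine ⟨(Fintype.equivFin T) ⟨i, σ, a⟩, ?_⟩
    rw [hZ]
    simp only
    rw [show e ((Fintype.equivFin T) ⟨i, σ, a⟩) = ⟨i, σ, a⟩ from
      (Fintype.equivFin T).symm_apply_apply _]
    exact hy i σ a
  have hqA : ∀ i σ, q i σ ∈ convexHull ℝ A := by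
    intro i σ
    exact mem_convexHull_of_exists_fintype (w i σ) (z i σ) (hw0 i σ) (hw1 i σ)
      (fun a => hzA i σ a) (hsum i σ)
  set i₀ : Fin k := ⟨0, hk⟩ with hi₀
  have h0A : (0 : Fin k → ℝ) ∈ convexHull ℝ A := by
    have hmm := (convex_convexHull ℝ A) (hqA i₀ true) (hqA i₀ false)
      (le_of_lt one_half_pos) (le_of_lt one_half_pos) (by norm_num)
    have heq : (1/2 : ℝ) • q i₀ true + (1/2 : ℝ) • q i₀ false = 0 := by
      rw [hq]
      simp only [if_true, Bool.false_eq_true, if_false]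
      rw [smul_smul, smul_smul, ← add_smul]
      norm_num
    rwa [heq] at hmm
  have hk0 : (0:ℝ) < k := by exact_mod_cast hk
  refine ⟨m, Z, r/(4*k), by positivity, ?_, ?_⟩
  · rw [hm, Fintype.card_pos_iff]
    refine ⟨⟨i₀, true, Classical.choice ?_⟩⟩
    by_contra hempty
    rw [not_nonempty_iff] at hempty
    have h1 := hw1 i₀ true
    rw [Finset.univ_eq_empty, Finset.sum_empty] at h1
    exact zero_ne_one h1
  · intro x hx
    rw [Metric.mem_ball, dist_zero_right] at hx
    set μ : Fin k → Bool → ℝ :=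
      fun i σ => (if σ then max (x i) 0 else max (-(x i)) 0) / (r/2) with hμ
    have hμ0 : ∀ i σ, 0 ≤ μ i σ := by
      intro i σ
      rw [hμ]
      apply div_nonneg _ (le_of_lt hr2)
      cases σ <;> simp [le_max_right]
    have habs : ∀ i : Fin k, μ i true + μ i false = |x i| / (r/2) := by
      intro i
      rw [hμ]
      simp only [if_true, Bool.false_eq_true, if_false]
      rw [← add_div]
      congr 1
      rcases le_or_gt 0 (x i) with h | h
      · rw [max_eq_left h, max_eq_right (by linarith : -(x i) ≤ 0), add_zero, abs_of_nonneg h]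
      · rw [max_eq_right h.le, max_eq_left (by linarith : (0:ℝ) ≤ -(x i)), zero_add, abs_of_neg h]
    have hnormi : ∀ i : Fin k, |x i| ≤ ‖x‖ := by
      intro i
      have := norm_le_pi_norm x i
      simpa using this
    have hsumμ : ∑ i : Fin k, (μ i true + μ i false) ≤ 1/2 := by
      have h2 : ∑ i : Fin k, (μ i true + μ i false) ≤ ∑ _i : Fin k, ‖x‖ / (r/2) := by
        apply Finset.sum_le_sum
        intro i _
        rw [habs i]
        gcongr
        exact hnormi i
      have h3 : ∑ _i : Fin k, ‖x‖/(r/2) = k * (‖x‖/(r/2)) := by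
        rw [Finset.sum_const, Finset.card_univ, Fintype.card_fin, nsmul_eq_mul]
      have h4 : (k:ℝ) * (‖x‖/(r/2)) ≤ 1/2 := by
        have hxle : ‖x‖ ≤ r/(4*k) := hx.le
        calc (k:ℝ) * (‖x‖/(r/2)) ≤ (k:ℝ) * ((r/(4*k))/(r/2)) := by
              gcongr
        _ = 1/2 := by
              field_simp
              ring
      linarith
    set ν : ℝ := 1 - ∑ i : Fin k, (μ i true + μ i false) with hν
    have hν0 : 0 ≤ ν := by rw [hν]; linarith
    -- x as convex combination of the q's and 0
    have hterm : ∀ i : Fin k, μ i true • q i true + μ i false • q i false = x i • E i := by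
      intro i
      rw [hq, hμ]
      simp only [if_true, Bool.false_eq_true, if_false]
      rw [smul_smul, smul_smul, ← add_smul]
      congr 1
      field_simp
      rcases le_or_gt 0 (x i) with h | h
      · rw [max_eq_left h, max_eq_right (by linarith : -(x i) ≤ 0)]
        ring
      · rw [max_eq_right h.le, max_eq_left (by linarith : (0:ℝ) ≤ -(x i))]
        ring
    have hxdecomp : x = ∑ i : Fin k, (μ i true • q i true + μ i false • q i false) + ν • (0 : Fin k → ℝ) := by
      rw [smul_zero, add_zero]
      rw [Finset.sum_congr rfl (fun i _ => hterm i)]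
      exact pi_eq_sum_univ x
    -- convexity
    set κ := ((Fin k) × Bool) ⊕ Unit with hκ
    set W : κ → ℝ := fun c => Sum.elim (fun iσ : Fin k × Bool => μ iσ.1 iσ.2) (fun _ => ν) c with hW
    set P : κ → (Fin k → ℝ) := fun c => Sum.elim (fun iσ : Fin k × Bool => q iσ.1 iσ.2) (fun _ => 0) c with hP
    have hWP : ∑ c : κ, W c • P c = x := by
      rw [Fintype.sum_sum_type]
      have e1 : (∑ a : Fin k × Bool, W (Sum.inl a) • P (Sum.inl a))
          = ∑ a : Fin k × Bool, μ a.1 a.2 • q a.1 a.2 := rfl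
      have e2 : (∑ b : Unit, W (Sum.inr b) • P (Sum.inr b)) = ν • (0 : Fin k → ℝ) := by
        rw [Fintype.sum_unique]
        rfl
      rw [e1, e2, Fintype.sum_prod_type]
      have e3 : ∀ i : Fin k, (∑ σ : Bool, μ i σ • q i σ)
          = μ i true • q i true + μ i false • q i false := fun i => Fintype.sum_bool _
      rw [Finset.sum_congr rfl (fun i _ => e3 i)]
      exact hxdecomp.symm
    have hW1 : ∑ c : κ, W c = 1 := by
      rw [Fintype.sum_sum_type]
      have e1 : (∑ a : Fin k × Bool, W (Sum.inl a)) = ∑ a : Fin k × Bool, μ a.1 a.2 := rfl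
      have e2 : (∑ b : Unit, W (Sum.inr b)) = ν := Fintype.sum_unique _
      rw [e1, e2, Fintype.sum_prod_type]
      have e3 : ∀ i : Fin k, (∑ σ : Bool, μ i σ) = μ i true + μ i false :=
        fun i => Fintype.sum_bool _
      rw [Finset.sum_congr rfl (fun i _ => e3 i), hν]
      ring
    rw [← hWP]
    apply (convex_convexHull ℝ A).sum_mem
    · intro c _
      rcases c with iσ | u
      · exact hμ0 iσ.1 iσ.2
      · exact hν0
    · exact hW1
    · intro c _
      rcases c with iσ | u
      · exact hqA iσ.1 iσ.2
      · exact h0A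


lemma startT_def (δ : ℝ) (s : ℕ → ℝ) (p : ℕ) :
    startT δ s p = δ + ∑ q ∈ Finset.range p, (s q + δ) := rfl

lemma integral_loopU_eq {Y : ℕ → ℝ} {n : ℕ} {δ : ℝ} {s : ℕ → ℝ} {h : ℝ → ℝ}
    (hδ : 0 < δ) (hs : ∀ p, 0 ≤ s p) (hh : Continuous h)
    (hYn : Y n = Y 0) (hend : startT δ s n = 1 - δ) :
    (∫ t in (0:ℝ)..1, h (loopU Y n δ s t))
      = 2 * δ * h (Y 0)
        + ∑ p ∈ Finset.range n, (s p * h (Y p)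
          + δ * ∫ x in (0:ℝ)..1, h (Y p + (Y (p+1) - Y p) * Real.smoothTransition x)) := by
  rw [integral_loopU]
  exact integral_loopV hδ hs hh hYn hend

lemma exists_loop {k : ℕ} {f : ℝ → ℝ} (hf : ContDiff ℝ (⊤:ℕ∞) f)
    (n : ℕ) (Y : ℕ → ℝ) (hYn : Y n = Y 0)
    (δ : ℝ) (hδ : 0 < δ) (s : ℕ → ℝ) (hs : ∀ p, 0 ≤ s p)
    (hend : startT δ s n = 1 - δ)
    (heq : ∀ j : Fin k,
      2 * δ * gammaHat f k (Y 0) j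
      + ∑ p ∈ Finset.range n, (s p * gammaHat f k (Y p) j
          + δ * ∫ x in (0:ℝ)..1,
              gammaHat f k (Y p + (Y (p+1) - Y p) * Real.smoothTransition x) j) = 0) :
    ∃ u : ℝ → ℝ, ContDiff ℝ 1 u ∧ Periodic1 u ∧
      ∀ i : ℕ, 1 ≤ i → i ≤ k → (∫ t in (0:ℝ)..1, iteratedDeriv i f (u t)) = 0 := by
  refine ⟨loopU Y n δ s, loopU_contDiff hδ hs hYn hend, loopU_periodic, ?_⟩
  intro i h1 h2
  set j : Fin k := ⟨i - 1, by omega⟩ with hj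
  have hji : j.1 + 1 = i := by simp [hj]; omega
  have hcont : Continuous (fun x => gammaHat f k x j) := gammaHat_cont hf k j
  have hconv : (∫ t in (0:ℝ)..1, iteratedDeriv i f (loopU Y n δ s t))
      = ∫ t in (0:ℝ)..1, (fun x => gammaHat f k x j) (loopU Y n δ s t) := by
    apply intervalIntegral.integral_congr
    intro t _
    show iteratedDeriv i f _ = gammaHat f k _ j
    rw [gammaHat, hji]
  rw [hconv, integral_loopU_eq hδ hs hcont hYn hend]
  exact heq j

lemma reverse_dir {k : ℕ} {f : ℝ → ℝ} (hk : 1 ≤ k) (hf : ContDiff ℝ (⊤:ℕ∞) f)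
    (h0 : (0 : Fin k → ℝ) ∈ interior (convexHull ℝ (Set.range (gammaHat f k)))) :
    ∃ u : ℝ → ℝ, ContDiff ℝ 1 u ∧ Periodic1 u ∧
      ∀ i : ℕ, 1 ≤ i → i ≤ k → (∫ t in (0:ℝ)..1, iteratedDeriv i f (u t)) = 0 := by
  obtain ⟨m, Z, ρ, hρ, hm, hball⟩ := exists_finite_ball hk (gammaHat f k) h0
  set Y : ℕ → ℝ := fun p => Z ⟨p % m, Nat.mod_lt p hm⟩ with hY
  have hYm : Y m = Y 0 := by
    rw [hY]
    simp
  have hYp : ∀ p : Fin m, Y p.1 = Z p := by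
    intro p
    have hfin : (⟨p.1 % m, Nat.mod_lt _ hm⟩ : Fin m) = p := Fin.ext (Nat.mod_eq_of_lt p.2)
    rw [hY]
    exact congrArg Z hfin
  set c : ℕ → Fin k → ℝ := fun p j => ∫ x in (0:ℝ)..1,
    gammaHat f k (Y p + (Y (p+1) - Y p) * Real.smoothTransition x) j with hc
  set C : Fin k → ℝ := fun j => 2 * gammaHat f k (Y 0) j + ∑ p ∈ Finset.range m, c p j with hC
  set δ : ℝ := min (1/(2*(m+2))) (ρ/(2*(‖C‖+1))) with hδdef
  have hδ : 0 < δ := lt_min (by positivity) (by positivity)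
  have hδ1 : δ ≤ 1/(2*(m+2)) := min_le_left _ _
  have hδ2 : δ ≤ ρ/(2*(‖C‖+1)) := min_le_right _ _
  have hδm : ((m:ℝ)+2) * δ ≤ 1/2 := by
    calc ((m:ℝ)+2) * δ ≤ ((m:ℝ)+2) * (1/(2*(m+2))) := by
          apply mul_le_mul_of_nonneg_left hδ1 (by positivity)
    _ = 1/2 := by field_simp
  have hfrac : (0:ℝ) < 1 - ((m:ℝ)+2)*δ := by linarith
  set w : Fin k → ℝ := (-(δ / (1 - ((m:ℝ)+2)*δ))) • C with hw
  have hwball : w ∈ Metric.ball (0 : Fin k → ℝ) ρ := by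
    rw [mem_ball_zero_iff, hw, norm_smul]
    have h1 : ‖(-(δ / (1 - ((m:ℝ)+2)*δ)))‖ = δ / (1 - ((m:ℝ)+2)*δ) := by
      rw [norm_neg, Real.norm_eq_abs, abs_of_nonneg (by positivity)]
    rw [h1]
    have h2 : δ / (1 - ((m:ℝ)+2)*δ) ≤ 2*δ := by
      rw [div_le_iff₀ hfrac]
      nlinarith
    calc δ / (1 - ((m:ℝ)+2)*δ) * ‖C‖ ≤ 2*δ * ‖C‖ :=
          mul_le_mul_of_nonneg_right h2 (norm_nonneg _)
    _ ≤ 2*(ρ/(2*(‖C‖+1))) * ‖C‖ := by gcongr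
    _ < ρ := by
        rw [show 2*(ρ/(2*(‖C‖+1))) * ‖C‖ = ρ * (‖C‖/(‖C‖+1)) by field_simp]
        have h3 : ‖C‖/(‖C‖+1) < 1 := by
          rw [div_lt_one (by positivity)]
          linarith
        nlinarith [hρ]
  obtain ⟨lam, hl0, hl1, hlsum⟩ :=
    extract_weights (fun p : Fin m => gammaHat f k (Z p)) (hball hwball)
  set s : ℕ → ℝ := fun p => if h : p < m then (1 - ((m:ℝ)+2)*δ) * lam ⟨p, h⟩ else 0 with hsdef
  have hs : ∀ p, 0 ≤ s p := by
    intro p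
    by_cases h : p < m
    · simp only [hsdef, dif_pos h]
      exact mul_nonneg hfrac.le (hl0 _)
    · simp only [hsdef, dif_neg h]
      exact le_refl 0
  have hsum_s : ∑ p ∈ Finset.range m, s p = 1 - ((m:ℝ)+2)*δ := by
    have : ∀ p : Fin m, s p.1 = (1 - ((m:ℝ)+2)*δ) * lam p := by
      intro p
      simp only [hsdef, dif_pos p.2]
    rw [← Fin.sum_univ_eq_sum_range]
    rw [Finset.sum_congr rfl (fun p _ => this p), ← Finset.mul_sum, hl1, mul_one]
  have hend : startT δ s m = 1 - δ := by
    rw [startT_def, Finset.sum_add_distrib, hsum_s, Finset.sum_const, Finset.card_range,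
      nsmul_eq_mul]
    ring
  have hkey : ∀ j : Fin k, (∑ p ∈ Finset.range m, s p * gammaHat f k (Y p) j)
      = (1 - ((m:ℝ)+2)*δ) * w j := by
    intro j
    have happ := congrFun hlsum j
    rw [Finset.sum_apply] at happ
    rw [← Fin.sum_univ_eq_sum_range (fun p => s p * gammaHat f k (Y p) j) m]
    have : ∀ p : Fin m, s p.1 * gammaHat f k (Y p.1) j
        = (1 - ((m:ℝ)+2)*δ) * (lam p * gammaHat f k (Z p) j) := by
      intro p
      simp only [hsdef, dif_pos p.2]
      rw [hYp p]
      ring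
    rw [Finset.sum_congr rfl (fun p _ => this p), ← Finset.mul_sum]
    have happ2 : (∑ p : Fin m, lam p * gammaHat f k (Z p) j) = w j := by
      rw [← happ]
      apply Finset.sum_congr rfl
      intro p _
      simp [smul_eq_mul]
    rw [happ2]
  have heq : ∀ j : Fin k,
      2 * δ * gammaHat f k (Y 0) j
      + ∑ p ∈ Finset.range m, (s p * gammaHat f k (Y p) j
          + δ * ∫ x in (0:ℝ)..1,
              gammaHat f k (Y p + (Y (p+1) - Y p) * Real.smoothTransition x) j) = 0 := by
    intro j
    rw [Finset.sum_add_distrib, hkey j]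
    have hwj : w j = (-(δ / (1 - ((m:ℝ)+2)*δ))) * C j := by rw [hw]; simp [smul_eq_mul]
    have hCj : C j = 2 * gammaHat f k (Y 0) j + ∑ p ∈ Finset.range m, c p j := by rw [hC]
    have hsum2 : (∑ p ∈ Finset.range m, δ * ∫ x in (0:ℝ)..1,
        gammaHat f k (Y p + (Y (p+1) - Y p) * Real.smoothTransition x) j)
        = δ * ∑ p ∈ Finset.range m, c p j := by
      rw [Finset.mul_sum]
    rw [hsum2, hwj, hCj]
    have hne : (1 - ((m:ℝ)+2)*δ) ≠ 0 := hfrac.ne'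
    have key : (1 - ((m:ℝ)+2)*δ) * (δ / (1 - ((m:ℝ)+2)*δ)) = δ := by field_simp
    linear_combination (-(2 * gammaHat f k (Y 0) j + ∑ p ∈ Finset.range m, c p j)) * key
  exact exists_loop hf m Y hYm δ hδ s hs hend heq

/-- **Lemma 3.5, first assertion**. For a `k`-good smooth `f`, there is a `C¹`
1-periodic `u` with `∫₀¹ f^{(i)}(u t) dt = 0` for `i = 1,…,k` if and only if
`0 ∈ ℝ^k` lies in the interior of the convex hull of the image of `γ̂_k`. -/
theorem stmt9 (k : ℕ) (hk : 1 ≤ k) (f : ℝ → ℝ)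
    (hf : ContDiff ℝ (⊤ : ℕ∞) f) (hgood : KGood f k) :
    (∃ u : ℝ → ℝ, ContDiff ℝ 1 u ∧ Periodic1 u ∧
      ∀ i : ℕ, 1 ≤ i → i ≤ k → (∫ t in (0:ℝ)..1, iteratedDeriv i f (u t)) = 0)
    ↔ (0 : Fin k → ℝ) ∈ interior (convexHull ℝ (Set.range (gammaHat f k))) := by
  constructor
  · rintro ⟨u, hu1, hu2, hu3⟩
    exact forward_dir hk hf hgood u hu1 hu2 hu3
  · intro h0
    exact reverse_dir hk hf h0
end
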